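/- arXiv:2502.05578 — 8 statements merged into one kernel-verified Lean document; each statement's English description precedes it below -/
import Mathlib

section
/- In the Chinese restaurant process with parameter θ>0, for r disjoint tuples of increasing positive integers (k₁^{(s)},...,k_N^{(s)}, m^{(s)}), s ∈ [r], the probability that simultaneously for every s the set {k₁^{(s)},...,k_N^{(s)}, m^{(s)}} is a block of P_{m^{(s)}} equals θ^r · ∏_{s=1}^r N!/((θ + m^{(s)} - l^{(s)} - 1)^{\underline{N+1}}), where l^{(s)} is the number of indices k_p^{(s')} (p∈[N], s'∈[r]) with k_p^{(s')} < m^{(s)} and m^{(s')} > m^{(s)}. -/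
open MeasureTheory ProbabilityTheory Finset

/-- The event that, in the Chinese restaurant process built from the attachment
variables `I`, the set `{k 0, …, k N}` (with `k 0 < … < k N = m`) is a block of
the partition `P_m` at step `m`. -/
def crpBlockEvent {Ω : Type*} (I : ℕ → Ω → ℕ) {N : ℕ} (k : Fin (N + 1) → ℕ) : Set Ω :=
  {ω | I (k 0) ω = k 0 ∧
    (∀ p : Fin (N + 1), p ≠ 0 → ∃ q, q < p ∧ I (k p) ω = k q) ∧
    (∀ i : ℕ, k 0 < i → i ≤ k (Fin.last N) → (∀ p, k p ≠ i) →
      ∀ q : Fin (N + 1), (k q : ℕ) < i → I i ω ≠ k q)}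

namespace CRPAux

variable {r N : ℕ} (k : Fin r → Fin (N + 1) → ℕ)

/-- deadline of tuple `s` -/
def mEnd (s : Fin r) : ℕ := k s (Fin.last N)

/-- pairs `(t,q)` with `k t q < a` and `b ≤ mEnd t` -/
def Qset (a b : ℕ) : Finset (Fin r × Fin (N + 1)) :=
  univ.filter fun tq => k tq.1 tq.2 < a ∧ b ≤ mEnd k tq.1

def fcnt (i : ℕ) : ℕ := (Qset k i i).card

def lcnt (s : Fin r) : ℕ := (Qset k (mEnd k s) (mEnd k s + 1)).card

def Cset : Finset ℕ := univ.image fun tq : Fin r × Fin (N + 1) => k tq.1 tq.2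

def Eset : Finset ℕ := univ.biUnion fun s : Fin r => Finset.Icc (k s 0) (mEnd k s)

def psi2 (sp : Fin r × Fin (N + 1)) : ℕ :=
  mEnd k sp.1 - lcnt k sp.1 - (N - (sp.2 : ℕ))

section Basic

variable (hmono : ∀ s, StrictMono (k s)) (hpos : ∀ s, 1 ≤ k s 0)
  (hdisj : ∀ s p s' p', k s p = k s' p' → s = s' ∧ p = p')

include hmono in
lemma le_mEnd (s : Fin r) (q : Fin (N + 1)) : k s q ≤ mEnd k s :=
  (hmono s).monotone (Fin.le_last q)

include hmono in
lemma lt_mEnd (s : Fin r) {q : Fin (N + 1)} (hq : q ≠ Fin.last N) : k s q < mEnd k s :=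
  (hmono s) (lt_of_le_of_ne (Fin.le_last q) hq)

include hmono hpos in
lemma one_le_k (s : Fin r) (q : Fin (N + 1)) : 1 ≤ k s q :=
  le_trans (hpos s) ((hmono s).monotone (Fin.zero_le q))

include hdisj in
lemma kinj : Function.Injective (fun tq : Fin r × Fin (N + 1) => k tq.1 tq.2) := by
  rintro ⟨t, q⟩ ⟨t', q'⟩ h
  obtain ⟨h1, h2⟩ := hdisj t q t' q' h
  simp [Prod.ext_iff, h1, h2]

include hmono in
lemma k_mem_Eset (s : Fin r) (q : Fin (N + 1)) : k s q ∈ Eset k := by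
  refine Finset.mem_biUnion.2 ⟨s, Finset.mem_univ s, Finset.mem_Icc.2 ⟨?_, le_mEnd k hmono s q⟩⟩
  exact (hmono s).monotone (Fin.zero_le q)

include hmono in
lemma Cset_subset_Eset : Cset k ⊆ Eset k := by
  intro i hi
  obtain ⟨tq, _, rfl⟩ := Finset.mem_image.1 hi
  exact k_mem_Eset k hmono tq.1 tq.2

include hpos in
lemma one_le_of_mem_Eset {i : ℕ} (hi : i ∈ Eset k) : 1 ≤ i := by
  obtain ⟨s, _, hs⟩ := Finset.mem_biUnion.1 hi
  exact le_trans (hpos s) (Finset.mem_Icc.1 hs).1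

include hdisj in
lemma card_Cset : (Cset k).card = r * (N + 1) := by
  rw [Cset, Finset.card_image_of_injective _ (kinj k hdisj)]
  simp [Finset.card_univ]

include hdisj in
/-- generic injection counting principle -/
lemma card_ineq_gen (src tgt1 : Finset (Fin r × Fin (N + 1))) (tgt2 : Finset ℕ) (c : ℕ)
    (h1 : ∀ tq ∈ src, k tq.1 tq.2 < c → tq ∈ tgt1)
    (h2 : ∀ tq ∈ src, ¬ k tq.1 tq.2 < c → k tq.1 tq.2 ∈ tgt2) :
    src.card ≤ tgt1.card + tgt2.card := by
  have := Finset.card_le_card_of_injOn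
    (f := fun tq : Fin r × Fin (N + 1) =>
      if k tq.1 tq.2 < c then Sum.inl tq else Sum.inr (k tq.1 tq.2))
    (s := src) (t := tgt1.disjSum tgt2) ?_ ?_
  · simpa [Finset.card_disjSum] using this
  · intro tq htq
    by_cases h : k tq.1 tq.2 < c
    · simp only [h, if_true]
      exact Finset.inl_mem_disjSum.2 (h1 tq htq h)
    · simp only [h, if_false]
      exact Finset.inr_mem_disjSum.2 (h2 tq htq h)
  · intro a ha b hb hab
    by_cases h : k a.1 a.2 < c <;> by_cases h' : k b.1 b.2 < c <;>
      simp [h, h'] at hab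
    · exact hab
    · exact kinj k hdisj hab

end Basic

section Counting

variable (hmono : ∀ s, StrictMono (k s)) (hpos : ∀ s, 1 ≤ k s 0)
  (hdisj : ∀ s p s' p', k s p = k s' p' → s = s' ∧ p = p')

include hmono hpos hdisj in
/-- L0 : general bound -/
lemma Qcard_le (a b : ℕ) (ha : 1 ≤ a) : (Qset k a b).card + 1 ≤ a := by
  have h := card_ineq_gen k hdisj (Qset k a b) ∅ (Finset.Ico 1 a) 0
    (fun tq _ h => absurd h (Nat.not_lt_zero _))
    (fun tq htq _ => by
      simp only [Qset, Finset.mem_filter] at htq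
      exact Finset.mem_Ico.2 ⟨one_le_k k hmono hpos _ _, htq.2.1⟩)
  simp only [Finset.card_empty, Nat.card_Ico, zero_add] at h
  omega

include hmono hpos hdisj in
lemma fcnt_lt {i : ℕ} (hi : 1 ≤ i) : fcnt k i + 1 ≤ i :=
  Qcard_le k hmono hpos hdisj i i hi

include hdisj in
/-- L1 : near-monotonicity of fcnt off C -/
lemma fcnt_le {i i' : ℕ} (hiC : i ∉ Cset k) (hii' : i < i') :
    fcnt k i' ≤ fcnt k i + (i' - i - 1) := by
  have h := card_ineq_gen k hdisj (Qset k i' i') (Qset k i i) (Finset.Ioo i i') i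
    (fun tq htq h => by
      simp only [Qset, Finset.mem_filter] at htq ⊢
      exact ⟨Finset.mem_univ _, h, le_trans (le_of_lt hii') htq.2.2⟩)
    (fun tq htq h => by
      simp only [Qset, Finset.mem_filter] at htq
      refine Finset.mem_Ioo.2 ⟨lt_of_le_of_ne (not_lt.1 h) ?_, htq.2.1⟩
      intro hc
      exact hiC (Finset.mem_image.2 ⟨tq, Finset.mem_univ _, hc.symm⟩))
  simpa [fcnt, Nat.card_Ioo] using h

include hmono hdisj in
/-- L2 : key inequality for injectivity of psi2 -/
lemma lcnt_ineq {s s' : Fin r} (hne : s ≠ s') (hlt : mEnd k s < mEnd k s') :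
    lcnt k s' + (N + 1) ≤ lcnt k s + (mEnd k s' - mEnd k s) := by
  classical
  set src := Qset k (mEnd k s') (mEnd k s' + 1) ∪ ({s'} ×ˢ (univ : Finset (Fin (N + 1)))) with hsrc
  have hdisjoint : Disjoint (Qset k (mEnd k s') (mEnd k s' + 1))
      ({s'} ×ˢ (univ : Finset (Fin (N + 1)))) := by
    rw [Finset.disjoint_left]
    rintro ⟨t, q⟩ htq hmem
    simp only [Finset.mem_product, Finset.mem_singleton] at hmem
    simp only [Qset, Finset.mem_filter] at htq
    rw [hmem.1] at htq
    omega
  have hcard : src.card = lcnt k s' + (N + 1) := by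
    rw [hsrc, Finset.card_union_of_disjoint hdisjoint, lcnt]
    simp
  have h := card_ineq_gen k hdisj src (Qset k (mEnd k s) (mEnd k s + 1))
      (Finset.Ioc (mEnd k s) (mEnd k s')) (mEnd k s)
    (fun tq htq h => by
      rw [hsrc, Finset.mem_union] at htq
      simp only [Qset, Finset.mem_filter, Finset.mem_product, Finset.mem_singleton] at htq ⊢
      refine ⟨Finset.mem_univ _, h, ?_⟩
      rcases htq with htq | htq
      · omega
      · rw [htq.1]; omega)
    (fun tq htq h => by
      rw [hsrc, Finset.mem_union] at htq
      refine Finset.mem_Ioc.2 ⟨lt_of_le_of_ne (not_lt.1 h) ?_, ?_⟩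
      · intro hc
        have : tq = (s, Fin.last N) := kinj k hdisj (a₁ := tq) (a₂ := (s, Fin.last N)) hc.symm
        rw [this] at htq
        simp only [Qset, Finset.mem_filter, Finset.mem_product, Finset.mem_singleton] at htq
        rcases htq with htq | htq
        · simp only [mEnd] at htq; omega
        · exact hne htq.1
      · simp only [Qset, Finset.mem_filter, Finset.mem_product, Finset.mem_singleton] at htq
        rcases htq with htq | htq
        · exact le_of_lt htq.2.1
        · rw [htq.1]; exact le_mEnd k hmono s' tq.2)
  rw [hcard, Nat.card_Ioc] at h
  exact h

include hmono hdisj in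
/-- L3 : separation, case i < mEnd s -/
lemma lcnt_fcnt_sep {i : ℕ} {s : Fin r} (hiC : i ∉ Cset k) (hlt : i < mEnd k s) :
    lcnt k s + (N + 1) ≤ fcnt k i + (mEnd k s - i) := by
  classical
  set src := Qset k (mEnd k s) (mEnd k s + 1) ∪ ({s} ×ˢ (univ : Finset (Fin (N + 1)))) with hsrc
  have hdisjoint : Disjoint (Qset k (mEnd k s) (mEnd k s + 1))
      ({s} ×ˢ (univ : Finset (Fin (N + 1)))) := by
    rw [Finset.disjoint_left]
    rintro ⟨t, q⟩ htq hmem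
    simp only [Finset.mem_product, Finset.mem_singleton] at hmem
    simp only [Qset, Finset.mem_filter] at htq
    rw [hmem.1] at htq
    omega
  have hcard : src.card = lcnt k s + (N + 1) := by
    rw [hsrc, Finset.card_union_of_disjoint hdisjoint, lcnt]
    simp
  have h := card_ineq_gen k hdisj src (Qset k i i) (Finset.Ioc i (mEnd k s)) i
    (fun tq htq h => by
      rw [hsrc, Finset.mem_union] at htq
      simp only [Qset, Finset.mem_filter, Finset.mem_product, Finset.mem_singleton] at htq ⊢
      refine ⟨Finset.mem_univ _, h, ?_⟩
      rcases htq with htq | htq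
      · omega
      · rw [htq.1]; omega)
    (fun tq htq h => by
      rw [hsrc, Finset.mem_union] at htq
      refine Finset.mem_Ioc.2 ⟨lt_of_le_of_ne (not_lt.1 h) ?_, ?_⟩
      · intro hc
        exact hiC (Finset.mem_image.2 ⟨tq, Finset.mem_univ _, hc.symm⟩)
      · simp only [Qset, Finset.mem_filter, Finset.mem_product, Finset.mem_singleton] at htq
        rcases htq with htq | htq
        · exact le_of_lt htq.2.1
        · rw [htq.1]; exact le_mEnd k hmono s tq.2)
  rw [hcard, Nat.card_Ioc] at h
  exact h

include hdisj in
/-- L4 : separation, case mEnd s < i -/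
lemma fcnt_lcnt_sep {i : ℕ} {s : Fin r} (hlt : mEnd k s < i) :
    fcnt k i + 1 ≤ lcnt k s + (i - mEnd k s) := by
  classical
  set src := Qset k i i ∪ {((s, Fin.last N) : Fin r × Fin (N + 1))} with hsrc
  have hdisjoint : Disjoint (Qset k i i) ({((s, Fin.last N) : Fin r × Fin (N + 1))} : Finset _) := by
    rw [Finset.disjoint_left]
    rintro ⟨t, q⟩ htq hmem
    simp only [Finset.mem_singleton, Prod.ext_iff] at hmem
    simp only [Qset, Finset.mem_filter] at htq
    rw [hmem.1, hmem.2] at htq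
    simp only [mEnd] at htq hlt
    omega
  have hcard : src.card = fcnt k i + 1 := by
    rw [hsrc, Finset.card_union_of_disjoint hdisjoint, fcnt]
    simp
  have h := card_ineq_gen k hdisj src (Qset k (mEnd k s) (mEnd k s + 1))
      (Finset.Ico (mEnd k s) i) (mEnd k s)
    (fun tq htq h => by
      rw [hsrc, Finset.mem_union] at htq
      simp only [Qset, Finset.mem_filter, Finset.mem_singleton, Prod.ext_iff] at htq ⊢
      refine ⟨Finset.mem_univ _, h, ?_⟩
      rcases htq with htq | htq
      · omega
      · exfalso; rw [htq.1, htq.2] at h; simp only [mEnd] at h; omega)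
    (fun tq htq h => by
      rw [hsrc, Finset.mem_union] at htq
      refine Finset.mem_Ico.2 ⟨not_lt.1 h, ?_⟩
      simp only [Qset, Finset.mem_filter, Finset.mem_singleton, Prod.ext_iff] at htq
      rcases htq with htq | htq
      · exact htq.2.1
      · rw [htq.1, htq.2]; exact hlt)
  rw [hcard, Nat.card_Ico] at h
  exact h

end Counting

section Membership

variable (hmono : ∀ s, StrictMono (k s)) (hpos : ∀ s, 1 ≤ k s 0)
  (hdisj : ∀ s p s' p', k s p = k s' p' → s = s' ∧ p = p')

include hmono hdisj in
/-- L5 : psi1 image lies in E -/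
lemma psi1_mem_Eset {i : ℕ} (hi : i ∈ Eset k) : i - fcnt k i ∈ Eset k := by
  classical
  obtain ⟨s0, _, hs0⟩ := Finset.mem_biUnion.1 hi
  rw [Finset.mem_Icc] at hs0
  set A := univ.filter (fun t : Fin r => k t 0 ≤ i ∧ i ≤ mEnd k t) with hA
  have hAne : A.Nonempty := ⟨s0, by simp [hA, hs0.1, hs0.2]⟩
  obtain ⟨t0, ht0A, ht0min⟩ := Finset.exists_min_image A (fun t => k t 0) hAne
  simp only [hA, Finset.mem_filter, Finset.mem_univ, true_and] at ht0A
  have hb : fcnt k i ≤ i - k t0 0 := by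
    have h := card_ineq_gen k hdisj (Qset k i i) ∅ (Finset.Ico (k t0 0) i) 0
      (fun tq _ h => absurd h (Nat.not_lt_zero _))
      (fun tq htq _ => by
        simp only [Qset, Finset.mem_filter] at htq
        refine Finset.mem_Ico.2 ⟨?_, htq.2.1⟩
        have htA : tq.1 ∈ A := by
          simp only [hA, Finset.mem_filter, Finset.mem_univ, true_and]
          exact ⟨le_trans ((hmono tq.1).monotone (Fin.zero_le tq.2)) (le_of_lt htq.2.1),
            htq.2.2⟩
        exact le_trans (ht0min tq.1 htA) ((hmono tq.1).monotone (Fin.zero_le tq.2)))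
    simpa [fcnt, Nat.card_Ico] using h
  refine Finset.mem_biUnion.2 ⟨t0, Finset.mem_univ _, Finset.mem_Icc.2 ⟨?_, ?_⟩⟩
  · omega
  · omega

include hmono hpos hdisj in
/-- L6a : bound for lcnt -/
lemma lcnt_bound (s : Fin r) :
    ∃ t0 : Fin r, 1 ≤ k t0 0 ∧ k t0 0 ≤ mEnd k s ∧ mEnd k s ≤ mEnd k t0 ∧ lcnt k s + N ≤ mEnd k s - k t0 0 := by
  classical
  set A := univ.filter (fun t : Fin r => k t 0 ≤ mEnd k s ∧ mEnd k s ≤ mEnd k t) with hA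
  have hAne : A.Nonempty := ⟨s, by
    simp only [hA, Finset.mem_filter, Finset.mem_univ, true_and]
    exact ⟨(hmono s).monotone (Fin.zero_le _), le_refl _⟩⟩
  obtain ⟨t0, ht0A, ht0min⟩ := Finset.exists_min_image A (fun t => k t 0) hAne
  simp only [hA, Finset.mem_filter, Finset.mem_univ, true_and] at ht0A
  refine ⟨t0, hpos t0, ht0A.1, ht0A.2, ?_⟩
  set src := Qset k (mEnd k s) (mEnd k s + 1) ∪
    ({s} ×ˢ (univ.filter (fun q : Fin (N + 1) => q ≠ Fin.last N))) with hsrc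
  have hdisjoint : Disjoint (Qset k (mEnd k s) (mEnd k s + 1))
      ({s} ×ˢ (univ.filter (fun q : Fin (N + 1) => q ≠ Fin.last N))) := by
    rw [Finset.disjoint_left]
    rintro ⟨t, q⟩ htq hmem
    simp only [Finset.mem_product, Finset.mem_singleton, Finset.mem_filter] at hmem
    simp only [Qset, Finset.mem_filter] at htq
    rw [hmem.1] at htq
    omega
  have hcardfilter : (univ.filter (fun q : Fin (N + 1) => q ≠ Fin.last N)).card = N := by
    rw [Finset.filter_ne' univ (Fin.last N), Finset.card_erase_of_mem (Finset.mem_univ _)]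
    simp
  have hcard : src.card = lcnt k s + N := by
    rw [hsrc, Finset.card_union_of_disjoint hdisjoint, lcnt, Finset.card_product,
      Finset.card_singleton, hcardfilter, one_mul]
  have h := card_ineq_gen k hdisj src ∅ (Finset.Ico (k t0 0) (mEnd k s)) 0
    (fun tq _ h => absurd h (Nat.not_lt_zero _))
    (fun tq htq _ => by
      rw [hsrc, Finset.mem_union] at htq
      simp only [Qset, Finset.mem_filter, Finset.mem_product, Finset.mem_singleton] at htq
      refine Finset.mem_Ico.2 ⟨?_, ?_⟩
      · have htA : tq.1 ∈ A := by
          simp only [hA, Finset.mem_filter, Finset.mem_univ, true_and]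
          rcases htq with htq | htq
          · exact ⟨le_trans ((hmono tq.1).monotone (Fin.zero_le tq.2)) (le_of_lt htq.2.1),
              by omega⟩
          · rw [htq.1]
            exact ⟨(hmono s).monotone (Fin.zero_le _), le_refl _⟩
        exact le_trans (ht0min tq.1 htA) ((hmono tq.1).monotone (Fin.zero_le tq.2))
      · rcases htq with htq | htq
        · exact htq.2.1
        · rw [htq.1]; exact lt_mEnd k hmono s htq.2.2)
  rw [hcard, Finset.card_empty, Nat.card_Ico, zero_add] at h
  exact h

include hmono hpos hdisj in
lemma lcnt_lt (s : Fin r) : lcnt k s + N + 1 ≤ mEnd k s := by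
  obtain ⟨t0, h1, h1b, _, h3⟩ := lcnt_bound k hmono hpos hdisj s
  omega

include hmono hpos hdisj in
/-- L6c : psi2 image lies in E -/
lemma psi2_mem_Eset (sp : Fin r × Fin (N + 1)) : psi2 k sp ∈ Eset k := by
  obtain ⟨t0, h1, h1b, h2, h3⟩ := lcnt_bound k hmono hpos hdisj sp.1
  have hsp2 : (sp.2 : ℕ) ≤ N := Nat.lt_succ_iff.1 sp.2.isLt
  refine Finset.mem_biUnion.2 ⟨t0, Finset.mem_univ _, Finset.mem_Icc.2 ⟨?_, ?_⟩⟩ <;>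
    · simp only [psi2]; omega

end Membership

section Partition

variable (hmono : ∀ s, StrictMono (k s)) (hpos : ∀ s, 1 ≤ k s 0)
  (hdisj : ∀ s p s' p', k s p = k s' p' → s = s' ∧ p = p')

include hmono hpos hdisj in
lemma psi1_injOn : Set.InjOn (fun i => i - fcnt k i) ((Eset k \ Cset k : Finset ℕ) : Set ℕ) := by
  have key : ∀ i i', i ∈ Eset k \ Cset k → i' ∈ Eset k \ Cset k → i < i' →
      i - fcnt k i < i' - fcnt k i' := by
    intro i i' hi hi' hii'
    rw [Finset.mem_sdiff] at hi hi'
    have h1 := fcnt_le k hdisj hi.2 hii'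
    have h2 := fcnt_lt k hmono hpos hdisj (one_le_of_mem_Eset k hpos hi.1)
    omega
  intro i hi i' hi' h
  simp only [Finset.mem_coe] at hi hi'
  rcases lt_trichotomy i i' with hc | hc | hc
  · exact absurd h (Nat.ne_of_lt (key i i' hi hi' hc))
  · exact hc
  · exact absurd h.symm (Nat.ne_of_lt (key i' i hi' hi hc))

include hmono hpos hdisj in
lemma psi2_inj : Function.Injective (psi2 k) := by
  intro sp sp' h
  have hb := lcnt_lt k hmono hpos hdisj sp.1
  have hb' := lcnt_lt k hmono hpos hdisj sp'.1
  have h2 : (sp.2 : ℕ) ≤ N := Nat.lt_succ_iff.1 sp.2.isLt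
  have h2' : (sp'.2 : ℕ) ≤ N := Nat.lt_succ_iff.1 sp'.2.isLt
  simp only [psi2] at h
  by_cases hs : sp.1 = sp'.1
  · have : (sp.2 : ℕ) = (sp'.2 : ℕ) := by rw [hs] at h hb; omega
    exact Prod.ext hs (Fin.ext this)
  · exfalso
    have hmne : mEnd k sp.1 ≠ mEnd k sp'.1 := by
      intro hc
      have h5 : ((sp.1, Fin.last N) : Fin r × Fin (N + 1)) = (sp'.1, Fin.last N) :=
        kinj k hdisj hc
      rw [Prod.mk.injEq] at h5
      exact hs h5.1
    rcases Nat.lt_or_ge (mEnd k sp.1) (mEnd k sp'.1) with hlt | hge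
    · have := lcnt_ineq k hmono hdisj hs hlt
      omega
    · have hlt : mEnd k sp'.1 < mEnd k sp.1 := by omega
      have := lcnt_ineq k hmono hdisj (Ne.symm hs) hlt
      omega

include hmono hpos hdisj in
lemma images_disjoint :
    Disjoint ((Eset k \ Cset k).image (fun i => i - fcnt k i))
      ((univ : Finset (Fin r × Fin (N + 1))).image (psi2 k)) := by
  rw [Finset.disjoint_left]
  intro x hx1 hx2
  obtain ⟨i, hi, rfl⟩ := Finset.mem_image.1 hx1
  obtain ⟨sp, _, hsp⟩ := Finset.mem_image.1 hx2
  rw [Finset.mem_sdiff] at hi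
  have hfi := fcnt_lt k hmono hpos hdisj (one_le_of_mem_Eset k hpos hi.1)
  have hbl := lcnt_lt k hmono hpos hdisj sp.1
  have h2 : (sp.2 : ℕ) ≤ N := Nat.lt_succ_iff.1 sp.2.isLt
  simp only [psi2] at hsp
  rcases lt_trichotomy i (mEnd k sp.1) with hc | hc | hc
  · have := lcnt_fcnt_sep k hmono hdisj hi.2 hc
    omega
  · exact hi.2 (by rw [hc]; exact Finset.mem_image.2 ⟨(sp.1, Fin.last N), Finset.mem_univ _, rfl⟩)
  · have := fcnt_lcnt_sep k hdisj hc
    omega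

include hmono hpos hdisj in
lemma images_union :
    ((Eset k \ Cset k).image (fun i => i - fcnt k i)) ∪
      ((univ : Finset (Fin r × Fin (N + 1))).image (psi2 k)) = Eset k := by
  apply Finset.eq_of_subset_of_card_le
  · intro x hx
    rcases Finset.mem_union.1 hx with hx | hx
    · obtain ⟨i, hi, rfl⟩ := Finset.mem_image.1 hx
      exact psi1_mem_Eset k hmono hdisj (Finset.mem_sdiff.1 hi).1
    · obtain ⟨sp, _, rfl⟩ := Finset.mem_image.1 hx
      exact psi2_mem_Eset k hmono hpos hdisj sp
  · rw [Finset.card_union_of_disjoint (images_disjoint k hmono hpos hdisj),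
      Finset.card_image_of_injOn (psi1_injOn k hmono hpos hdisj),
      Finset.card_image_of_injective _ (psi2_inj k hmono hpos hdisj),
      Finset.card_sdiff_of_subset (Cset_subset_Eset k hmono), card_Cset k hdisj]
    have hle : r * (N + 1) ≤ (Eset k).card := by
      rw [← card_Cset k hdisj]
      exact Finset.card_le_card (Cset_subset_Eset k hmono)
    simp only [Finset.card_univ, Fintype.card_prod, Fintype.card_fin]
    omega

include hmono hpos hdisj in
/-- The key product splitting identity. -/
lemma prod_split {M : Type*} [CommMonoid M] (F : ℕ → M) :
    ∏ i ∈ Eset k, F i = (∏ i ∈ Eset k \ Cset k, F (i - fcnt k i)) *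
      ∏ sp : Fin r × Fin (N + 1), F (psi2 k sp) := by
  conv_lhs => rw [← images_union k hmono hpos hdisj]
  rw [Finset.prod_union (images_disjoint k hmono hpos hdisj),
    Finset.prod_image (fun a ha b hb => psi1_injOn k hmono hpos hdisj ha hb),
    Finset.prod_image (fun a _ b _ h => psi2_inj k hmono hpos hdisj h)]

end Partition

/-- value-level condition imposed by tuple `s` on coordinate `i` -/
def CondV (s : Fin r) (i v : ℕ) : Prop :=
  (k s 0 = i → v = i) ∧
  (∀ p : Fin (N + 1), p ≠ 0 → k s p = i → ∃ q, q < p ∧ v = k s q) ∧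
  (k s 0 < i → i ≤ mEnd k s → (∀ p, k s p ≠ i) →
    ∀ q : Fin (N + 1), k s q < i → v ≠ k s q)

def SVal (i : ℕ) : Set ℕ := {v | ∀ s, CondV k s i v}

section Events

variable {Ω : Type*} (I : ℕ → Ω → ℕ)
variable (hmono : ∀ s, StrictMono (k s)) (hpos : ∀ s, 1 ≤ k s 0)
  (hdisj : ∀ s p s' p', k s p = k s' p' → s = s' ∧ p = p')

include hmono in
lemma event_eq (s : Fin r) :
    crpBlockEvent I (k s) = ⋂ i ∈ (Eset k : Finset ℕ), {ω | CondV k s i (I i ω)} := by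
  ext ω
  simp only [crpBlockEvent, Set.mem_setOf_eq, Set.mem_iInter, CondV]
  constructor
  · rintro ⟨h1, h2, h3⟩ i hi
    refine ⟨fun hk => hk ▸ h1, fun p hp hk => ?_, fun ha hb hc => h3 i ha hb hc⟩
    subst hk
    exact h2 p hp
  · intro h
    refine ⟨(h (k s 0) (k_mem_Eset k hmono s 0)).1 rfl, fun p hp => ?_, fun i ha hb hc => ?_⟩
    · exact (h (k s p) (k_mem_Eset k hmono s p)).2.1 p hp rfl
    · refine (h i ?_).2.2 ha hb hc
      exact Finset.mem_biUnion.2 ⟨s, Finset.mem_univ s, Finset.mem_Icc.2 ⟨le_of_lt ha, hb⟩⟩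

include hmono in
lemma inter_eq :
    (⋂ s : Fin r, crpBlockEvent I (k s)) = ⋂ i ∈ (Eset k : Finset ℕ), (I i) ⁻¹' (SVal k i) := by
  simp only [event_eq k I hmono]
  ext ω
  simp only [Set.mem_iInter, Set.mem_setOf_eq, Set.mem_preimage, SVal]
  exact ⟨fun h i hi s => h s i hi, fun h s i hi => h i hi s⟩

include hdisj in
lemma SVal_zero (s : Fin r) : SVal k (k s 0) = {k s 0} := by
  ext v
  simp only [SVal, Set.mem_setOf_eq, Set.mem_singleton_iff]
  constructor
  · intro h
    exact (h s).1 rfl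
  · intro hv s'
    subst hv
    refine ⟨fun h => rfl, fun p hp hk => ?_, fun _ _ _ q hq hv => ?_⟩
    · obtain ⟨he, hp'⟩ := hdisj s' p s 0 hk
      exact absurd hp' hp
    · omega

include hdisj in
lemma SVal_succ (s : Fin r) (p : Fin (N + 1)) (hp : p ≠ 0) :
    SVal k (k s p) = ↑((univ.filter (fun q : Fin (N + 1) => q < p)).image (k s)) := by
  ext v
  simp only [SVal, Set.mem_setOf_eq, Finset.coe_image, Set.mem_image, Finset.mem_coe,
    Finset.mem_filter, Finset.mem_univ, true_and]
  constructor
  · intro h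
    obtain ⟨q, hq, hv⟩ := (h s).2.1 p hp rfl
    exact ⟨q, hq, hv.symm⟩
  · rintro ⟨q, hq, rfl⟩ s'
    refine ⟨fun h => ?_, fun p' hp' hk => ?_, fun h1 h2 h3 q' hq' hv => ?_⟩
    · obtain ⟨he, hp'⟩ := hdisj s' 0 s p h
      exact absurd hp'.symm hp
    · obtain ⟨he, hpe⟩ := hdisj s' p' s p hk
      subst he; subst hpe
      exact ⟨q, hq, rfl⟩
    · obtain ⟨he, hqe⟩ := hdisj s q s' q' hv
      subst he
      exact h3 p rfl

include hmono in
lemma SVal_nonC {i : ℕ} (hiC : i ∉ Cset k) :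
    SVal k i = (↑((Qset k i i).image (fun tq : Fin r × Fin (N + 1) => k tq.1 tq.2)))ᶜ := by
  ext v
  constructor
  · intro h hv
    obtain ⟨tq, htq, hveq⟩ := Finset.mem_image.1 (Finset.mem_coe.1 hv)
    simp only [Qset, Finset.mem_filter] at htq
    exact (h tq.1).2.2
      (lt_of_le_of_lt ((hmono tq.1).monotone (Fin.zero_le tq.2)) htq.2.1)
      htq.2.2
      (fun p hp => hiC (Finset.mem_image.2 ⟨(tq.1, p), Finset.mem_univ _, hp⟩))
      tq.2 htq.2.1 hveq.symm
  · intro h s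
    refine ⟨fun hk => absurd (Finset.mem_image.2 ⟨(s, 0), Finset.mem_univ _, hk⟩) hiC,
      fun p hp hk => absurd (Finset.mem_image.2 ⟨(s, p), Finset.mem_univ _, hk⟩) hiC,
      fun h1 h2 h3 q hq hv => ?_⟩
    refine h (Finset.mem_coe.2 (Finset.mem_image.2 ⟨(s, q), ?_, hv.symm⟩))
    simp only [Qset, Finset.mem_filter]
    exact ⟨Finset.mem_univ _, hq, h2⟩

end Events

section Probability

variable {Ω : Type*} [MeasurableSpace Ω] (P : Measure Ω) [IsProbabilityMeasure P]
  (θ : ℝ) (I : ℕ → Ω → ℕ)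
variable (hθ : 0 < θ) (hmeas : ∀ n, Measurable (I n))
variable (hjoin : ∀ n j : ℕ, 1 ≤ j → j < n →
    P {ω | I n ω = j} = ENNReal.ofReal (1 / (θ + n - 1)))
variable (hmono : ∀ s, StrictMono (k s)) (hpos : ∀ s, 1 ≤ k s 0)
  (hdisj : ∀ s p s' p', k s p = k s' p' → s = s' ∧ p = p')

include hjoin hmeas in
lemma meas_preimage_finset (i : ℕ) (A : Finset ℕ) (hA : ∀ v ∈ A, 1 ≤ v ∧ v < i) :
    P ((I i) ⁻¹' ↑A) = A.card * ENNReal.ofReal (1 / (θ + i - 1)) := by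
  have hset : (I i) ⁻¹' ↑A = ⋃ v ∈ A, (I i) ⁻¹' {v} := by
    ext ω; simp
  rw [hset, measure_biUnion_finset ?_ (fun v _ => hmeas i (measurableSet_singleton v))]
  · rw [Finset.sum_congr rfl (fun v hv => ?_), Finset.sum_const, nsmul_eq_mul]
    have hv' : {ω | I i ω = v} = (I i) ⁻¹' {v} := by ext ω; simp
    rw [← hv', hjoin i v (hA v hv).1 (hA v hv).2]
  · intro a ha b hb hab
    simp only [Function.onFun]
    apply Set.disjoint_left.2
    intro ω hωa hωb
    exact hab (by simp only [Set.mem_preimage, Set.mem_singleton_iff] at hωa hωb; rw [← hωa, ← hωb])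

include hjoin hmeas hdisj hmono hpos in
lemma P_succ (s : Fin r) (q : Fin N) :
    P ((I (k s q.succ)) ⁻¹' SVal k (k s q.succ)) =
      ENNReal.ofReal (((q : ℝ) + 1) / (θ + k s q.succ - 1)) := by
  rw [SVal_succ k hdisj s q.succ (Fin.succ_ne_zero q)]
  have hAcond : ∀ v ∈ (univ.filter (fun q' : Fin (N + 1) => q' < q.succ)).image (k s),
      1 ≤ v ∧ v < k s q.succ := by
    intro v hv
    obtain ⟨q', hq', rfl⟩ := Finset.mem_image.1 hv
    rw [Finset.mem_filter] at hq'
    exact ⟨one_le_k k hmono hpos s q', hmono s hq'.2⟩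
  rw [meas_preimage_finset P θ I hmeas hjoin _ _ hAcond]
  have hcard : ((univ.filter (fun q' : Fin (N + 1) => q' < q.succ)).image (k s)).card
      = (q : ℕ) + 1 := by
    rw [Finset.card_image_of_injective _ (hmono s).injective]
    have : (univ.filter (fun q' : Fin (N + 1) => q' < q.succ)) = Finset.Iio q.succ := by
      ext q'; simp
    rw [this, Fin.card_Iio, Fin.val_succ]
  rw [hcard, ← ENNReal.ofReal_natCast ((q : ℕ) + 1), ← ENNReal.ofReal_mul (by positivity)]
  congr 1
  push_cast
  ring

include hmeas hdisj hpos in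
lemma P_zero (hnew : ∀ n : ℕ, 1 ≤ n → P {ω | I n ω = n} = ENNReal.ofReal (θ / (θ + n - 1)))
    (s : Fin r) :
    P ((I (k s 0)) ⁻¹' SVal k (k s 0)) = ENNReal.ofReal (θ / (θ + k s 0 - 1)) := by
  rw [SVal_zero k hdisj s]
  have : (I (k s 0)) ⁻¹' {k s 0} = {ω | I (k s 0) ω = k s 0} := by ext ω; simp
  rw [this, hnew (k s 0) (hpos s)]

include hjoin hmeas hmono hpos hdisj hθ in
lemma P_nonC {i : ℕ} (hi : i ∈ Eset k) (hiC : i ∉ Cset k) :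
    P ((I i) ⁻¹' SVal k i) =
      ENNReal.ofReal ((θ + i - 1 - fcnt k i) / (θ + i - 1)) := by
  have h1i : 1 ≤ i := one_le_of_mem_Eset k hpos hi
  have hxpos : (0 : ℝ) < θ + i - 1 := by
    have : (1 : ℝ) ≤ i := by exact_mod_cast h1i
    linarith
  rw [SVal_nonC k hmono hiC, Set.preimage_compl,
    measure_compl (hmeas i (Set.to_countable _).measurableSet) (measure_ne_top P _)]
  have hAcond : ∀ v ∈ (Qset k i i).image (fun tq : Fin r × Fin (N + 1) => k tq.1 tq.2),
      1 ≤ v ∧ v < i := by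
    intro v hv
    obtain ⟨tq, htq, rfl⟩ := Finset.mem_image.1 hv
    simp only [Qset, Finset.mem_filter] at htq
    exact ⟨one_le_k k hmono hpos _ _, htq.2.1⟩
  rw [meas_preimage_finset P θ I hmeas hjoin _ _ hAcond]
  have hcard : ((Qset k i i).image (fun tq : Fin r × Fin (N + 1) => k tq.1 tq.2)).card
      = fcnt k i := Finset.card_image_of_injective _ (kinj k hdisj)
  have hfle : fcnt k i + 1 ≤ i := fcnt_lt k hmono hpos hdisj h1i
  have hfle' : (fcnt k i : ℝ) ≤ (i : ℝ) - 1 := by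
    have : ((fcnt k i : ℝ)) + 1 ≤ (i : ℝ) := by exact_mod_cast hfle
    linarith
  rw [hcard, measure_univ, ← ENNReal.ofReal_natCast (fcnt k i),
    ← ENNReal.ofReal_mul (Nat.cast_nonneg _), ← ENNReal.ofReal_one,
    ← ENNReal.ofReal_sub _ (by positivity)]
  congr 1
  field_simp

end Probability

section Final

variable (hmono : ∀ s, StrictMono (k s)) (hpos : ∀ s, 1 ≤ k s 0)
  (hdisj : ∀ s p s' p', k s p = k s' p' → s = s' ∧ p = p')

include hmono in
lemma lcnt_eq (s : Fin r) :
    ((univ.filter (fun sp : Fin r × Fin N =>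
      k sp.1 sp.2.castSucc < k s (Fin.last N) ∧
      k s (Fin.last N) < k sp.1 (Fin.last N))).card) = lcnt k s := by
  rw [lcnt]
  have hne : ∀ tq ∈ Qset k (mEnd k s) (mEnd k s + 1), tq.2 ≠ Fin.last N := by
    intro tq h hlast
    simp only [Qset, Finset.mem_filter] at h
    rw [hlast] at h
    have h2 : k tq.1 (Fin.last N) = mEnd k tq.1 := rfl
    omega
  refine Finset.card_bij' (fun sq _ => (sq.1, Fin.castSucc sq.2))
    (fun tq h => (tq.1, tq.2.castPred (hne tq h))) ?_ ?_ ?_ ?_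
  · intro a ha
    simp only [Finset.mem_filter, Finset.mem_univ, true_and] at ha
    simp only [Qset, Finset.mem_filter, Finset.mem_univ, true_and]
    have h2 : mEnd k a.1 = k a.1 (Fin.last N) := rfl
    have h3 : mEnd k s = k s (Fin.last N) := rfl
    exact ⟨by omega, by omega⟩
  · intro a ha
    simp only [Qset, Finset.mem_filter, Finset.mem_univ, true_and] at ha
    simp only [Finset.mem_filter, Finset.mem_univ, true_and, Fin.castSucc_castPred]
    have h2 : mEnd k a.1 = k a.1 (Fin.last N) := rfl
    have h3 : mEnd k s = k s (Fin.last N) := rfl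
    exact ⟨by omega, by omega⟩
  · intro a ha
    simp
  · intro a ha
    simp

include hmono hpos hdisj in
lemma final_real (θ : ℝ) (hθ : 0 < θ) :
    (∏ i ∈ Eset k \ Cset k, (θ + i - 1 - fcnt k i) / (θ + i - 1)) *
      ∏ s : Fin r, ((θ / (θ + k s 0 - 1)) *
        ∏ q : Fin N, (((q : ℝ) + 1) / (θ + k s q.succ - 1))) =
    θ ^ r * ∏ s : Fin r, (N.factorial : ℝ) /
      ∏ j ∈ Finset.range (N + 1), (θ + mEnd k s - lcnt k s - 1 - j) := by
  have hden : ∀ i ∈ Eset k, (0:ℝ) < θ + i - 1 := by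
    intro i hi
    have h1 : (1:ℝ) ≤ i := by exact_mod_cast one_le_of_mem_Eset k hpos hi
    linarith
  have hnum : ∀ i ∈ Eset k \ Cset k, (0:ℝ) < θ + i - 1 - fcnt k i := by
    intro i hi
    rw [Finset.mem_sdiff] at hi
    have h2 := fcnt_lt k hmono hpos hdisj (one_le_of_mem_Eset k hpos hi.1)
    have : (fcnt k i : ℝ) + 1 ≤ (i:ℝ) := by exact_mod_cast h2
    linarith
  have hDpos : ∀ s : Fin r, ∀ j ∈ Finset.range (N+1),
      (0:ℝ) < θ + mEnd k s - lcnt k s - 1 - j := by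
    intro s j hj
    rw [Finset.mem_range] at hj
    have h3 := lcnt_lt k hmono hpos hdisj s
    have : (lcnt k s : ℝ) + N + 1 ≤ (mEnd k s : ℝ) := by exact_mod_cast h3
    have hjN : (j : ℝ) ≤ N := by exact_mod_cast Nat.lt_succ_iff.1 hj
    linarith
  -- the key identity from prod_split
  have key := prod_split k hmono hpos hdisj (M := ℝ) (fun x => θ + x - 1)
  -- massage both sides of key
  rw [← Finset.prod_sdiff (Cset_subset_Eset k hmono)] at key
  have hCprod : (∏ i ∈ Cset k, (θ + i - 1)) =
      (∏ s : Fin r, (θ + k s 0 - 1)) * ∏ s : Fin r, ∏ q : Fin N, (θ + k s q.succ - 1) := by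
    rw [Cset, Finset.prod_image (fun a _ b _ h => kinj k hdisj h),
      Fintype.prod_prod_type, ← Finset.prod_mul_distrib]
    exact Finset.prod_congr rfl fun s _ => by rw [Fin.prod_univ_succ]
  have hpsi1 : (∏ i ∈ Eset k \ Cset k, (θ + (↑(i - fcnt k i) : ℝ) - 1)) =
      ∏ i ∈ Eset k \ Cset k, (θ + i - 1 - fcnt k i) := by
    refine Finset.prod_congr rfl fun i hi => ?_
    rw [Finset.mem_sdiff] at hi
    have h2 := fcnt_lt k hmono hpos hdisj (one_le_of_mem_Eset k hpos hi.1)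
    rw [Nat.cast_sub (by omega)]
    ring
  have hpsi2 : (∏ sp : Fin r × Fin (N + 1), (θ + (↑(psi2 k sp) : ℝ) - 1)) =
      ∏ s : Fin r, ∏ j ∈ Finset.range (N + 1), (θ + mEnd k s - lcnt k s - 1 - j) := by
    rw [Fintype.prod_prod_type]
    refine Finset.prod_congr rfl fun s _ => ?_
    have hlt := lcnt_lt k hmono hpos hdisj s
    have hstep : ∀ p : Fin (N + 1), (θ + (↑(psi2 k (s, p)) : ℝ) - 1) =
        θ + mEnd k s - lcnt k s - 1 - ((N : ℝ) - (p : ℕ)) := by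
      intro p
      have hp : (p : ℕ) ≤ N := Nat.lt_succ_iff.1 p.isLt
      simp only [psi2]
      rw [Nat.cast_sub (by omega), Nat.cast_sub (by omega), Nat.cast_sub (by omega)]
      push_cast
      ring
    calc ∏ p : Fin (N + 1), (θ + (↑(psi2 k (s, p)) : ℝ) - 1)
        = ∏ p : Fin (N + 1), (θ + mEnd k s - lcnt k s - 1 - ((N : ℝ) - (p : ℕ))) :=
          Finset.prod_congr rfl fun p _ => hstep p
      _ = ∏ j ∈ Finset.range (N + 1), (θ + mEnd k s - lcnt k s - 1 - ((N : ℝ) - j)) :=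
          Fin.prod_univ_eq_prod_range
            (fun j => θ + (mEnd k s : ℝ) - (lcnt k s : ℝ) - 1 - ((N : ℝ) - (j : ℝ))) (N + 1)
      _ = ∏ j ∈ Finset.range (N + 1), (θ + mEnd k s - lcnt k s - 1 - j) := by
          have := Finset.prod_range_reflect
            (fun j => θ + mEnd k s - lcnt k s - 1 - (j : ℝ)) (N + 1)
          rw [← this]
          refine Finset.prod_congr rfl fun j hj => ?_
          rw [Finset.mem_range] at hj
          have : ((N + 1 - 1 - j : ℕ) : ℝ) = (N : ℝ) - j := by
            rw [Nat.cast_sub (by omega)]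
            push_cast
            ring
          rw [this]
  rw [hCprod, hpsi1, hpsi2] at key
  -- now pure algebra
  have hB : (∏ i ∈ Eset k \ Cset k, (θ + (i:ℝ) - 1)) ≠ 0 :=
    ne_of_gt (Finset.prod_pos (fun i hi => hden i (Finset.mem_sdiff.1 hi).1))
  have hA : (∏ i ∈ Eset k \ Cset k, (θ + (i:ℝ) - 1 - fcnt k i)) ≠ 0 :=
    ne_of_gt (Finset.prod_pos hnum)
  have hC1 : (∏ s : Fin r, (θ + (k s 0 : ℝ) - 1)) ≠ 0 :=
    ne_of_gt (Finset.prod_pos (fun s _ => hden _ (k_mem_Eset k hmono s 0)))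
  have hC2 : (∏ s : Fin r, ∏ q : Fin N, (θ + (k s q.succ : ℝ) - 1)) ≠ 0 :=
    ne_of_gt (Finset.prod_pos (fun s _ => Finset.prod_pos
      (fun q _ => hden _ (k_mem_Eset k hmono s q.succ))))
  have hD : ∀ s : Fin r,
      (∏ j ∈ Finset.range (N + 1), (θ + mEnd k s - lcnt k s - 1 - (j:ℝ))) ≠ 0 :=
    fun s => ne_of_gt (Finset.prod_pos (hDpos s))
  have hfact : (∏ q : Fin N, ((q : ℝ) + 1)) = (N.factorial : ℝ) := by
    rw [Fin.prod_univ_eq_prod_range (fun j => (j : ℝ) + 1) N]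
    have h5 : ((N.factorial : ℕ) : ℝ) = ((∏ x ∈ Finset.range N, (x + 1) : ℕ) : ℝ) := by
      rw [Finset.prod_range_add_one_eq_factorial]
    rw [h5, Nat.cast_prod]
    push_cast
    rfl
  have hDp : (∏ s : Fin r, ∏ j ∈ Finset.range (N + 1),
      (θ + mEnd k s - lcnt k s - 1 - (j:ℝ))) ≠ 0 :=
    Finset.prod_ne_zero_iff.2 (fun s _ => hD s)
  have hinner : ∀ s : Fin r, (∏ q : Fin N, (((q : ℝ) + 1) / (θ + k s q.succ - 1))) =
      (N.factorial : ℝ) / ∏ q : Fin N, (θ + (k s q.succ : ℝ) - 1) := by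
    intro s
    rw [Finset.prod_div_distrib, hfact]
  have lhs2 : (∏ s : Fin r, ((θ / (θ + (k s 0 : ℝ) - 1)) *
      ∏ q : Fin N, (((q : ℝ) + 1) / (θ + k s q.succ - 1)))) =
      (θ ^ r / ∏ s : Fin r, (θ + (k s 0 : ℝ) - 1)) *
        ((N.factorial : ℝ) ^ r / ∏ s : Fin r, ∏ q : Fin N, (θ + (k s q.succ : ℝ) - 1)) := by
    calc (∏ s : Fin r, ((θ / (θ + (k s 0 : ℝ) - 1)) *
        ∏ q : Fin N, (((q : ℝ) + 1) / (θ + k s q.succ - 1))))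
        = (∏ s : Fin r, (θ / (θ + (k s 0 : ℝ) - 1))) *
          ∏ s : Fin r, ((N.factorial : ℝ) / ∏ q : Fin N, (θ + (k s q.succ : ℝ) - 1)) := by
          rw [← Finset.prod_mul_distrib]
          exact Finset.prod_congr rfl fun s _ => by rw [hinner s]
      _ = (θ ^ r / ∏ s : Fin r, (θ + (k s 0 : ℝ) - 1)) *
          ((N.factorial : ℝ) ^ r / ∏ s : Fin r, ∏ q : Fin N, (θ + (k s q.succ : ℝ) - 1)) := by
          rw [Finset.prod_div_distrib, Finset.prod_div_distrib, Finset.prod_const,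
            Finset.prod_const, Finset.card_univ, Fintype.card_fin]
  have rhs2 : (∏ s : Fin r, ((N.factorial : ℝ) /
      ∏ j ∈ Finset.range (N + 1), (θ + mEnd k s - lcnt k s - 1 - (j:ℝ)))) =
      (N.factorial : ℝ) ^ r / ∏ s : Fin r, ∏ j ∈ Finset.range (N + 1),
        (θ + mEnd k s - lcnt k s - 1 - (j:ℝ)) := by
    rw [Finset.prod_div_distrib, Finset.prod_const, Finset.card_univ, Fintype.card_fin]
  rw [Finset.prod_div_distrib, lhs2, rhs2]
  field_simp
  linear_combination (-1 : ℝ) * key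

end Final

end CRPAux

open CRPAux in
theorem crp_joint_block_probability
    {Ω : Type*} [MeasurableSpace Ω] (P : Measure Ω) [IsProbabilityMeasure P]
    (θ : ℝ) (hθ : 0 < θ) (I : ℕ → Ω → ℕ) (hmeas : ∀ n, Measurable (I n))
    (hindep : iIndepFun I P)
    (hnew : ∀ n : ℕ, 1 ≤ n → P {ω | I n ω = n} = ENNReal.ofReal (θ / (θ + n - 1)))
    (hjoin : ∀ n k : ℕ, 1 ≤ k → k < n →
      P {ω | I n ω = k} = ENNReal.ofReal (1 / (θ + n - 1)))
    (r N : ℕ) (hr : 1 ≤ r) (hN : 1 ≤ N) (k : Fin r → Fin (N + 1) → ℕ)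
    (hmono : ∀ s, StrictMono (k s)) (hpos : ∀ s, 1 ≤ k s 0)
    (hdisj : ∀ s p s' p', k s p = k s' p' → s = s' ∧ p = p') :
    P (⋂ s : Fin r, crpBlockEvent I (k s)) =
      ENNReal.ofReal (θ ^ r * ∏ s : Fin r, (N.factorial : ℝ) /
        ∏ j ∈ Finset.range (N + 1),
          (θ + (k s (Fin.last N) : ℝ) -
            (((Finset.univ.filter (fun sp : Fin r × Fin N =>
                k sp.1 sp.2.castSucc < k s (Fin.last N) ∧
                k s (Fin.last N) < k sp.1 (Fin.last N))).card : ℝ)) - 1 - (j : ℝ))) := by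
  classical
  have hden : ∀ i ∈ Eset k, (0:ℝ) < θ + i - 1 := by
    intro i hi
    have h1 : (1:ℝ) ≤ i := by exact_mod_cast one_le_of_mem_Eset k hpos hi
    linarith
  rw [inter_eq k I hmono]
  rw [hindep.meas_biInter
    (fun i _ => ⟨SVal k i, (Set.to_countable _).measurableSet, rfl⟩)]
  rw [← Finset.prod_sdiff (Cset_subset_Eset k hmono)]
  have h1 : (∏ i ∈ Eset k \ Cset k, P ((I i) ⁻¹' SVal k i))
      = ∏ i ∈ Eset k \ Cset k,
          ENNReal.ofReal ((θ + i - 1 - fcnt k i) / (θ + i - 1)) := by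
    refine Finset.prod_congr rfl fun i hi => ?_
    rw [Finset.mem_sdiff] at hi
    exact P_nonC k P θ I hθ hmeas hjoin hmono hpos hdisj hi.1 hi.2
  have h2 : (∏ i ∈ Cset k, P ((I i) ⁻¹' SVal k i))
      = ∏ s : Fin r, (ENNReal.ofReal (θ / (θ + k s 0 - 1)) *
          ∏ q : Fin N, ENNReal.ofReal (((q : ℝ) + 1) / (θ + k s q.succ - 1))) := by
    rw [Cset, Finset.prod_image (fun a _ b _ h => kinj k hdisj h), Fintype.prod_prod_type]
    refine Finset.prod_congr rfl fun s _ => ?_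
    rw [Fin.prod_univ_succ, P_zero k P θ I hmeas hpos hdisj hnew s]
    congr 1
    exact Finset.prod_congr rfl fun q _ => P_succ k P θ I hmeas hjoin hmono hpos hdisj s q
  rw [h1, h2]
  have hnn1 : ∀ i ∈ Eset k \ Cset k, (0:ℝ) ≤ (θ + i - 1 - fcnt k i) / (θ + i - 1) := by
    intro i hi
    rw [Finset.mem_sdiff] at hi
    have h2' := fcnt_lt k hmono hpos hdisj (one_le_of_mem_Eset k hpos hi.1)
    have h3 : ((fcnt k i : ℝ)) + 1 ≤ (i : ℝ) := by exact_mod_cast h2'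
    have := hden i hi.1
    apply div_nonneg <;> linarith
  have hnn2 : ∀ s : Fin r, (0:ℝ) ≤ θ / (θ + k s 0 - 1) := by
    intro s
    have := hden _ (k_mem_Eset k hmono s 0)
    positivity
  have hnn3 : ∀ (s : Fin r) (q : Fin N), (0:ℝ) ≤ ((q : ℝ) + 1) / (θ + k s q.succ - 1) := by
    intro s q
    have := hden _ (k_mem_Eset k hmono s q.succ)
    positivity
  rw [← ENNReal.ofReal_prod_of_nonneg hnn1]
  have h4 : (∏ s : Fin r, (ENNReal.ofReal (θ / (θ + k s 0 - 1)) *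
      ∏ q : Fin N, ENNReal.ofReal (((q : ℝ) + 1) / (θ + k s q.succ - 1))))
      = ENNReal.ofReal (∏ s : Fin r, ((θ / (θ + k s 0 - 1)) *
          ∏ q : Fin N, (((q : ℝ) + 1) / (θ + k s q.succ - 1)))) := by
    rw [ENNReal.ofReal_prod_of_nonneg (fun s _ => mul_nonneg (hnn2 s)
      (Finset.prod_nonneg (fun q _ => hnn3 s q)))]
    refine Finset.prod_congr rfl fun s _ => ?_
    rw [ENNReal.ofReal_mul (hnn2 s),
      ENNReal.ofReal_prod_of_nonneg (fun q _ => hnn3 s q)]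
  rw [h4, ← ENNReal.ofReal_mul (Finset.prod_nonneg hnn1)]
  rw [final_real k hmono hpos hdisj θ hθ]
  congr 1
  refine congrArg _ ?_
  refine Finset.prod_congr rfl fun s _ => ?_
  rw [← lcnt_eq k hmono s]
  rfl
end

section
/- The measures μ^(N) are consistent under projection: for M > N and any Borel set B_N ⊆ X_N, defining B_{N↑M} = {(x₁,...,x_{M+1}) : (x₁,...,x_{N+1}) ∈ B_N, x_{N+1} ≤ x_{N+2} ≤ ... ≤ x_{M+1}}, one has μ^(M)(B_{N↑M}) = μ^(N)(B_N). -/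
open MeasureTheory Finset

/-- The cone `X_N = {(x₁,…,x_N,y) ∈ (0,∞)^{N+1} : x₁ ≤ … ≤ x_N ≤ y}`. -/
def coneX (N : ℕ) : Set (Fin (N + 1) → ℝ) :=
  {x | (∀ i, 0 < x i) ∧ Monotone x}

/-- The measure `μ^(N)` on `X_N` with density `θ · N! / y^{N+1}` with respect to
Lebesgue measure. -/
noncomputable def muN (θ : ℝ) (N : ℕ) : Measure (Fin (N + 1) → ℝ) :=
  (volume.restrict (coneX N)).withDensity
    (fun x => ENNReal.ofReal (θ * (N.factorial : ℝ) / (x (Fin.last N)) ^ (N + 1)))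

lemma lintegralA (c a : ℝ) (hc : 0 ≤ c) (ha : 0 < a) (n : ℕ) :
    ∫⁻ y in Set.Ici a, ENNReal.ofReal (c / y ^ (n + 2)) =
      ENNReal.ofReal (c / ((n + 1) * a ^ (n + 1))) := by
  rw [← Measure.restrict_congr_set Ioi_ae_eq_Ici]
  have key : ∀ y ∈ Set.Ioi a, ENNReal.ofReal (c / y ^ (n + 2))
      = ENNReal.ofReal (c * y ^ (-(n + 2 : ℝ))) := by
    intro y hy
    have hy0 : 0 < y := ha.trans hy
    rw [Real.rpow_neg hy0.le, ← Real.rpow_natCast y (n+2)]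
    · push_cast
      rw [div_eq_mul_inv]
  rw [setLIntegral_congr_fun measurableSet_Ioi key]
  have hlt : (-(n + 2 : ℝ)) < -1 := by
    have : (0:ℝ) ≤ n := Nat.cast_nonneg n
    linarith
  have hint : IntegrableOn (fun y : ℝ => c * y ^ (-(n + 2 : ℝ))) (Set.Ioi a) :=
    (integrableOn_Ioi_rpow_of_lt hlt ha).const_mul c
  have hnn : 0 ≤ᵐ[volume.restrict (Set.Ioi a)] fun y : ℝ => c * y ^ (-(n + 2 : ℝ)) := by
    filter_upwards [self_mem_ae_restrict measurableSet_Ioi] with y hy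
    exact mul_nonneg hc (Real.rpow_nonneg (ha.trans hy).le _)
  rw [← ofReal_integral_eq_lintegral_ofReal hint hnn, integral_const_mul,
    integral_Ioi_rpow_of_lt hlt ha]
  congr 1
  have h1 : (-(n + 2 : ℝ) + 1) = -(n + 1 : ℝ) := by ring
  rw [h1, Real.rpow_neg ha.le]
  rw [← Real.rpow_natCast a (n+1)]
  push_cast
  have hne : (n:ℝ) + 1 ≠ 0 := by positivity
  have hane : a ^ ((n:ℝ)+1) ≠ 0 := by positivity
  rw [neg_div_neg_eq]
  rw [eq_div_iff (by positivity), mul_comm ((n:ℝ)+1) _]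
  field_simp

lemma measurable_dens (θ : ℝ) (N : ℕ) :
    Measurable fun x : Fin (N + 1) → ℝ =>
      ENNReal.ofReal (θ * (N.factorial : ℝ) / (x (Fin.last N)) ^ (N + 1)) :=
  (measurable_const.div ((measurable_pi_apply _).pow_const _)).ennreal_ofReal

lemma muN_apply (θ : ℝ) (N : ℕ) {S : Set (Fin (N + 1) → ℝ)} (hS : MeasurableSet S)
    (hsub : S ⊆ coneX N) :
    muN θ N S
      = ∫⁻ x in S, ENNReal.ofReal (θ * (N.factorial : ℝ) / (x (Fin.last N)) ^ (N + 1)) := by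
  rw [muN, withDensity_apply _ hS, Measure.restrict_restrict hS, Set.inter_eq_left.mpr hsub]

lemma muN_step (θ : ℝ) (hθ : 0 < θ) (K : ℕ) (C : Set (Fin (K + 1) → ℝ))
    (hC : MeasurableSet C) (hCX : C ⊆ coneX K) :
    muN θ (K + 1) {x : Fin (K + 2) → ℝ |
        (fun i => x i.castSucc) ∈ C ∧ x (Fin.last K).castSucc ≤ x (Fin.last (K + 1))}
      = muN θ K C := by
  set D : Set (Fin (K + 2) → ℝ) := {x : Fin (K + 2) → ℝ |
      (fun i => x i.castSucc) ∈ C ∧ x (Fin.last K).castSucc ≤ x (Fin.last (K + 1))} with hDdef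
  have hproj : Measurable fun (x : Fin (K + 2) → ℝ) (i : Fin (K + 1)) => x i.castSucc :=
    measurable_pi_lambda _ fun i => measurable_pi_apply _
  have hD : MeasurableSet D :=
    (hproj hC).inter (measurableSet_le (measurable_pi_apply _) (measurable_pi_apply _))
  have hDX : D ⊆ coneX (K + 1) := by
    rintro x ⟨hx1, hx2⟩
    obtain ⟨hpos, hmono⟩ := hCX hx1
    constructor
    · intro i
      induction i using Fin.lastCases with
      | last => exact lt_of_lt_of_le (hpos (Fin.last K)) hx2
      | cast i => exact hpos i
    · intro i j hij
      induction j using Fin.lastCases with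
      | last =>
        induction i using Fin.lastCases with
        | last => exact le_refl _
        | cast i => exact le_trans (hmono (Fin.le_last i)) hx2
      | cast j =>
        induction i using Fin.lastCases with
        | last => exact absurd hij (not_le.mpr (Fin.castSucc_lt_last j))
        | cast i => exact hmono (Fin.castSucc_le_castSucc_iff.mp hij)
  set f : (Fin (K + 2) → ℝ) → ENNReal := fun x =>
    ENNReal.ofReal (θ * ((K + 1).factorial : ℝ) / (x (Fin.last (K + 1))) ^ (K + 1 + 1)) with hfdef
  have hgm : Measurable (D.indicator f) := (measurable_dens θ (K + 1)).indicator hD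
  set e := MeasurableEquiv.piFinSuccAbove (fun _ : Fin (K + 2) => ℝ) (Fin.last (K + 1)) with hedef
  have hP : MeasurePreserving e volume volume :=
    volume_preserving_piFinSuccAbove (fun _ : Fin (K + 2) => ℝ) (Fin.last (K + 1))
  have hsymm : ∀ (y : ℝ) (v : Fin (K + 1) → ℝ), e.symm (y, v) = Fin.snoc v y := by
    intro y v
    have h1 : e.symm (y, v) = Fin.insertNth (Fin.last (K + 1)) y v := rfl
    rw [h1, Fin.insertNth_last']
  have hcpos : ∀ v ∈ C, 0 < v (Fin.last K) := fun v hv => (hCX hv).1 _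
  calc muN θ (K + 1) D = ∫⁻ x in D, f x := muN_apply θ (K + 1) hD hDX
    _ = ∫⁻ x, D.indicator f x := (lintegral_indicator hD f).symm
    _ = ∫⁻ p : ℝ × (Fin (K + 1) → ℝ), D.indicator f (e.symm p) :=
        ((hP.symm).lintegral_comp hgm).symm
    _ = ∫⁻ v, ∫⁻ y, D.indicator f (e.symm (y, v)) := by
        rw [Measure.volume_eq_prod, lintegral_prod_symm]
        exact (hgm.comp e.symm.measurable).aemeasurable
    _ = ∫⁻ v, C.indicator
          (fun v => ENNReal.ofReal (θ * (K.factorial : ℝ) / (v (Fin.last K)) ^ (K + 1))) v := by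
        refine lintegral_congr fun v => ?_
        by_cases hv : v ∈ C
        · rw [Set.indicator_of_mem hv]
          have inner : ∀ y : ℝ, D.indicator f (e.symm (y, v))
              = (Set.Ici (v (Fin.last K))).indicator
                  (fun y => ENNReal.ofReal (θ * ((K + 1).factorial : ℝ) / y ^ (K + 2))) y := by
            intro y
            rw [hsymm]
            have hproj' : (fun i : Fin (K + 1) => (Fin.snoc v y : Fin (K + 2) → ℝ) i.castSucc)
                = v := by
              funext i; simp
            by_cases hy : v (Fin.last K) ≤ y
            · have hmD : (Fin.snoc v y : Fin (K + 2) → ℝ) ∈ D := by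
                refine ⟨?_, ?_⟩
                · rw [hproj']; exact hv
                · simpa using hy
              rw [Set.indicator_of_mem hmD, Set.indicator_of_mem (Set.mem_Ici.mpr hy), hfdef]
              simp
            · have hnD : (Fin.snoc v y : Fin (K + 2) → ℝ) ∉ D := by
                intro hmem
                exact hy (by simpa using hmem.2)
              rw [Set.indicator_of_notMem hnD, Set.indicator_of_notMem (by simpa using hy)]
          rw [lintegral_congr inner, lintegral_indicator measurableSet_Ici,
            lintegralA _ _ (by positivity) (hcpos v hv) K]
          congr 1
          rw [Nat.factorial_succ]
          have ha : v (Fin.last K) ^ (K + 1) ≠ 0 := by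
            have := hcpos v hv; positivity
          push_cast
          field_simp
        · rw [Set.indicator_of_notMem hv]
          have inner : ∀ y : ℝ, D.indicator f (e.symm (y, v)) = 0 := by
            intro y
            rw [hsymm, Set.indicator_of_notMem]
            intro hmem
            apply hv
            have hproj' : (fun i : Fin (K + 1) => (Fin.snoc v y : Fin (K + 2) → ℝ) i.castSucc)
                = v := by
              funext i; simp
            rw [← hproj']
            exact hmem.1
          simp [inner]
    _ = ∫⁻ v in C, ENNReal.ofReal (θ * (K.factorial : ℝ) / (v (Fin.last K)) ^ (K + 1)) :=
        lintegral_indicator hC _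
    _ = muN θ K C := (muN_apply θ K hC hCX).symm

def SM (N : ℕ) (B : Set (Fin (N + 1) → ℝ)) (M : ℕ) (h : N ≤ M) : Set (Fin (M + 1) → ℝ) :=
  {x | (fun i : Fin (N + 1) => x (Fin.castLE (Nat.succ_le_succ h) i)) ∈ B ∧
    ∀ i j : Fin (M + 1), N ≤ (i : ℕ) → i ≤ j → x i ≤ x j}

lemma measurable_SM (N M : ℕ) (h : N ≤ M) {B : Set (Fin (N + 1) → ℝ)} (hB : MeasurableSet B) :
    MeasurableSet (SM N B M h) := by
  have h1 : Measurable fun (x : Fin (M + 1) → ℝ) (i : Fin (N + 1)) =>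
      x (Fin.castLE (Nat.succ_le_succ h) i) :=
    measurable_pi_lambda _ fun i => measurable_pi_apply _
  have h2 : MeasurableSet {x : Fin (M + 1) → ℝ |
      ∀ i j : Fin (M + 1), N ≤ (i : ℕ) → i ≤ j → x i ≤ x j} := by
    have he : {x : Fin (M + 1) → ℝ | ∀ i j : Fin (M + 1), N ≤ (i : ℕ) → i ≤ j → x i ≤ x j}
        = ⋂ i : Fin (M + 1), ⋂ j : Fin (M + 1), ⋂ (_ : N ≤ (i : ℕ)), ⋂ (_ : i ≤ j), {x : Fin (M + 1) → ℝ | x i ≤ x j} := by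
      ext x; simp only [Set.mem_setOf_eq, Set.mem_iInter]
    rw [he]
    exact MeasurableSet.iInter fun i => MeasurableSet.iInter fun j =>
      MeasurableSet.iInter fun _ => MeasurableSet.iInter fun _ =>
        measurableSet_le (measurable_pi_apply _) (measurable_pi_apply _)
  exact (h1 hB).inter h2

lemma SM_subset (N M : ℕ) (h : N ≤ M) {B : Set (Fin (N + 1) → ℝ)} (hBX : B ⊆ coneX N) :
    SM N B M h ⊆ coneX M := by
  rintro x ⟨hx1, hx2⟩
  obtain ⟨hpos, hmono⟩ := hBX hx1
  have key : ∀ i : Fin (M + 1), (hi : (i : ℕ) ≤ N) →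
      x i = x (Fin.castLE (Nat.succ_le_succ h) ⟨(i : ℕ), by omega⟩) :=
    fun i hi => congrArg x (Fin.ext rfl).symm
  have hlastN : (0 : ℝ) < x (Fin.castLE (Nat.succ_le_succ h) (Fin.last N)) := hpos (Fin.last N)
  constructor
  · intro i
    by_cases hi : (i : ℕ) ≤ N
    · rw [key i hi]; exact hpos ⟨(i : ℕ), by omega⟩
    · refine lt_of_lt_of_le hlastN ?_
      exact hx2 _ i (by simp) (by simp [Fin.le_def]; omega)
  · intro i j hij
    rw [Fin.le_def] at hij
    by_cases hj : (j : ℕ) ≤ N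
    · have hi : (i : ℕ) ≤ N := le_trans hij hj
      rw [key i hi, key j hj]
      exact hmono (show ((⟨(i : ℕ), _⟩ : Fin (N + 1))) ≤ ⟨(j : ℕ), _⟩ from hij)
    · by_cases hi : (i : ℕ) ≤ N
      · calc x i = x (Fin.castLE (Nat.succ_le_succ h) ⟨(i : ℕ), by omega⟩) := key i hi
          _ ≤ x (Fin.castLE (Nat.succ_le_succ h) (Fin.last N)) :=
              hmono (show ((⟨(i : ℕ), _⟩ : Fin (N + 1))) ≤ Fin.last N from Fin.le_last _)
          _ ≤ x j := hx2 _ j (by simp) (by simp [Fin.le_def]; omega)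
      · exact hx2 i j (by omega) (Fin.le_def.mpr hij)

lemma muN_SM (θ : ℝ) (hθ : 0 < θ) (N : ℕ) (B : Set (Fin (N + 1) → ℝ))
    (hB : MeasurableSet B) (hBX : B ⊆ coneX N) :
    ∀ M (hM : N + 1 ≤ M), muN θ M (SM N B M (by omega)) = muN θ N B := by
  intro M hM
  induction M, hM using Nat.le_induction with
  | base =>
    rw [← muN_step θ hθ N B hB hBX]
    congr 1
    ext x
    simp only [SM, Set.mem_setOf_eq]
    constructor
    · rintro ⟨h1, h2⟩
      refine ⟨?_, ?_⟩
      · have he : (fun i : Fin (N + 1) => x i.castSucc)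
            = fun i => x (Fin.castLE (by omega) i) := by
          funext i; exact congrArg x (Fin.ext rfl)
        rw [he]; exact h1
      · exact h2 (Fin.last N).castSucc (Fin.last (N + 1)) (by simp) (Fin.le_last _)
    · rintro ⟨h1, h2⟩
      refine ⟨?_, ?_⟩
      · have he : (fun i : Fin (N + 1) => x (Fin.castLE (by omega) i))
            = fun i : Fin (N + 1) => x i.castSucc := by
          funext i; exact congrArg x (Fin.ext rfl)
        rw [he]; exact h1
      · intro i j hNi hij
        rw [Fin.le_def] at hij
        by_cases hj : (j : ℕ) ≤ N
        · have : i = j := Fin.ext (by omega)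
          rw [this]
        · have hjv : (j : ℕ) = N + 1 := by have := j.isLt; omega
          by_cases hi : (i : ℕ) ≤ N
          · have e1 : x i = x ((Fin.last N).castSucc) := congrArg x (Fin.ext (by simp; omega))
            have e2 : x j = x (Fin.last (N + 1)) := congrArg x (Fin.ext (by simp [hjv]))
            rw [e1, e2]; exact h2
          · have : i = j := Fin.ext (by have := i.isLt; omega)
            rw [this]
  | succ M hM ih =>
    have hC : MeasurableSet (SM N B M (by omega)) := measurable_SM N M _ hB
    have hCX : SM N B M (by omega) ⊆ coneX M := SM_subset N M _ hBX
    rw [← ih, ← muN_step θ hθ M (SM N B M (by omega)) hC hCX]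
    congr 1
    ext x
    simp only [SM, Set.mem_setOf_eq]
    constructor
    · rintro ⟨h1, h2⟩
      refine ⟨⟨?_, ?_⟩, ?_⟩
      · have he : (fun i : Fin (N + 1) => x (Fin.castLE (by omega : N + 1 ≤ M + 1) i).castSucc)
            = fun i => x (Fin.castLE (by omega) i) := by
          funext i; exact congrArg x (Fin.ext rfl)
        rw [he]; exact h1
      · intro i j hNi hij
        exact h2 i.castSucc j.castSucc (by simpa)
          (by simpa [Fin.castSucc_le_castSucc_iff] using hij)
      · exact h2 (Fin.last M).castSucc (Fin.last (M + 1)) (by simp; omega) (Fin.le_last _)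
    · rintro ⟨⟨h1, h2⟩, h3⟩
      refine ⟨?_, ?_⟩
      · have he : (fun i : Fin (N + 1) => x (Fin.castLE (by omega : N + 1 ≤ M + 2) i))
            = fun i => x (Fin.castLE (by omega : N + 1 ≤ M + 1) i).castSucc := by
          funext i; exact congrArg x (Fin.ext rfl)
        rw [he]; exact h1
      · intro i j hNi hij
        rw [Fin.le_def] at hij
        by_cases hj : (j : ℕ) ≤ M
        · have hi : (i : ℕ) ≤ M := le_trans hij hj
          have e1 : x i = x ((⟨(i : ℕ), by omega⟩ : Fin (M + 1)).castSucc) :=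
            congrArg x (Fin.ext (by simp))
          have e2 : x j = x ((⟨(j : ℕ), by omega⟩ : Fin (M + 1)).castSucc) :=
            congrArg x (Fin.ext (by simp))
          rw [e1, e2]
          exact h2 _ _ (by simpa using hNi) (by simp only [Fin.castSucc_le_castSucc_iff, Fin.le_def]; exact hij)
        · have hjv : (j : ℕ) = M + 1 := by have := j.isLt; omega
          have e2 : x j = x (Fin.last (M + 1)) := congrArg x (Fin.ext (by simp [hjv]))
          by_cases hi : (i : ℕ) ≤ M
          · have e1 : x i = x ((⟨(i : ℕ), by omega⟩ : Fin (M + 1)).castSucc) :=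
              congrArg x (Fin.ext (by simp))
            rw [e1, e2]
            calc x ((⟨(i : ℕ), by omega⟩ : Fin (M + 1)).castSucc)
                ≤ x ((Fin.last M).castSucc) :=
                  h2 _ _ (by simpa using hNi) (by simp only [Fin.le_def, Fin.coe_castSucc, Fin.val_last]; omega)
              _ ≤ x (Fin.last (M + 1)) := h3
          · have : i = j := Fin.ext (by have := i.isLt; omega)
            rw [this]

theorem muN_consistent (θ : ℝ) (hθ : 0 < θ) (N M : ℕ) (hNM : N < M)
    (B : Set (Fin (N + 1) → ℝ)) (hB : MeasurableSet B) (hBX : B ⊆ coneX N) :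
    muN θ M
      {x : Fin (M + 1) → ℝ |
        (fun i : Fin (N + 1) => x (Fin.castLE (by omega) i)) ∈ B ∧
        ∀ i j : Fin (M + 1), N ≤ (i : ℕ) → i ≤ j → x i ≤ x j} = muN θ N B :=
  muN_SM θ hθ N B hB hBX M hNM
end

section
/- For 1 ≤ i ≤ j ≤ N and α > 1, the μ^(N)-measure of the set B_{ij}^{(N)} = {(x₁,...,x_N,y) ∈ X_N : 0 < x₁ < ... < x_i ≤ 1 < x_{i+1} < ... < x_j ≤ α < x_{j+1} < ... < y} equals (θ/j) · C(j,i) · α^{-i} · (1 - α^{-1})^{j-i}, where C(j,i) is the binomial coefficient. -/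
open MeasureTheory Finset

open Set ENNReal

namespace MuNAux


lemma measurableSet_strictMono (n : ℕ) :
    MeasurableSet {x : Fin n → ℝ | StrictMono x} := by
  have h : {x : Fin n → ℝ | StrictMono x} =
      ⋂ (a : Fin n) (b : Fin n), {x : Fin n → ℝ | a < b → x a < x b} := by
    ext x; simp [StrictMono, Set.mem_iInter]
  rw [h]
  refine MeasurableSet.iInter fun a => MeasurableSet.iInter fun b => ?_
  by_cases hab : a < b
  · simp only [hab, true_implies]
    exact measurableSet_lt (measurable_pi_apply a) (measurable_pi_apply b)
  · simp only [hab, false_implies, Set.setOf_true]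
    exact MeasurableSet.univ

lemma strictMono_cons_iff {n : ℕ} (t : ℝ) (w : Fin (n + 1) → ℝ) :
    StrictMono (Fin.cons t w : Fin (n + 2) → ℝ) ↔ t < w 0 ∧ StrictMono w := by
  constructor
  · intro h
    refine ⟨by simpa using h (Fin.succ_pos 0), ?_⟩
    have hw : (Fin.cons t w : Fin (n + 2) → ℝ) ∘ Fin.succ = w := by
      ext q; simp
    rw [← hw]
    exact h.comp Fin.strictMono_succ
  · rintro ⟨h0, hw⟩
    rw [Fin.strictMono_iff_lt_succ]
    intro q
    induction q using Fin.cases with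
    | zero => simpa using h0
    | succ m =>
      rw [← Fin.succ_castSucc]
      simpa using hw (Fin.castSucc_lt_succ : Fin.castSucc m < m.succ)

lemma lintegral_peel (n : ℕ) (f : (Fin (n + 2) → ℝ) → ℝ≥0∞) (hf : Measurable f) :
    ∫⁻ x, f x = ∫⁻ t : ℝ, ∫⁻ w : Fin (n + 1) → ℝ, f (Fin.cons t w) := by
  have mp := measurePreserving_piFinSuccAbove (fun _ : Fin (n + 2) => (volume : Measure ℝ)) 0
  have h1 : ∫⁻ x, f x
      = ∫⁻ p : ℝ × (Fin (n + 1) → ℝ),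
          f ((MeasurableEquiv.piFinSuccAbove (fun _ : Fin (n + 2) => ℝ) 0).symm p)
        ∂((volume : Measure ℝ).prod (Measure.pi fun _ : Fin (n + 1) => (volume : Measure ℝ))) := by
    rw [volume_pi]
    exact ((mp.symm _).lintegral_comp hf).symm
  have h3 := lintegral_prod (μ := (volume : Measure ℝ))
    (ν := Measure.pi fun _ : Fin (n + 1) => (volume : Measure ℝ))
    (fun p => f ((MeasurableEquiv.piFinSuccAbove (fun _ : Fin (n + 2) => ℝ) 0).symm p))
    (hf.comp (MeasurableEquiv.measurable _)).aemeasurable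
  rw [h1, h3]
  have h2 : ∀ (t : ℝ) (w : Fin (n + 1) → ℝ),
      (MeasurableEquiv.piFinSuccAbove (fun _ : Fin (n + 2) => ℝ) 0).symm (t, w)
        = Fin.cons t w := by
    intro t w
    simp [MeasurableEquiv.piFinSuccAbove, Fin.insertNthEquiv, Fin.insertNth_zero']
  simp_rw [h2]
  rw [← volume_pi]



def Sset (d k₁ k₂ : ℕ) (a u b v c : ℝ) : Set (Fin (d + 1) → ℝ) :=
  {x | StrictMono x ∧ (∀ p : Fin (d + 1), (p : ℕ) < k₁ → x p ∈ Ioc a u) ∧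
       (∀ p : Fin (d + 1), k₁ ≤ (p : ℕ) → (p : ℕ) < k₁ + k₂ → x p ∈ Ioc b v) ∧
       (∀ p : Fin (d + 1), k₁ + k₂ ≤ (p : ℕ) → c < x p)}


lemma mem_Sset_iff {d k₁ k₂ : ℕ} {a u b v c : ℝ} {x : Fin (d + 1) → ℝ} :
    x ∈ Sset d k₁ k₂ a u b v c ↔ StrictMono x ∧
      (∀ p : Fin (d + 1), (p : ℕ) < k₁ → x p ∈ Ioc a u) ∧
      (∀ p : Fin (d + 1), k₁ ≤ (p : ℕ) → (p : ℕ) < k₁ + k₂ → x p ∈ Ioc b v) ∧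
      (∀ p : Fin (d + 1), k₁ + k₂ ≤ (p : ℕ) → c < x p) := Iff.rfl

lemma mem_cons₁ {d k₁ k₂ : ℕ} {a u b v c t : ℝ} (hub : u ≤ b) (hbv : b ≤ v) (hvc : v ≤ c)
    (w : Fin (d + 1) → ℝ) :
    (Fin.cons t w : Fin (d + 2) → ℝ) ∈ Sset (d + 1) (k₁ + 1) k₂ a u b v c ↔
      t ∈ Ioc a u ∧ w ∈ Sset d k₁ k₂ t u b v c := by
  rw [mem_Sset_iff, mem_Sset_iff, strictMono_cons_iff]
  constructor
  · rintro ⟨⟨h0, hw⟩, h1, h2, h3⟩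
    have hta : t ∈ Ioc a u := by simpa using h1 0 (by simp)
    refine ⟨hta, hw, fun q hq => ?_, fun q hq1 hq2 => ?_, fun q hq => ?_⟩
    · have := h1 q.succ (by simpa using by omega)
      rw [Fin.cons_succ] at this
      exact ⟨lt_of_lt_of_le h0 (hw.monotone (Fin.zero_le q)), this.2⟩
    · have := h2 q.succ (by simpa using by omega) (by simpa using by omega)
      rwa [Fin.cons_succ] at this
    · have := h3 q.succ (by simpa using by omega)
      rwa [Fin.cons_succ] at this
  · rintro ⟨hta, hw, h1, h2, h3⟩
    have h0 : t < w 0 := by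
      rcases Nat.eq_zero_or_pos k₁ with hk1 | hk1
      · rcases Nat.eq_zero_or_pos k₂ with hk2 | hk2
        · exact lt_of_le_of_lt (le_trans hta.2 (le_trans hub (le_trans hbv hvc)))
            (h3 0 (by simp [hk1, hk2]))
        · exact lt_of_le_of_lt (le_trans hta.2 hub)
            (h2 0 (by simp [hk1]) (by simp; omega)).1
      · exact (h1 0 (by simpa using hk1)).1
    refine ⟨⟨h0, hw⟩, fun p hp => ?_, fun p hp1 hp2 => ?_, fun p hp => ?_⟩
    · induction p using Fin.cases with
      | zero => simpa using hta
      | succ q =>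
        rw [Fin.cons_succ]
        have := h1 q (by simp only [Fin.val_succ] at hp; omega)
        exact ⟨lt_of_lt_of_le hta.1 (le_of_lt this.1), this.2⟩
    · induction p using Fin.cases with
      | zero => simp at hp1
      | succ q =>
        rw [Fin.cons_succ]
        simp only [Fin.val_succ] at hp1 hp2
        exact h2 q (by omega) (by omega)
    · induction p using Fin.cases with
      | zero => simp at hp
      | succ q =>
        rw [Fin.cons_succ]
        simp only [Fin.val_succ] at hp
        exact h3 q (by omega)

lemma mem_cons₂ {d k₂ : ℕ} {a u b v c t : ℝ} (hvc : v ≤ c)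
    (w : Fin (d + 1) → ℝ) :
    (Fin.cons t w : Fin (d + 2) → ℝ) ∈ Sset (d + 1) 0 (k₂ + 1) a u b v c ↔
      t ∈ Ioc b v ∧ w ∈ Sset d 0 k₂ a u t v c := by
  rw [mem_Sset_iff, mem_Sset_iff, strictMono_cons_iff]
  constructor
  · rintro ⟨⟨h0, hw⟩, h1, h2, h3⟩
    have htb : t ∈ Ioc b v := by simpa using h2 0 (by simp) (by simp)
    refine ⟨htb, hw, fun q hq => by simp at hq, fun q hq1 hq2 => ?_, fun q hq => ?_⟩
    · have := h2 q.succ (by simp) (by simpa using by omega)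
      rw [Fin.cons_succ] at this
      exact ⟨lt_of_lt_of_le h0 (hw.monotone (Fin.zero_le q)), this.2⟩
    · have := h3 q.succ (by simpa using by omega)
      rwa [Fin.cons_succ] at this
  · rintro ⟨htb, hw, h1, h2, h3⟩
    have h0 : t < w 0 := by
      rcases Nat.eq_zero_or_pos k₂ with hk2 | hk2
      · exact lt_of_le_of_lt (le_trans htb.2 hvc) (h3 0 (by simp [hk2]))
      · exact (h2 0 (by simp) (by simpa using hk2)).1
    refine ⟨⟨h0, hw⟩, fun p hp => by simp at hp, fun p hp1 hp2 => ?_, fun p hp => ?_⟩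
    · induction p using Fin.cases with
      | zero => simpa using htb
      | succ q =>
        rw [Fin.cons_succ]
        simp only [Fin.val_succ] at hp2
        have := h2 q (by simp) (by omega)
        exact ⟨lt_of_lt_of_le htb.1 (le_of_lt this.1), this.2⟩
    · induction p using Fin.cases with
      | zero => simp at hp
      | succ q =>
        rw [Fin.cons_succ]
        simp only [Fin.val_succ] at hp
        exact h3 q (by omega)

lemma mem_cons₃ {d : ℕ} {a u b v c t : ℝ}
    (w : Fin (d + 1) → ℝ) :
    (Fin.cons t w : Fin (d + 2) → ℝ) ∈ Sset (d + 1) 0 0 a u b v c ↔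
      c < t ∧ w ∈ Sset d 0 0 a u b v t := by
  rw [mem_Sset_iff, mem_Sset_iff, strictMono_cons_iff]
  constructor
  · rintro ⟨⟨h0, hw⟩, h1, h2, h3⟩
    have htc : c < t := by simpa using h3 0 (by simp)
    refine ⟨htc, hw, fun q hq => by simp at hq, fun q hq1 hq2 => by simp at hq2,
      fun q hq => lt_of_lt_of_le h0 (hw.monotone (Fin.zero_le q))⟩
  · rintro ⟨htc, hw, h1, h2, h3⟩
    have h0 : t < w 0 := h3 0 (by simp)
    refine ⟨⟨h0, hw⟩, fun p hp => by simp at hp, fun p hp1 hp2 => by simp at hp2,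
      fun p hp => ?_⟩
    induction p using Fin.cases with
    | zero => simpa using htc
    | succ q =>
      rw [Fin.cons_succ]
      exact lt_trans htc (h3 q (by simp))

lemma Sset_zero (a u b v c : ℝ) :
    Sset 0 0 0 a u b v c = {x : Fin 1 → ℝ | c < x 0} := by
  ext x
  simp only [Sset, Set.mem_setOf_eq]
  constructor
  · rintro ⟨-, -, -, h3⟩; exact h3 0 (by simp)
  · intro h
    have hsm : StrictMono x := fun p q hpq => absurd hpq (by
      have hp : (p : ℕ) = 0 := by omega
      have hq : (q : ℕ) = 0 := by omega
      simp [Fin.lt_iff_val_lt_val, hp, hq])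
    refine ⟨hsm, fun p hp => by simp at hp, fun p hp1 hp2 => by simp at hp2, fun p _ => ?_⟩
    have hp : p = 0 := by
      apply Fin.ext; omega
    rw [hp]; exact h


lemma measurableSet_Sset (d k₁ k₂ : ℕ) (a u b v c : ℝ) :
    MeasurableSet (Sset d k₁ k₂ a u b v c) := by
  have hS : Sset d k₁ k₂ a u b v c =
      {x : Fin (d + 1) → ℝ | StrictMono x} ∩
      ((⋂ p : Fin (d + 1), {x : Fin (d + 1) → ℝ | (p : ℕ) < k₁ → x p ∈ Ioc a u}) ∩
       ((⋂ p : Fin (d + 1), {x : Fin (d + 1) → ℝ | k₁ ≤ (p : ℕ) → (p : ℕ) < k₁ + k₂ → x p ∈ Ioc b v}) ∩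
        (⋂ p : Fin (d + 1), {x : Fin (d + 1) → ℝ | k₁ + k₂ ≤ (p : ℕ) → c < x p}))) := by
    ext x; simp [Sset, Set.mem_iInter]
  rw [hS]
  apply (measurableSet_strictMono (d + 1)).inter
  apply MeasurableSet.inter
  · refine MeasurableSet.iInter fun p => ?_
    by_cases hp : (p : ℕ) < k₁
    · simp only [hp, true_implies]
      exact (measurable_pi_apply p) measurableSet_Ioc
    · simp only [hp, false_implies, Set.setOf_true]; exact .univ
  apply MeasurableSet.inter
  · refine MeasurableSet.iInter fun p => ?_
    by_cases hp : k₁ ≤ (p : ℕ) ∧ (p : ℕ) < k₁ + k₂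
    · have : {x : Fin (d + 1) → ℝ | k₁ ≤ (p : ℕ) → (p : ℕ) < k₁ + k₂ → x p ∈ Ioc b v}
          = (fun x : Fin (d + 1) → ℝ => x p) ⁻¹' (Ioc b v) := by
        ext x; simp [hp.1, hp.2]
      rw [this]; exact (measurable_pi_apply p) measurableSet_Ioc
    · have : {x : Fin (d + 1) → ℝ | k₁ ≤ (p : ℕ) → (p : ℕ) < k₁ + k₂ → x p ∈ Ioc b v}
          = Set.univ := by
        ext x; simp only [Set.mem_setOf_eq, Set.mem_univ, iff_true]
        intro h1 h2; exact absurd ⟨h1, h2⟩ hp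
      rw [this]; exact .univ
  · refine MeasurableSet.iInter fun p => ?_
    by_cases hp : k₁ + k₂ ≤ (p : ℕ)
    · simp only [hp, true_implies]
      exact measurableSet_lt measurable_const (measurable_pi_apply p)
    · simp only [hp, false_implies, Set.setOf_true]; exact .univ



lemma lint_Ioi (m : ℕ) (hm : 1 ≤ m) (c : ℝ) (hc : 0 < c) :
    ∫⁻ t in Ioi c, ENNReal.ofReal (1 / t ^ (m + 1)) = ENNReal.ofReal (1 / (m * c ^ m)) := by
  have hexp : (-(m + 1 : ℝ)) < -1 := by
    have : (1 : ℝ) ≤ (m : ℝ) := by exact_mod_cast hm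
    linarith
  have hcongr : ∫⁻ t in Ioi c, ENNReal.ofReal (1 / t ^ (m + 1))
      = ∫⁻ t in Ioi c, ENNReal.ofReal (t ^ (-(m + 1 : ℝ))) := by
    refine setLIntegral_congr_fun measurableSet_Ioi (fun t ht => ?_)
    have ht0 : 0 < t := lt_trans hc ht
    rw [Real.rpow_neg ht0.le, show ((m : ℝ) + 1) = ((m + 1 : ℕ) : ℝ) by push_cast; ring,
      Real.rpow_natCast, one_div]
  rw [hcongr, ← ofReal_integral_eq_lintegral_ofReal]
  · rw [integral_Ioi_rpow_of_lt hexp hc]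
    congr 1
    have h1 : (-(m + 1 : ℝ) + 1) = -(m : ℝ) := by ring
    rw [h1, Real.rpow_neg hc.le, show ((m : ℝ)) = ((m : ℕ) : ℝ) by norm_num,
      Real.rpow_natCast]
    ring
  · exact integrableOn_Ioi_rpow_of_lt hexp hc
  · filter_upwards [ae_restrict_mem measurableSet_Ioi] with t ht
    exact Real.rpow_nonneg (le_of_lt (lt_trans hc ht)) _

lemma lint_Ioc (k : ℕ) (a u : ℝ) (h : a ≤ u) :
    ∫⁻ t in Ioc a u, ENNReal.ofReal ((u - t) ^ k)
      = ENNReal.ofReal ((u - a) ^ (k + 1) / (k + 1)) := by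
  rw [← ofReal_integral_eq_lintegral_ofReal]
  · congr 1
    rw [← intervalIntegral.integral_of_le h]
    have := intervalIntegral.integral_comp_sub_left (a := a) (b := u) (fun x => x ^ k) u
    rw [this, sub_self, integral_pow]
    simp
  · exact (Continuous.integrableOn_Ioc (by continuity))
  · filter_upwards [ae_restrict_mem measurableSet_Ioc] with t ht
    exact pow_nonneg (by linarith [ht.2]) k



lemma base_lintegral (c : ℝ) (g : ℝ → ℝ≥0∞) (hg : Measurable g) :
    ∫⁻ x in {x : Fin 1 → ℝ | c < x 0}, g (x 0) = ∫⁻ y in Ioi c, g y := by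
  have mp := volume_preserving_funUnique (Fin 1) ℝ
  have hpre : {x : Fin 1 → ℝ | c < x 0}
      = (MeasurableEquiv.funUnique (Fin 1) ℝ) ⁻¹' (Ioi c) := by
    ext x
    simp [MeasurableEquiv.funUnique, Equiv.funUnique]
  rw [hpre]
  have := mp.setLIntegral_comp_preimage_emb (MeasurableEquiv.measurableEmbedding _) g (Ioi c)
  rw [← this]
  rfl


lemma meas_g (d r : ℕ) :
    Measurable (fun x : Fin (d + 1) → ℝ => ENNReal.ofReal (1 / x (Fin.last d) ^ (r + 1))) := by
  apply Measurable.ennreal_ofReal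
  exact measurable_const.div ((measurable_pi_apply _).pow_const _)

lemma measG (r : ℕ) : Measurable (fun y : ℝ => ENNReal.ofReal (1 / y ^ (r + 1))) := by
  apply Measurable.ennreal_ofReal
  exact measurable_const.div ((measurable_id (α := ℝ)).pow_const _)

lemma cons_last {d : ℕ} (t : ℝ) (w : Fin (d + 1) → ℝ) :
    (Fin.cons t w : Fin (d + 2) → ℝ) (Fin.last (d + 1)) = w (Fin.last d) := by
  rw [← Fin.succ_last, Fin.cons_succ]

lemma grand : ∀ (d k₁ k₂ k₃ r : ℕ), k₁ + k₂ + k₃ = d → k₃ < r →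
    ∀ (a u b v c : ℝ), a ≤ u → u ≤ b → b ≤ v → v ≤ c → 0 < c →
    ∫⁻ x in Sset d k₁ k₂ a u b v c, ENNReal.ofReal (1 / x (Fin.last d) ^ (r + 1)) =
      ENNReal.ofReal ((u - a) ^ k₁ / k₁.factorial) *
      ENNReal.ofReal ((v - b) ^ k₂ / k₂.factorial) *
      ENNReal.ofReal ((r - k₃ - 1).factorial / (r.factorial * c ^ (r - k₃))) := by
  intro d
  induction d with
  | zero =>
    intro k₁ k₂ k₃ r hd hr a u b v c h1 h2 h3 h4 hc
    obtain rfl : k₁ = 0 := by omega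
    obtain rfl : k₂ = 0 := by omega
    obtain rfl : k₃ = 0 := by omega
    rw [Sset_zero]
    have hg : (fun x : Fin 1 → ℝ => ENNReal.ofReal (1 / x (Fin.last 0) ^ (r + 1)))
        = fun x : Fin 1 → ℝ => (fun y : ℝ => ENNReal.ofReal (1 / y ^ (r + 1))) (x 0) := rfl
    rw [show (∫⁻ x in {x : Fin 1 → ℝ | c < x 0},
          ENNReal.ofReal (1 / x (Fin.last 0) ^ (r + 1)))
        = ∫⁻ x in {x : Fin 1 → ℝ | c < x 0},
          (fun y : ℝ => ENNReal.ofReal (1 / y ^ (r + 1))) (x 0) from rfl]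
    rw [base_lintegral c (fun y : ℝ => ENNReal.ofReal (1 / y ^ (r + 1))) (measG r)]
    rw [lint_Ioi r hr c hc]
    have h0 : ENNReal.ofReal ((u - a) ^ 0 / Nat.factorial 0) = 1 := by
      norm_num [Nat.factorial]
    have h0' : ENNReal.ofReal ((v - b) ^ 0 / Nat.factorial 0) = 1 := by
      norm_num [Nat.factorial]
    rw [h0, h0', one_mul, one_mul]
    congr 1
    rw [Nat.sub_zero]
    have hrf : (r.factorial : ℝ) = r * (r - 1).factorial := by
      exact_mod_cast (Nat.mul_factorial_pred hr.ne').symm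
    rw [hrf]
    have : ((r - 1).factorial : ℝ) ≠ 0 := by positivity
    field_simp
  | succ d ih =>
    intro k₁ k₂ k₃ r hd hr a u b v c h1 h2 h3 h4 hc
    rcases k₁ with _ | k₁'
    · rcases k₂ with _ | k₂'
      · -- case 3 : peel into third block
        obtain ⟨k₃', rfl⟩ : ∃ k₃', k₃ = k₃' + 1 := ⟨d, by omega⟩
        set s := r - (k₃' + 1) with hs
        have hs1 : 1 ≤ s := by omega
        have hsr : r - k₃' = s + 1 := by omega
        have hsr2 : r - k₃' - 1 = s := by omega
        set C₁ := ENNReal.ofReal ((u - a) ^ 0 / Nat.factorial 0) with hC₁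
        set C₂ := ENNReal.ofReal ((v - b) ^ 0 / Nat.factorial 0) with hC₂
        have hSm := measurableSet_Sset (d + 1) 0 0 a u b v c
        rw [← lintegral_indicator hSm]
        rw [lintegral_peel d _ ((meas_g (d + 1) r).indicator hSm)]
        have key : ∀ t : ℝ,
            (∫⁻ w : Fin (d + 1) → ℝ,
              (Sset (d + 1) 0 0 a u b v c).indicator
                (fun x => ENNReal.ofReal (1 / x (Fin.last (d + 1)) ^ (r + 1))) (Fin.cons t w))
            = (Ioi c).indicator (fun t' => ∫⁻ w in Sset d 0 0 a u b v t',
                ENNReal.ofReal (1 / w (Fin.last d) ^ (r + 1))) t := by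
          intro t
          by_cases ht : t ∈ Ioi c
          · rw [Set.indicator_of_mem ht,
              ← lintegral_indicator (measurableSet_Sset d 0 0 a u b v t)]
            apply lintegral_congr
            intro w
            by_cases hw : w ∈ Sset d 0 0 a u b v t
            · rw [Set.indicator_of_mem hw,
                Set.indicator_of_mem ((mem_cons₃ w).2 ⟨ht, hw⟩), cons_last]
            · rw [Set.indicator_of_notMem hw, Set.indicator_of_notMem
                (fun hmem => hw ((mem_cons₃ w).1 hmem).2)]
          · rw [Set.indicator_of_notMem ht]
            have hz : ∀ w : Fin (d + 1) → ℝ,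
                (Sset (d + 1) 0 0 a u b v c).indicator
                  (fun x => ENNReal.ofReal (1 / x (Fin.last (d + 1)) ^ (r + 1)))
                  (Fin.cons t w) = 0 := fun w =>
              Set.indicator_of_notMem (fun hmem => ht ((mem_cons₃ w).1 hmem).1) _
            simp only [hz, lintegral_zero]
        rw [lintegral_congr key, lintegral_indicator measurableSet_Ioi]
        rw [setLIntegral_congr_fun measurableSet_Ioi (
          fun t ht => ih 0 0 k₃' r (by omega) (by omega) a u b v t h1 h2 h3
            (le_trans h4 (le_of_lt ht)) (lt_trans hc ht))]
        have hsplit : ∀ t : ℝ,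
            C₁ * C₂ * ENNReal.ofReal ((r - k₃' - 1).factorial
                / (r.factorial * t ^ (r - k₃')))
            = ENNReal.ofReal (1 / t ^ (s + 1))
                * (C₁ * C₂ * ENNReal.ofReal (s.factorial / r.factorial)) := by
          intro t
          rw [hsr]
          simp only [Nat.add_sub_cancel]
          rw [show (s.factorial : ℝ) / (r.factorial * t ^ (s + 1))
              = (1 / t ^ (s + 1)) * (s.factorial / r.factorial) by ring,
            ENNReal.ofReal_mul' (by positivity)]
          ring
        rw [← hC₁, ← hC₂]
        simp_rw [hsplit]
        rw [lintegral_mul_const _ (measG s)]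
        rw [lint_Ioi s hs1 c hc]
        have hmerge : ENNReal.ofReal (1 / (s * c ^ s))
              * ENNReal.ofReal (s.factorial / r.factorial)
            = ENNReal.ofReal ((s - 1).factorial / (r.factorial * c ^ s)) := by
          rw [← ENNReal.ofReal_mul' (by positivity)]
          congr 1
          have hsf : (s.factorial : ℝ) = s * (s - 1).factorial := by
            exact_mod_cast (Nat.mul_factorial_pred (by omega : s ≠ 0)).symm
          rw [hsf]
          have e1 : ((s - 1).factorial : ℝ) ≠ 0 := by positivity
          have e2 : (s : ℝ) ≠ 0 := by positivity
          have e3 : (r.factorial : ℝ) ≠ 0 := by positivity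
          field_simp
        calc ENNReal.ofReal (1 / (s * c ^ s))
              * (C₁ * C₂ * ENNReal.ofReal (s.factorial / r.factorial))
            = C₁ * C₂ * (ENNReal.ofReal (1 / (s * c ^ s))
                * ENNReal.ofReal (s.factorial / r.factorial)) := by ring
          _ = C₁ * C₂ * ENNReal.ofReal ((s - 1).factorial / (r.factorial * c ^ s)) := by
              rw [hmerge]
      · -- case 2
        set C₁ := ENNReal.ofReal ((u - a) ^ 0 / Nat.factorial 0) with hC₁
        set C₃ := ENNReal.ofReal ((r - k₃ - 1).factorial
            / (r.factorial * c ^ (r - k₃))) with hC₃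
        have hSm := measurableSet_Sset (d + 1) 0 (k₂' + 1) a u b v c
        rw [← lintegral_indicator hSm]
        rw [lintegral_peel d _ ((meas_g (d + 1) r).indicator hSm)]
        have key : ∀ t : ℝ,
            (∫⁻ w : Fin (d + 1) → ℝ,
              (Sset (d + 1) 0 (k₂' + 1) a u b v c).indicator
                (fun x => ENNReal.ofReal (1 / x (Fin.last (d + 1)) ^ (r + 1))) (Fin.cons t w))
            = (Ioc b v).indicator (fun t' => ∫⁻ w in Sset d 0 k₂' a u t' v c,
                ENNReal.ofReal (1 / w (Fin.last d) ^ (r + 1))) t := by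
          intro t
          by_cases ht : t ∈ Ioc b v
          · rw [Set.indicator_of_mem ht,
              ← lintegral_indicator (measurableSet_Sset d 0 k₂' a u t v c)]
            apply lintegral_congr
            intro w
            by_cases hw : w ∈ Sset d 0 k₂' a u t v c
            · rw [Set.indicator_of_mem hw,
                Set.indicator_of_mem ((mem_cons₂ h4 w).2 ⟨ht, hw⟩), cons_last]
            · rw [Set.indicator_of_notMem hw, Set.indicator_of_notMem
                (fun hmem => hw ((mem_cons₂ h4 w).1 hmem).2)]
          · rw [Set.indicator_of_notMem ht]
            have hz : ∀ w : Fin (d + 1) → ℝ,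
                (Sset (d + 1) 0 (k₂' + 1) a u b v c).indicator
                  (fun x => ENNReal.ofReal (1 / x (Fin.last (d + 1)) ^ (r + 1)))
                  (Fin.cons t w) = 0 := fun w =>
              Set.indicator_of_notMem (fun hmem => ht ((mem_cons₂ h4 w).1 hmem).1) _
            simp only [hz, lintegral_zero]
        rw [lintegral_congr key, lintegral_indicator measurableSet_Ioc]
        rw [setLIntegral_congr_fun measurableSet_Ioc (
          fun t ht => ih 0 k₂' k₃ r (by omega) hr a u t v c h1
            (le_trans h2 (le_of_lt ht.1)) ht.2 h4 hc)]
        have hsplit : ∀ t : ℝ,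
            C₁ * ENNReal.ofReal ((v - t) ^ k₂' / k₂'.factorial) * C₃
            = ENNReal.ofReal ((v - t) ^ k₂')
                * (C₁ * ENNReal.ofReal (1 / k₂'.factorial) * C₃) := by
          intro t
          rw [div_eq_mul_one_div, ENNReal.ofReal_mul' (by positivity)]
          ring
        rw [← hC₁, ← hC₃]
        simp_rw [hsplit]
        rw [lintegral_mul_const _ (by
          apply Measurable.ennreal_ofReal
          exact (measurable_const.sub measurable_id).pow_const _)]
        rw [lint_Ioc k₂' b v h3]
        have hmerge : ENNReal.ofReal ((v - b) ^ (k₂' + 1) / (k₂' + 1))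
              * ENNReal.ofReal (1 / k₂'.factorial)
            = ENNReal.ofReal ((v - b) ^ (k₂' + 1) / (k₂' + 1).factorial) := by
          rw [← ENNReal.ofReal_mul' (by positivity)]
          congr 1
          rw [Nat.factorial_succ]
          have e1 : ((k₂' + 1 : ℕ) : ℝ) ≠ 0 := by positivity
          have e2 : (k₂'.factorial : ℝ) ≠ 0 := by positivity
          push_cast
          field_simp
        calc ENNReal.ofReal ((v - b) ^ (k₂' + 1) / (k₂' + 1))
              * (C₁ * ENNReal.ofReal (1 / k₂'.factorial) * C₃)
            = C₁ * (ENNReal.ofReal ((v - b) ^ (k₂' + 1) / (k₂' + 1))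
              * ENNReal.ofReal (1 / k₂'.factorial)) * C₃ := by ring
          _ = C₁ * ENNReal.ofReal ((v - b) ^ (k₂' + 1) / (k₂' + 1).factorial) * C₃ := by
              rw [hmerge]
    · -- case 1
      set C₂ := ENNReal.ofReal ((v - b) ^ k₂ / k₂.factorial) with hC₂
      set C₃ := ENNReal.ofReal ((r - k₃ - 1).factorial / (r.factorial * c ^ (r - k₃))) with hC₃
      have hSm := measurableSet_Sset (d + 1) (k₁' + 1) k₂ a u b v c
      rw [← lintegral_indicator hSm]
      rw [lintegral_peel d _ ((meas_g (d + 1) r).indicator hSm)]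
      have key : ∀ t : ℝ,
          (∫⁻ w : Fin (d + 1) → ℝ,
            (Sset (d + 1) (k₁' + 1) k₂ a u b v c).indicator
              (fun x => ENNReal.ofReal (1 / x (Fin.last (d + 1)) ^ (r + 1))) (Fin.cons t w))
          = (Ioc a u).indicator (fun t' => ∫⁻ w in Sset d k₁' k₂ t' u b v c,
              ENNReal.ofReal (1 / w (Fin.last d) ^ (r + 1))) t := by
        intro t
        by_cases ht : t ∈ Ioc a u
        · rw [Set.indicator_of_mem ht,
            ← lintegral_indicator (measurableSet_Sset d k₁' k₂ t u b v c)]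
          apply lintegral_congr
          intro w
          by_cases hw : w ∈ Sset d k₁' k₂ t u b v c
          · rw [Set.indicator_of_mem hw,
              Set.indicator_of_mem ((mem_cons₁ h2 h3 h4 w).2 ⟨ht, hw⟩), cons_last]
          · rw [Set.indicator_of_notMem hw, Set.indicator_of_notMem
              (fun hmem => hw ((mem_cons₁ h2 h3 h4 w).1 hmem).2)]
        · rw [Set.indicator_of_notMem ht]
          have hz : ∀ w : Fin (d + 1) → ℝ,
              (Sset (d + 1) (k₁' + 1) k₂ a u b v c).indicator
                (fun x => ENNReal.ofReal (1 / x (Fin.last (d + 1)) ^ (r + 1)))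
                (Fin.cons t w) = 0 := fun w =>
            Set.indicator_of_notMem (fun hmem => ht ((mem_cons₁ h2 h3 h4 w).1 hmem).1) _
          simp only [hz, lintegral_zero]
      rw [lintegral_congr key, lintegral_indicator measurableSet_Ioc]
      rw [setLIntegral_congr_fun measurableSet_Ioc (
        fun t ht => ih k₁' k₂ k₃ r (by omega) hr t u b v c ht.2 h2 h3 h4 hc)]
      have hsplit : ∀ t : ℝ,
          ENNReal.ofReal ((u - t) ^ k₁' / k₁'.factorial) * C₂ * C₃
          = ENNReal.ofReal ((u - t) ^ k₁')
              * (ENNReal.ofReal (1 / k₁'.factorial) * C₂ * C₃) := by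
        intro t
        rw [div_eq_mul_one_div, ENNReal.ofReal_mul' (by positivity)]
        ring
      rw [← hC₂, ← hC₃]
      simp_rw [hsplit]
      rw [lintegral_mul_const _ (by
        apply Measurable.ennreal_ofReal
        exact (measurable_const.sub measurable_id).pow_const _)]
      rw [lint_Ioc k₁' a u h1]
      have hmerge : ENNReal.ofReal ((u - a) ^ (k₁' + 1) / (k₁' + 1))
            * ENNReal.ofReal (1 / k₁'.factorial)
          = ENNReal.ofReal ((u - a) ^ (k₁' + 1) / (k₁' + 1).factorial) := by
        rw [← ENNReal.ofReal_mul' (by positivity)]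
        congr 1
        rw [Nat.factorial_succ]
        have h1' : ((k₁' + 1 : ℕ) : ℝ) ≠ 0 := by positivity
        have h2' : (k₁'.factorial : ℝ) ≠ 0 := by positivity
        push_cast
        field_simp
      calc ENNReal.ofReal ((u - a) ^ (k₁' + 1) / (k₁' + 1))
            * (ENNReal.ofReal (1 / k₁'.factorial) * C₂ * C₃)
          = (ENNReal.ofReal ((u - a) ^ (k₁' + 1) / (k₁' + 1))
            * ENNReal.ofReal (1 / k₁'.factorial)) * C₂ * C₃ := by ring
        _ = ENNReal.ofReal ((u - a) ^ (k₁' + 1) / (k₁' + 1).factorial) * C₂ * C₃ := by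
            rw [hmerge]


end MuNAux

open MuNAux

theorem muN_Bij (θ : ℝ) (hθ : 0 < θ) (α : ℝ) (hα : 1 < α)
    (N i j : ℕ) (hi : 1 ≤ i) (hij : i ≤ j) (hjN : j ≤ N) :
    muN θ N
      {x : Fin (N + 1) → ℝ |
        StrictMono x ∧ 0 < x 0 ∧
        (∀ p : Fin (N + 1), (p : ℕ) < i → x p ≤ 1) ∧
        (∀ p : Fin (N + 1), i ≤ (p : ℕ) → (p : ℕ) < j → 1 < x p ∧ x p ≤ α) ∧
        (∀ p : Fin (N + 1), j ≤ (p : ℕ) → α < x p)} =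
      ENNReal.ofReal (θ / j * (Nat.choose j i : ℝ) * α⁻¹ ^ i * (1 - α⁻¹) ^ (j - i)) := by
  have hBS : {x : Fin (N + 1) → ℝ |
        StrictMono x ∧ 0 < x 0 ∧
        (∀ p : Fin (N + 1), (p : ℕ) < i → x p ≤ 1) ∧
        (∀ p : Fin (N + 1), i ≤ (p : ℕ) → (p : ℕ) < j → 1 < x p ∧ x p ≤ α) ∧
        (∀ p : Fin (N + 1), j ≤ (p : ℕ) → α < x p)}
      = Sset N i (j - i) 0 1 1 α α := by
    ext x
    simp only [Sset, Set.mem_setOf_eq, Set.mem_Ioc]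
    constructor
    · rintro ⟨hsm, h0, hA, hB, hC⟩
      refine ⟨hsm, fun p hp => ⟨lt_of_lt_of_le h0 (hsm.monotone (Fin.zero_le p)), hA p hp⟩,
        fun p hp1 hp2 => ?_, fun p hp => hC p (by omega)⟩
      · have := hB p hp1 (by omega)
        exact ⟨this.1, this.2⟩
    · rintro ⟨hsm, hA, hB, hC⟩
      have h0 : 0 < x 0 := (hA 0 (by simp; omega)).1
      exact ⟨hsm, h0, fun p hp => (hA p hp).2,
        fun p hp1 hp2 => ⟨(hB p hp1 (by omega)).1, (hB p hp1 (by omega)).2⟩,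
        fun p hp => hC p (by omega)⟩
  rw [hBS]
  have hBm := measurableSet_Sset N i (j - i) 0 1 1 α α
  have hsub : Sset N i (j - i) 0 1 1 α α ⊆ coneX N := by
    intro x hx
    obtain ⟨hsm, hA, hB, hC⟩ := hx
    have h0 : 0 < x 0 := (hA 0 (by simp; omega)).1
    exact ⟨fun p => lt_of_lt_of_le h0 (hsm.monotone (Fin.zero_le p)), hsm.monotone⟩
  rw [muN, withDensity_apply _ hBm, Measure.restrict_restrict hBm,
    Set.inter_eq_self_of_subset_left hsub]
  have hsplit : ∀ x : Fin (N + 1) → ℝ,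
      ENNReal.ofReal (θ * (N.factorial : ℝ) / (x (Fin.last N)) ^ (N + 1))
      = ENNReal.ofReal (θ * (N.factorial : ℝ))
        * ENNReal.ofReal (1 / (x (Fin.last N)) ^ (N + 1)) := by
    intro x
    rw [← ENNReal.ofReal_mul (by positivity)]
    congr 1
    ring
  simp_rw [hsplit]
  rw [lintegral_const_mul _ (meas_g N N)]
  rw [grand N i (j - i) (N - j) N (by omega) (by omega) 0 1 1 α α zero_le_one le_rfl hα.le
    le_rfl (by linarith)]
  have hNj : N - (N - j) = j := by omega
  rw [hNj]
  have n1 : (0:ℝ) ≤ (1 - 0 : ℝ) ^ i / i.factorial :=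
    div_nonneg (pow_nonneg (by norm_num) _) (by positivity)
  have n2 : (0:ℝ) ≤ (α - 1) ^ (j - i) / (j - i).factorial :=
    div_nonneg (pow_nonneg (by linarith) _) (by positivity)
  rw [← ENNReal.ofReal_mul n1, ← ENNReal.ofReal_mul (mul_nonneg n1 n2),
    ← ENNReal.ofReal_mul (by positivity)]
  congr 1
  have hα0 : (0:ℝ) < α := by linarith
  have hj0 : 0 < j := by omega
  have hchoose : (j.choose i : ℝ) * i.factorial * (j - i).factorial = j.factorial := by
    exact_mod_cast Nat.choose_mul_factorial_mul_factorial hij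
  have hjfac : (j : ℝ) * (j - 1).factorial = j.factorial := by
    exact_mod_cast Nat.mul_factorial_pred hj0.ne'
  have hinv : (1 - α⁻¹) = (α - 1) / α := by field_simp
  have hαj : α ^ j = α ^ i * α ^ (j - i) := by rw [← pow_add]; congr 1; omega
  rw [hinv, div_pow, inv_pow, hαj]
  have e1 : (i.factorial : ℝ) ≠ 0 := by positivity
  have e2 : ((j - i).factorial : ℝ) ≠ 0 := by positivity
  have e3 : (N.factorial : ℝ) ≠ 0 := by positivity
  have e4 : (α : ℝ) ≠ 0 := ne_of_gt hα0
  have e5 : (j : ℝ) ≠ 0 := (Nat.cast_pos.mpr hj0).ne'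
  field_simp
  linear_combination ((α - 1) ^ (j - i)) * (hjfac - hchoose)
end

section
/- For 1 ≤ i ≤ N and α > 1, the μ^(N)-measure of the set B_{i,>N}^{(N)} = {(x₁,...,x_N,y) ∈ X_N : 0 < x₁ < ... < x_i ≤ 1 < x_{i+1} < ... < x_N < y ≤ α} equals (θ/i) · I_{1-α^{-1}}(N-i+1, i), where I_x(a,b) is the regularized incomplete beta function. -/
open MeasureTheory Finset intervalIntegral

/-- The regularized (normalized) incomplete beta function `I_x(a,b)` for natural
parameters `a, b ≥ 1`. -/
noncomputable def regIncBeta (x : ℝ) (a b : ℕ) : ℝ :=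
  (∫ t in (0 : ℝ)..x, t ^ (a - 1) * (1 - t) ^ (b - 1)) /
    (∫ t in (0 : ℝ)..1, t ^ (a - 1) * (1 - t) ^ (b - 1))



lemma aux_measurableSet_imp {X : Type*} [MeasurableSpace X] (P : Prop) {s : Set X}
    (h : MeasurableSet s) : MeasurableSet {x | P → x ∈ s} := by
  by_cases hP : P
  · simp only [hP, forall_true_left]; exact h
  · have : {x : X | P → x ∈ s} = Set.univ := by ext x; simp [hP]
    rw [this]; exact MeasurableSet.univ

/-- The "block" set: first `k` coordinates form a point of `A`, the last `m` coordinates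
form a strictly increasing tuple in `(a,b)`. -/
def auxBlock (k m : ℕ) (A : Set (Fin k → ℝ)) (a b : ℝ) : Set (Fin (k + m) → ℝ) :=
  {x | (fun p : Fin k => x (Fin.castAdd m p)) ∈ A ∧
       (∀ p : Fin (k + m), k ≤ (p : ℕ) → x p ∈ Set.Ioo a b) ∧
       (∀ p q : Fin (k + m), k ≤ (q : ℕ) → p < q → x p < x q)}

lemma auxBlock_meas (k m : ℕ) (A : Set (Fin k → ℝ)) (a b : ℝ) (hA : MeasurableSet A) :
    MeasurableSet (auxBlock k m A a b) := by
  have h1 : MeasurableSet {x : Fin (k+m) → ℝ | (fun p : Fin k => x (Fin.castAdd m p)) ∈ A} :=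
    (measurable_pi_lambda _ (fun p => measurable_pi_apply _)) hA
  have h2 : MeasurableSet {x : Fin (k+m) → ℝ |
      ∀ p : Fin (k + m), k ≤ (p : ℕ) → x p ∈ Set.Ioo a b} := by
    have : {x : Fin (k+m) → ℝ | ∀ p : Fin (k + m), k ≤ (p : ℕ) → x p ∈ Set.Ioo a b}
        = ⋂ p : Fin (k+m), {x | k ≤ (p : ℕ) → x ∈ {x : Fin (k+m) → ℝ | x p ∈ Set.Ioo a b}} := by
      ext x; simp [Set.mem_iInter]
    rw [this]
    exact MeasurableSet.iInter fun p =>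
      aux_measurableSet_imp _ ((measurable_pi_apply p) measurableSet_Ioo)
  have h3 : MeasurableSet {x : Fin (k+m) → ℝ |
      ∀ p q : Fin (k + m), k ≤ (q : ℕ) → p < q → x p < x q} := by
    have : {x : Fin (k+m) → ℝ | ∀ p q : Fin (k + m), k ≤ (q : ℕ) → p < q → x p < x q}
        = ⋂ (p : Fin (k+m)) (q : Fin (k+m)),
            {x | k ≤ (q : ℕ) → x ∈ {x | p < q → x ∈ {x : Fin (k+m) → ℝ | x p < x q}}} := by
      ext x; simp [Set.mem_iInter]
    rw [this]
    exact MeasurableSet.iInter fun p => MeasurableSet.iInter fun q =>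
      aux_measurableSet_imp _ (aux_measurableSet_imp _
        (measurableSet_lt (measurable_pi_apply p) (measurable_pi_apply q)))
  exact h1.inter (h2.inter h3)

lemma aux_hyper (n : ℕ) (p : Fin n) (c : ℝ) :
    (volume : Measure (Fin n → ℝ)) {x | x p = c} = 0 := by
  have h : {x : Fin n → ℝ | x p = c}
      = Set.pi Set.univ (fun q => if q = p then ({c} : Set ℝ) else Set.univ) := by
    ext x
    simp only [Set.mem_setOf_eq, Set.mem_pi, Set.mem_univ, forall_true_left]
    constructor
    · intro h q
      by_cases hq : q = p
      · subst hq; simp [h]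
      · simp [hq]
    · intro h
      have := h p
      simpa using this
  rw [h, volume_pi, Measure.pi_pi]
  refine Finset.prod_eq_zero (Finset.mem_univ p) ?_
  simp

lemma aux_peel (n : ℕ) (S : Set (Fin (n+1) → ℝ)) (hS : MeasurableSet S) :
    volume S = ∫⁻ y : ℝ, volume {v : Fin n → ℝ | Fin.snoc v y ∈ S} := by
  set e := MeasurableEquiv.piFinSuccAbove (fun _ : Fin (n+1) => ℝ) (Fin.last n) with he
  have mp := (measurePreserving_piFinSuccAbove (fun _ : Fin (n+1) => (volume : Measure ℝ))
    (Fin.last n)).symm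
  have h1 : (volume : Measure (Fin (n+1) → ℝ)) S
      = ((volume : Measure ℝ).prod (Measure.pi fun _ : Fin n => volume)) (e.symm ⁻¹' S) := by
    rw [volume_pi]
    exact (mp.measure_preimage hS.nullMeasurableSet).symm
  rw [h1, Measure.prod_apply (e.symm.measurable hS)]
  congr 1
  funext y
  have h2 : Prod.mk y ⁻¹' (e.symm ⁻¹' S) = {v : Fin n → ℝ | Fin.snoc v y ∈ S} := by
    ext v
    simp only [Set.mem_preimage, Set.mem_setOf_eq, he]
    constructor <;> intro h <;> convert h using 2 <;>
      simp [MeasurableEquiv.piFinSuccAbove, Fin.insertNthEquiv, Fin.insertNth_last']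
  rw [h2, ← volume_pi]


lemma aux_beta_nat (b a : ℕ) :
    ∫ t in (0:ℝ)..1, t ^ a * (1 - t) ^ b
      = (a.factorial * b.factorial : ℝ) / (a + b + 1).factorial := by
  induction b generalizing a with
  | zero =>
      simp only [pow_zero, mul_one, integral_pow, one_pow]
      rw [show a + 0 + 1 = a + 1 by ring, Nat.factorial_succ]
      have ha : (a.factorial : ℝ) ≠ 0 := Nat.cast_ne_zero.mpr a.factorial_ne_zero
      have ha1 : ((a:ℝ)+1) ≠ 0 := by positivity
      push_cast
      rw [zero_pow (by omega : a + 1 ≠ 0)]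
      field_simp
      simp
  | succ b ih =>
      have key : ∫ t in (0:ℝ)..1, (1 - t) ^ (b+1) * t ^ a
          = ((b:ℝ)+1)/((a:ℝ)+1) * ∫ t in (0:ℝ)..1, t ^ (a+1) * (1 - t) ^ b := by
        have hu : ∀ t ∈ Set.uIcc (0:ℝ) 1, HasDerivAt (fun x : ℝ => (1 - x) ^ (b+1))
            (((b:ℝ)+1) * (1 - t) ^ b * (-1)) t := by
          intro t _
          have h1 : HasDerivAt (fun x : ℝ => 1 - x) (-1) t := (hasDerivAt_id t).const_sub 1
          simpa using h1.fun_pow (b+1)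
        have hv : ∀ t ∈ Set.uIcc (0:ℝ) 1, HasDerivAt (fun x : ℝ => x ^ (a+1) / ((a:ℝ)+1))
            (t ^ a) t := by
          intro t _
          have h := (hasDerivAt_pow (a+1) t).div_const ((a:ℝ)+1)
          have e : (((a:ℝ)+1) * t ^ (a + 1 - 1)) / ((a:ℝ)+1) = t ^ a := by
            have : ((a:ℝ)+1) ≠ 0 := by positivity
            field_simp
            simp
          rwa [show ((a+1:ℕ):ℝ) = (a:ℝ)+1 by push_cast; ring, e] at h
        have hiu : IntervalIntegrable (fun t : ℝ => ((b:ℝ)+1) * (1 - t) ^ b * (-1)) volume 0 1 :=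
          (Continuous.intervalIntegrable (by continuity) _ _)
        have hiv : IntervalIntegrable (fun t : ℝ => t ^ a) volume 0 1 :=
          (Continuous.intervalIntegrable (by continuity) _ _)
        have := intervalIntegral.integral_mul_deriv_eq_deriv_mul hu hv hiu hiv
        simp only [sub_self, zero_pow (Nat.succ_ne_zero b), one_pow, zero_div, mul_zero,
          zero_mul, sub_zero, zero_sub, zero_pow] at this
        rw [this]
        rw [show (fun t : ℝ => ((b:ℝ)+1) * (1 - t) ^ b * (-1) * (t ^ (a+1) / ((a:ℝ)+1)))
            = (fun t : ℝ => (-(((b:ℝ)+1)/((a:ℝ)+1))) * (t ^ (a+1) * (1 - t) ^ b)) from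
          funext fun t => by field_simp]
        rw [intervalIntegral.integral_const_mul]
        ring
      calc ∫ t in (0:ℝ)..1, t ^ a * (1 - t) ^ (b+1)
          = ∫ t in (0:ℝ)..1, (1 - t) ^ (b+1) * t ^ a := by
            congr 1; funext t; ring
        _ = ((b:ℝ)+1)/((a:ℝ)+1) * ∫ t in (0:ℝ)..1, t ^ (a+1) * (1 - t) ^ b := key
        _ = (a.factorial * (b+1).factorial : ℝ) / (a + (b+1) + 1).factorial := by
            rw [ih (a+1)]
            have h1 : ((a+1) + b + 1) = (a + (b+1) + 1) := by ring
            rw [h1, show a + (b+1) + 1 = (a + b + 1) + 1 by ring]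
            rw [Nat.factorial_succ (a+b+1)]
            rw [show (a+1).factorial = (a+1) * a.factorial from Nat.factorial_succ a,
               show (b+1).factorial = (b+1) * b.factorial from Nat.factorial_succ b]
            have ha : ((a:ℝ)+1) ≠ 0 := by positivity
            have hb : ((a:ℝ)+(b:ℝ)+1+1) ≠ 0 := by positivity
            push_cast
            field_simp
lemma aux_lint_pow (a b : ℝ) (hab : a ≤ b) (m : ℕ) :
    ∫⁻ y in Set.Ioo a b, ENNReal.ofReal ((y - a) ^ m / (m.factorial : ℝ))
      = ENNReal.ofReal ((b - a) ^ (m + 1) / ((m + 1).factorial : ℝ)) := by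
  have hcont : Continuous fun y : ℝ => (y - a) ^ m / (m.factorial : ℝ) :=
    ((continuous_id.sub continuous_const).pow m).div_const _
  rw [← ofReal_integral_eq_lintegral_ofReal]
  · congr 1
    rw [← MeasureTheory.integral_Ioc_eq_integral_Ioo, ← intervalIntegral.integral_of_le hab,
      intervalIntegral.integral_div,
      intervalIntegral.integral_comp_sub_right (fun y => y ^ m) a, sub_self, integral_pow,
      Nat.factorial_succ]
    have h1 : ((m : ℝ) + 1) ≠ 0 := by positivity
    have h2 : (m.factorial : ℝ) ≠ 0 := Nat.cast_ne_zero.mpr m.factorial_ne_zero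
    push_cast
    rw [zero_pow (by omega : m + 1 ≠ 0)]
    field_simp
    simp
  · exact (hcont.integrableOn_Icc).mono_set Set.Ioo_subset_Icc_self
  · filter_upwards [ae_restrict_mem measurableSet_Ioo] with y hy
    have h : (0:ℝ) ≤ (y - a) ^ m := le_of_lt (pow_pos (sub_pos.mpr hy.1) m)
    exact div_nonneg h (by positivity)

lemma auxBlock_slice (k m : ℕ) (A : Set (Fin k → ℝ)) (a b : ℝ)
    (hA' : ∀ v ∈ A, ∀ p, v p ≤ a) (y : ℝ) :
    {v : Fin (k + m) → ℝ | Fin.snoc v y ∈ auxBlock k (m + 1) A a b}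
      = if y ∈ Set.Ioo a b then auxBlock k m A a y else ∅ := by
  have ecast : ∀ p : Fin k, Fin.castAdd (m + 1) p = Fin.castSucc (Fin.castAdd m p) :=
    fun p => Fin.ext rfl
  have esl : ∀ v : Fin (k + m) → ℝ,
      (Fin.snoc v y : Fin (k + (m + 1)) → ℝ) (Fin.last (k + m)) = y :=
    fun v => Fin.snoc_last _ _
  have esc : ∀ (v : Fin (k + m) → ℝ) (pp : Fin (k + m)),
      (Fin.snoc v y : Fin (k + (m + 1)) → ℝ) (Fin.castSucc pp) = v pp :=
    fun v pp => Fin.snoc_castSucc _ _ _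
  have ehead : ∀ v : Fin (k + m) → ℝ,
      (fun p : Fin k => (Fin.snoc v y : Fin (k + (m + 1)) → ℝ) (Fin.castAdd (m + 1) p))
        = fun p : Fin k => v (Fin.castAdd m p) :=
    fun v => funext fun p =>
      (congrArg (fun q => (Fin.snoc v y : Fin (k + (m + 1)) → ℝ) q) (ecast p)).trans
        (esc v (Fin.castAdd m p))
  by_cases hy : y ∈ Set.Ioo a b
  · rw [if_pos hy]
    ext v
    simp only [Set.mem_setOf_eq, auxBlock]
    constructor
    · rintro ⟨h1, h2, h3⟩
      refine ⟨Set.mem_of_eq_of_mem (ehead v).symm h1, ?_, ?_⟩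
      · intro p hp
        refine ⟨?_, ?_⟩
        · exact (h2 (Fin.castSucc p) (by simpa using hp)).1.trans_eq (esc v p)
        · exact ((esc v p).symm.trans_lt (h3 (Fin.castSucc p) (Fin.last (k + m))
            (by rw [Fin.val_last]; omega) (Fin.castSucc_lt_last p))).trans_eq (esl v)
      · intro p q hq hpq
        exact (esc v p).symm.trans_lt ((h3 (Fin.castSucc p) (Fin.castSucc q)
          (by simpa using hq) (by simpa using hpq)).trans_eq (esc v q))
    · rintro ⟨h1, h2, h3⟩
      have hhead : ∀ p : Fin (k + m), (p : ℕ) < k → v p ≤ a := by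
        intro p hp
        have h := hA' _ h1 ⟨(p : ℕ), hp⟩
        have e : Fin.castAdd m ⟨(p : ℕ), hp⟩ = p := Fin.ext rfl
        rwa [e] at h
      refine ⟨Set.mem_of_eq_of_mem (ehead v) h1, ?_, ?_⟩
      · intro p hp
        rcases Fin.eq_castSucc_or_eq_last p with ⟨pp, rfl⟩ | rfl
        · have h := h2 pp (by simpa using hp)
          exact Set.mem_of_eq_of_mem (esc v pp) ⟨h.1, h.2.trans hy.2⟩
        · exact Set.mem_of_eq_of_mem (esl v) hy
      · intro p q hq hpq
        rcases Fin.eq_castSucc_or_eq_last q with ⟨qq, rfl⟩ | rfl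
        · have hne : p ≠ Fin.last (k + m) := ne_of_lt (hpq.trans (Fin.castSucc_lt_last qq))
          obtain ⟨pp, rfl⟩ := Fin.exists_castSucc_eq.mpr hne
          have hpq' : pp < qq := by simpa using hpq
          have hval : v pp < v qq := by
            by_cases hk : k ≤ (pp : ℕ)
            · exact h3 pp qq (by simpa using hq) hpq'
            · exact lt_of_le_of_lt (hhead pp (by omega)) (h2 qq (by simpa using hq)).1
          exact (esc v pp).trans_lt (hval.trans_eq (esc v qq).symm)
        · have hne : p ≠ Fin.last (k + m) := ne_of_lt hpq
          obtain ⟨pp, rfl⟩ := Fin.exists_castSucc_eq.mpr hne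
          have hval : v pp < y := by
            by_cases hk : k ≤ (pp : ℕ)
            · exact (h2 pp hk).2
            · exact lt_of_le_of_lt (hhead pp (by omega)) hy.1
          exact (esc v pp).trans_lt (hval.trans_eq (esl v).symm)
  · rw [if_neg hy]
    ext v
    simp only [Set.mem_empty_iff_false, iff_false, Set.mem_setOf_eq, auxBlock]
    rintro ⟨-, h2, -⟩
    exact hy (Set.mem_of_eq_of_mem (esl v).symm
      (h2 (Fin.last (k + m)) (by rw [Fin.val_last]; omega)))

lemma auxBlock_volume (m : ℕ) : ∀ (k : ℕ) (A : Set (Fin k → ℝ)), MeasurableSet A →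
    ∀ (a b : ℝ), a ≤ b → (∀ v ∈ A, ∀ p, v p ≤ a) →
    volume (auxBlock k m A a b)
      = volume A * ENNReal.ofReal ((b - a) ^ m / (m.factorial : ℝ)) := by
  induction m with
  | zero =>
      intro k A hA a b hab hA'
      have h : auxBlock k 0 A a b = A := by
        ext x
        simp only [Set.mem_setOf_eq, auxBlock]
        constructor
        · rintro ⟨h1, -, -⟩
          have e : (fun p : Fin k => x (Fin.castAdd 0 p)) = x :=
            funext fun p => congrArg x (Fin.ext rfl)
          rwa [e] at h1
        · intro hx
          refine ⟨?_, ?_, ?_⟩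
          · have e : (fun p : Fin k => x (Fin.castAdd 0 p)) = x :=
              funext fun p => congrArg x (Fin.ext rfl)
            rwa [e]
          · intro p hp; exact absurd p.isLt (by omega)
          · intro p q hq hpq; exact absurd q.isLt (by omega)
      rw [h]
      simp
  | succ m ih =>
      intro k A hA a b hab hA'
      refine Eq.trans (aux_peel (k + m) (auxBlock k (m + 1) A a b)
        (auxBlock_meas _ _ _ _ _ hA)) ?_
      have hs : ∀ y : ℝ, volume {v : Fin (k + m) → ℝ | Fin.snoc v y ∈ auxBlock k (m + 1) A a b}
          = Set.indicator (Set.Ioo a b) (fun y => volume (auxBlock k m A a y)) y := by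
        intro y
        rw [auxBlock_slice k m A a b hA' y]
        by_cases hy : y ∈ Set.Ioo a b
        · rw [if_pos hy, Set.indicator_of_mem hy]
        · rw [if_neg hy, Set.indicator_of_notMem hy, measure_empty]
      simp only [hs]
      rw [lintegral_indicator measurableSet_Ioo]
      rw [setLIntegral_congr_fun measurableSet_Ioo
        (fun y (hy : y ∈ Set.Ioo a b) =>
          ih k A hA a y (le_of_lt hy.1) hA')]
      have hmeas : AEMeasurable (fun y : ℝ => ENNReal.ofReal ((y - a) ^ m / (m.factorial : ℝ)))
          (volume.restrict (Set.Ioo a b)) := by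
        apply Measurable.aemeasurable
        apply Measurable.ennreal_ofReal
        exact ((measurable_id.sub measurable_const).pow_const m).div_const _
      rw [lintegral_const_mul'' (volume A) hmeas, aux_lint_pow a b hab m]
lemma aux_simplex_meas (n : ℕ) (S : Set ℝ) (hS : MeasurableSet S) :
    MeasurableSet {x : Fin n → ℝ | StrictMono x ∧ ∀ p, x p ∈ S} := by
  have h1 : MeasurableSet {x : Fin n → ℝ | StrictMono x} := by
    have e : {x : Fin n → ℝ | StrictMono x}
        = ⋂ (p : Fin n) (q : Fin n), {x | p < q → x ∈ {x : Fin n → ℝ | x p < x q}} := by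
      ext x
      simp only [Set.mem_iInter, Set.mem_setOf_eq]
      exact ⟨fun h p q hpq => h hpq, fun h p q hpq => h p q hpq⟩
    rw [e]
    exact MeasurableSet.iInter fun p => MeasurableSet.iInter fun q =>
      aux_measurableSet_imp _ (measurableSet_lt (measurable_pi_apply p) (measurable_pi_apply q))
  have h2 : MeasurableSet {x : Fin n → ℝ | ∀ p, x p ∈ S} := by
    have e : {x : Fin n → ℝ | ∀ p, x p ∈ S} = ⋂ (p : Fin n), (fun x : Fin n → ℝ => x p) ⁻¹' S := by
      ext x; simp [Set.mem_iInter]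
    rw [e]
    exact MeasurableSet.iInter fun p => (measurable_pi_apply p) hS
  exact h1.inter h2

lemma aux_simplexIoo_volume : ∀ (n : ℕ) (a b : ℝ), a ≤ b →
    volume {x : Fin n → ℝ | StrictMono x ∧ ∀ p, x p ∈ Set.Ioo a b}
      = ENNReal.ofReal ((b - a) ^ n / (n.factorial : ℝ)) := by
  intro n
  induction n with
  | zero =>
      intro a b hab
      have e : {x : Fin 0 → ℝ | StrictMono x ∧ ∀ p, x p ∈ Set.Ioo a b} = Set.univ := by
        ext x
        simp only [Set.mem_setOf_eq, Set.mem_univ, iff_true]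
        exact ⟨fun p q h => p.elim0, fun p => p.elim0⟩
      rw [e, ← Set.pi_univ Set.univ, volume_pi, Measure.pi_pi]
      simp
  | succ n ih =>
      intro a b hab
      refine Eq.trans (aux_peel n {x : Fin (n+1) → ℝ | StrictMono x ∧ ∀ p, x p ∈ Set.Ioo a b}
        (aux_simplex_meas (n+1) _ measurableSet_Ioo)) ?_
      have hslice : ∀ y : ℝ,
          {v : Fin n → ℝ | Fin.snoc v y ∈ {x : Fin (n+1) → ℝ | StrictMono x ∧ ∀ p, x p ∈ Set.Ioo a b}}
            = if y ∈ Set.Ioo a b then {v : Fin n → ℝ | StrictMono v ∧ ∀ p, v p ∈ Set.Ioo a y}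
              else ∅ := by
        intro y
        have esl : ∀ v : Fin n → ℝ, (Fin.snoc v y : Fin (n + 1) → ℝ) (Fin.last n) = y :=
          fun v => Fin.snoc_last _ _
        have esc : ∀ (v : Fin n → ℝ) (pp : Fin n),
            (Fin.snoc v y : Fin (n + 1) → ℝ) (Fin.castSucc pp) = v pp :=
          fun v pp => Fin.snoc_castSucc _ _ _
        by_cases hy : y ∈ Set.Ioo a b
        · rw [if_pos hy]
          ext v
          simp only [Set.mem_setOf_eq]
          constructor
          · rintro ⟨hsm, hx⟩
            refine ⟨?_, ?_⟩
            · intro p q hpq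
              exact (esc v p).symm.trans_lt
                ((hsm (Fin.castSucc_lt_castSucc_iff.mpr hpq)).trans_eq (esc v q))
            · intro p
              refine ⟨(hx (Fin.castSucc p)).1.trans_le (esc v p).le, ?_⟩
              exact ((esc v p).symm.trans_lt (hsm (Fin.castSucc_lt_last p))).trans_eq (esl v)
          · rintro ⟨hsm, hv⟩
            refine ⟨?_, ?_⟩
            · intro p q hpq
              rcases Fin.eq_castSucc_or_eq_last q with ⟨qq, rfl⟩ | rfl
              · have hne : p ≠ Fin.last n := ne_of_lt (hpq.trans (Fin.castSucc_lt_last qq))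
                obtain ⟨pp, rfl⟩ := Fin.exists_castSucc_eq.mpr hne
                exact (esc v pp).trans_lt
                  ((hsm (Fin.castSucc_lt_castSucc_iff.mp hpq)).trans_eq (esc v qq).symm)
              · have hne : p ≠ Fin.last n := ne_of_lt hpq
                obtain ⟨pp, rfl⟩ := Fin.exists_castSucc_eq.mpr hne
                exact (esc v pp).trans_lt ((hv pp).2.trans_eq (esl v).symm)
            · intro p
              rcases Fin.eq_castSucc_or_eq_last p with ⟨pp, rfl⟩ | rfl
              · exact Set.mem_of_eq_of_mem (esc v pp) ⟨(hv pp).1, (hv pp).2.trans hy.2⟩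
              · exact Set.mem_of_eq_of_mem (esl v) hy
        · rw [if_neg hy]
          ext v
          simp only [Set.mem_empty_iff_false, iff_false, Set.mem_setOf_eq]
          rintro ⟨-, hx⟩
          exact hy (Set.mem_of_eq_of_mem (esl v).symm (hx (Fin.last n)))
      have hs : ∀ y : ℝ,
          volume {v : Fin n → ℝ | Fin.snoc v y
              ∈ {x : Fin (n+1) → ℝ | StrictMono x ∧ ∀ p, x p ∈ Set.Ioo a b}}
            = Set.indicator (Set.Ioo a b)
                (fun y => volume {v : Fin n → ℝ | StrictMono v ∧ ∀ p, v p ∈ Set.Ioo a y}) y := by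
        intro y
        rw [hslice y]
        by_cases hy : y ∈ Set.Ioo a b
        · rw [if_pos hy, Set.indicator_of_mem hy]
        · rw [if_neg hy, Set.indicator_of_notMem hy, measure_empty]
      simp only [hs]
      rw [lintegral_indicator measurableSet_Ioo]
      rw [setLIntegral_congr_fun measurableSet_Ioo
        (fun y (hy : y ∈ Set.Ioo a b) => ih a y (le_of_lt hy.1))]
      exact aux_lint_pow a b hab n

lemma aux_simplexIoc_volume (n : ℕ) (a b : ℝ) (hab : a ≤ b) :
    volume {x : Fin n → ℝ | StrictMono x ∧ ∀ p, x p ∈ Set.Ioc a b}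
      = ENNReal.ofReal ((b - a) ^ n / (n.factorial : ℝ)) := by
  refine le_antisymm ?_ ?_
  · have hsub : {x : Fin n → ℝ | StrictMono x ∧ ∀ p, x p ∈ Set.Ioc a b}
        ⊆ {x : Fin n → ℝ | StrictMono x ∧ ∀ p, x p ∈ Set.Ioo a b} ∪ ⋃ p, {x | x p = b} := by
      rintro x ⟨hsm, hx⟩
      by_cases h : ∀ p, x p < b
      · exact Or.inl ⟨hsm, fun p => ⟨(hx p).1, h p⟩⟩
      · push_neg at h
        obtain ⟨p, hp⟩ := h
        exact Or.inr (Set.mem_iUnion.mpr ⟨p, le_antisymm (hx p).2 hp⟩)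
    calc volume {x : Fin n → ℝ | StrictMono x ∧ ∀ p, x p ∈ Set.Ioc a b}
        ≤ volume ({x : Fin n → ℝ | StrictMono x ∧ ∀ p, x p ∈ Set.Ioo a b}
            ∪ ⋃ p, {x | x p = b}) := measure_mono hsub
      _ ≤ volume {x : Fin n → ℝ | StrictMono x ∧ ∀ p, x p ∈ Set.Ioo a b}
            + volume (⋃ p, {x : Fin n → ℝ | x p = b}) := measure_union_le _ _
      _ = ENNReal.ofReal ((b - a) ^ n / (n.factorial : ℝ)) := by
          rw [measure_iUnion_null (fun p => aux_hyper n p b),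
            aux_simplexIoo_volume n a b hab, add_zero]
  · rw [← aux_simplexIoo_volume n a b hab]
    exact measure_mono (fun x hx =>
      ⟨hx.1, fun p => Set.Ioo_subset_Ioc_self (hx.2 p)⟩)
lemma aux_peel_lint (n : ℕ) (S : Set (Fin (n + 1) → ℝ)) (hS : MeasurableSet S)
    (g : ℝ → ENNReal) (hg : Measurable g) :
    ∫⁻ x in S, g (x (Fin.last n)) ∂volume
      = ∫⁻ y : ℝ, volume {v : Fin n → ℝ | Fin.snoc v y ∈ S} * g y := by
  set e := MeasurableEquiv.piFinSuccAbove (fun _ : Fin (n + 1) => ℝ) (Fin.last n) with he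
  have hsnoc : ∀ (y : ℝ) (v : Fin n → ℝ), e.symm (y, v) = Fin.snoc v y := by
    intro y v
    simp [he, MeasurableEquiv.piFinSuccAbove, Fin.insertNthEquiv, Fin.insertNth_last']
  have hF : Measurable (fun x : Fin (n + 1) → ℝ =>
      S.indicator (fun x => g (x (Fin.last n))) x) :=
    (hg.comp (measurable_pi_apply _)).indicator hS
  have mp := (measurePreserving_piFinSuccAbove (fun _ : Fin (n + 1) => (volume : Measure ℝ))
      (Fin.last n)).symm
  calc ∫⁻ x in S, g (x (Fin.last n)) ∂volume
      = ∫⁻ x, S.indicator (fun x => g (x (Fin.last n))) x ∂volume :=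
        (lintegral_indicator hS _).symm
    _ = ∫⁻ x, S.indicator (fun x => g (x (Fin.last n))) x
          ∂(Measure.pi fun _ : Fin (n + 1) => volume) := by rw [← volume_pi]
    _ = ∫⁻ z : ℝ × (Fin n → ℝ), S.indicator (fun x => g (x (Fin.last n))) (e.symm z)
          ∂((volume : Measure ℝ).prod (Measure.pi fun _ : Fin n => volume)) :=
        (mp.lintegral_comp hF).symm
    _ = ∫⁻ y : ℝ, ∫⁻ v : Fin n → ℝ, S.indicator (fun x => g (x (Fin.last n))) (e.symm (y, v))
          ∂(Measure.pi fun _ : Fin n => volume) ∂(volume : Measure ℝ) :=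
        lintegral_prod _ ((hF.comp e.symm.measurable).aemeasurable)
    _ = ∫⁻ y : ℝ, volume {v : Fin n → ℝ | Fin.snoc v y ∈ S} * g y := by
        congr 1
        funext y
        have hsmeas : MeasurableSet {v : Fin n → ℝ | Fin.snoc v y ∈ S} := by
          have e1 : {v : Fin n → ℝ | Fin.snoc v y ∈ S} = (fun v => e.symm (y, v)) ⁻¹' S := by
            ext v; simp [hsnoc y v]
          rw [e1]
          exact (e.symm.measurable.comp measurable_prodMk_left) hS
        have hinner : ∀ v : Fin n → ℝ,
            S.indicator (fun x => g (x (Fin.last n))) (e.symm (y, v))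
              = Set.indicator {v : Fin n → ℝ | Fin.snoc v y ∈ S} (fun _ => g y) v := by
          intro v
          rw [hsnoc y v]
          by_cases hv : Fin.snoc v y ∈ S
          · rw [Set.indicator_of_mem hv, Set.indicator_of_mem (by exact hv)]
            exact congrArg g (Fin.snoc_last _ _)
          · rw [Set.indicator_of_notMem hv, Set.indicator_of_notMem (by exact hv)]
        simp only [hinner]
        rw [lintegral_indicator hsmeas, setLIntegral_const, ← volume_pi, mul_comm]

lemma aux_subst (α : ℝ) (hα : 1 < α) (m i : ℕ) (hi : 1 ≤ i) :
    ∫ y in (1:ℝ)..α, (y - 1) ^ m / y ^ (i + m + 1)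
      = ∫ t in (0:ℝ)..(1 - α⁻¹), t ^ m * (1 - t) ^ (i - 1) := by
  have hα0 : (0:ℝ) < α := lt_trans one_pos hα
  have hc0 : (0:ℝ) < 1 - α⁻¹ := by
    have : α⁻¹ < 1 := inv_lt_one_of_one_lt₀ hα
    linarith
  have hIcc : Set.uIcc (0:ℝ) (1 - α⁻¹) = Set.Icc 0 (1 - α⁻¹) := Set.uIcc_of_le hc0.le
  have hsub : ∀ t ∈ Set.uIcc (0:ℝ) (1 - α⁻¹), (0:ℝ) < 1 - t := by
    intro t ht
    rw [hIcc] at ht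
    have h1 : t ≤ 1 - α⁻¹ := ht.2
    have h2 : (0:ℝ) < α⁻¹ := inv_pos.mpr hα0
    linarith
  have hf : ∀ t ∈ Set.uIcc (0:ℝ) (1 - α⁻¹),
      HasDerivAt (fun t : ℝ => (1 - t)⁻¹) (1 / (1 - t) ^ 2) t := by
    intro t ht
    have h1 : HasDerivAt (fun t : ℝ => 1 - t) (-1) t := (hasDerivAt_id t).const_sub 1
    have h2 := h1.inv (ne_of_gt (hsub t ht))
    have h3 : -(-1) / (1 - t) ^ 2 = 1 / (1 - t) ^ 2 := by norm_num
    rwa [h3] at h2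
  have hf' : ContinuousOn (fun t : ℝ => 1 / (1 - t) ^ 2) (Set.uIcc (0:ℝ) (1 - α⁻¹)) := by
    apply ContinuousOn.div continuousOn_const
    · exact ((continuousOn_const.sub continuousOn_id).pow 2)
    · intro t ht
      exact pow_ne_zero _ (ne_of_gt (hsub t ht))
  have hg : ContinuousOn (fun y : ℝ => (y - 1) ^ m / y ^ (i + m + 1))
      ((fun t : ℝ => (1 - t)⁻¹) '' Set.uIcc (0:ℝ) (1 - α⁻¹)) := by
    intro y hy
    obtain ⟨t, ht, rfl⟩ := hy
    have hpos : (0:ℝ) < (1 - t)⁻¹ := inv_pos.mpr (hsub t ht)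
    exact (ContinuousAt.continuousWithinAt
      (((continuousAt_id.sub continuousAt_const).pow m).div
        (continuousAt_id.pow _) (pow_ne_zero _ (ne_of_gt hpos))))
  have key := intervalIntegral.integral_comp_smul_deriv' hf hf' hg
  have hfa : ((1:ℝ) - 0)⁻¹ = 1 := by norm_num
  have hfb : ((1:ℝ) - (1 - α⁻¹))⁻¹ = α := by
    rw [sub_sub_cancel, inv_inv]
  rw [hfa, hfb] at key
  rw [← key]
  apply intervalIntegral.integral_congr
  intro t ht
  have hu : (0:ℝ) < 1 - t := hsub t ht
  have hu0 : (1:ℝ) - t ≠ 0 := ne_of_gt hu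
  have e1 : (1 - t)⁻¹ - 1 = t / (1 - t) := by field_simp; ring
  show 1 / (1 - t) ^ 2 * (((1 - t)⁻¹ - 1) ^ m / ((1 - t)⁻¹) ^ (i + m + 1))
      = t ^ m * (1 - t) ^ (i - 1)
  rw [e1, div_pow, inv_pow, div_inv_eq_mul,
    show i + m + 1 = (i - 1) + m + 2 by omega, pow_add, pow_add]
  field_simp
lemma aux_main_slice (i m : ℕ) (hi : 1 ≤ i) (α : ℝ) (y : ℝ) :
    {v : Fin (i + m) → ℝ | Fin.snoc v y ∈
        {x : Fin (i + m + 1) → ℝ | StrictMono x ∧ 0 < x 0 ∧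
          (∀ p : Fin (i + m + 1), (p : ℕ) < i → x p ≤ 1) ∧
          (∀ p : Fin (i + m + 1), i ≤ (p : ℕ) → 1 < x p) ∧ x (Fin.last (i + m)) ≤ α}}
      = if y ∈ Set.Ioc 1 α
          then auxBlock i m {w : Fin i → ℝ | StrictMono w ∧ ∀ p, w p ∈ Set.Ioc 0 1} 1 y
          else ∅ := by
  have esl : ∀ v : Fin (i + m) → ℝ,
      (Fin.snoc v y : Fin (i + m + 1) → ℝ) (Fin.last (i + m)) = y :=
    fun v => Fin.snoc_last _ _
  have esc : ∀ (v : Fin (i + m) → ℝ) (pp : Fin (i + m)),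
      (Fin.snoc v y : Fin (i + m + 1) → ℝ) (Fin.castSucc pp) = v pp :=
    fun v pp => Fin.snoc_castSucc _ _ _
  by_cases hy : y ∈ Set.Ioc 1 α
  · rw [if_pos hy]
    ext v
    simp only [Set.mem_setOf_eq, auxBlock]
    constructor
    · rintro ⟨hsm, h0, h3, h4, h5⟩
      refine ⟨⟨?_, ?_⟩, ?_, ?_⟩
      · intro p q hpq
        have hlt : Fin.castSucc (Fin.castAdd m p) < Fin.castSucc (Fin.castAdd m q) := by
          rw [Fin.lt_def]
          simp only [Fin.coe_castSucc, Fin.coe_castAdd]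
          exact hpq
        exact (esc v _).symm.trans_lt ((hsm hlt).trans_eq (esc v _))
      · intro p
        constructor
        · have h00 : (0 : Fin (i + m + 1)) ≤ Fin.castSucc (Fin.castAdd m p) := Fin.zero_le _
          exact lt_of_lt_of_le h0 ((hsm.monotone h00).trans_eq (esc v _))
        · have h := h3 (Fin.castSucc (Fin.castAdd m p)) (by simpa using p.isLt)
          exact (esc v _).symm.trans_le h
      · intro p hp
        refine ⟨?_, ?_⟩
        · exact (h4 (Fin.castSucc p) (by simpa using hp)).trans_eq (esc v p)
        · exact ((esc v p).symm.trans_lt (hsm (Fin.castSucc_lt_last p))).trans_eq (esl v)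
      · intro p q hq hpq
        exact (esc v p).symm.trans_lt
          ((hsm (Fin.castSucc_lt_castSucc_iff.mpr hpq)).trans_eq (esc v q))
    · rintro ⟨⟨hwsm, hw⟩, h2, h3⟩
      have hhead1 : ∀ pp : Fin (i + m), (pp : ℕ) < i → v pp ∈ Set.Ioc 0 1 := by
        intro pp hp
        have h := hw ⟨(pp : ℕ), hp⟩
        have e : Fin.castAdd m ⟨(pp : ℕ), hp⟩ = pp := Fin.ext rfl
        rwa [e] at h
      have hsm : StrictMono (Fin.snoc v y : Fin (i + m + 1) → ℝ) := by
        intro p q hpq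
        rcases Fin.eq_castSucc_or_eq_last q with ⟨qq, rfl⟩ | rfl
        · have hne : p ≠ Fin.last (i + m) := ne_of_lt (hpq.trans (Fin.castSucc_lt_last qq))
          obtain ⟨pp, rfl⟩ := Fin.exists_castSucc_eq.mpr hne
          have hpq' : pp < qq := Fin.castSucc_lt_castSucc_iff.mp hpq
          have hval : v pp < v qq := by
            by_cases hk : i ≤ (qq : ℕ)
            · by_cases hk' : i ≤ (pp : ℕ)
              · exact h3 pp qq hk hpq'
              · exact lt_of_le_of_lt (hhead1 pp (by omega)).2 (h2 qq hk).1
            · have hvv := Fin.lt_def.mp hpq'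
              have hq' : (qq : ℕ) < i := by omega
              have hp' : (pp : ℕ) < i := by omega
              have h := hwsm (show (⟨(pp : ℕ), hp'⟩ : Fin i) < ⟨(qq : ℕ), hq'⟩ from
                Fin.mk_lt_mk.mpr hvv)
              have e1 : Fin.castAdd m (⟨(pp : ℕ), hp'⟩ : Fin i) = pp := Fin.ext rfl
              have e2 : Fin.castAdd m (⟨(qq : ℕ), hq'⟩ : Fin i) = qq := Fin.ext rfl
              simp only at h
              rwa [e1, e2] at h
          exact (esc v pp).trans_lt (hval.trans_eq (esc v qq).symm)
        · have hne : p ≠ Fin.last (i + m) := ne_of_lt hpq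
          obtain ⟨pp, rfl⟩ := Fin.exists_castSucc_eq.mpr hne
          have hval : v pp < y := by
            by_cases hk : i ≤ (pp : ℕ)
            · exact (h2 pp hk).2
            · exact lt_of_le_of_lt (hhead1 pp (by omega)).2 hy.1
          exact (esc v pp).trans_lt (hval.trans_eq (esl v).symm)
      refine ⟨hsm, ?_, ?_, ?_, ?_⟩
      · have h0lt : 0 < i + m := by omega
        have e0 : (0 : Fin (i + m + 1)) = Fin.castSucc (⟨0, h0lt⟩ : Fin (i + m)) :=
          Fin.ext (by simp)
        rw [e0]
        exact lt_of_lt_of_le (hhead1 ⟨0, h0lt⟩ hi).1 (esc v ⟨0, h0lt⟩).ge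
      · intro p hp
        have hne : p ≠ Fin.last (i + m) := by
          intro h; subst h; rw [Fin.val_last] at hp; omega
        obtain ⟨pp, rfl⟩ := Fin.exists_castSucc_eq.mpr hne
        exact (esc v pp).le.trans (hhead1 pp (by simpa using hp)).2
      · intro p hp
        rcases Fin.eq_castSucc_or_eq_last p with ⟨pp, rfl⟩ | rfl
        · exact (h2 pp (by simpa using hp)).1.trans_eq (esc v pp).symm
        · exact hy.1.trans_eq (esl v).symm
      · exact (esl v).trans_le hy.2
  · rw [if_neg hy]
    ext v
    simp only [Set.mem_empty_iff_false, iff_false, Set.mem_setOf_eq]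
    rintro ⟨hsm, h0, h3, h4, h5⟩
    apply hy
    constructor
    · exact (h4 (Fin.last (i + m)) (by rw [Fin.val_last]; omega)).trans_eq (esl v)
    · exact (esl v).symm.trans_le h5

theorem muN_Bi_gtN (θ : ℝ) (hθ : 0 < θ) (α : ℝ) (hα : 1 < α)
    (N i : ℕ) (hi : 1 ≤ i) (hiN : i ≤ N) :
    muN θ N
      {x : Fin (N + 1) → ℝ |
        StrictMono x ∧ 0 < x 0 ∧
        (∀ p : Fin (N + 1), (p : ℕ) < i → x p ≤ 1) ∧
        (∀ p : Fin (N + 1), i ≤ (p : ℕ) → 1 < x p) ∧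
        x (Fin.last N) ≤ α} =
      ENNReal.ofReal (θ / i * regIncBeta (1 - α⁻¹) (N - i + 1) i) := by
  obtain ⟨m, rfl⟩ : ∃ m, N = i + m := ⟨N - i, by omega⟩
  rw [show i + m - i + 1 = m + 1 from by omega]
  set B : Set (Fin (i + m + 1) → ℝ) :=
    {x : Fin (i + m + 1) → ℝ | StrictMono x ∧ 0 < x 0 ∧
      (∀ p : Fin (i + m + 1), (p : ℕ) < i → x p ≤ 1) ∧
      (∀ p : Fin (i + m + 1), i ≤ (p : ℕ) → 1 < x p) ∧
      x (Fin.last (i + m)) ≤ α} with hBdef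
  have hBmeas : MeasurableSet B := by
    rw [hBdef]
    have h3 : MeasurableSet {x : Fin (i + m + 1) → ℝ |
        ∀ p : Fin (i + m + 1), (p : ℕ) < i → x p ≤ 1} := by
      have e : {x : Fin (i + m + 1) → ℝ | ∀ p : Fin (i + m + 1), (p : ℕ) < i → x p ≤ 1}
          = ⋂ p : Fin (i + m + 1), {x | (p : ℕ) < i → x ∈ {x : Fin (i + m + 1) → ℝ | x p ∈ Set.Iic 1}} := by
        ext x; simp [Set.mem_iInter]
      rw [e]
      exact MeasurableSet.iInter fun p =>
        aux_measurableSet_imp _ ((measurable_pi_apply p) measurableSet_Iic)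
    have h4 : MeasurableSet {x : Fin (i + m + 1) → ℝ |
        ∀ p : Fin (i + m + 1), i ≤ (p : ℕ) → 1 < x p} := by
      have e : {x : Fin (i + m + 1) → ℝ | ∀ p : Fin (i + m + 1), i ≤ (p : ℕ) → 1 < x p}
          = ⋂ p : Fin (i + m + 1), {x | i ≤ (p : ℕ) → x ∈ {x : Fin (i + m + 1) → ℝ | x p ∈ Set.Ioi 1}} := by
        ext x; simp [Set.mem_iInter]
      rw [e]
      exact MeasurableSet.iInter fun p =>
        aux_measurableSet_imp _ ((measurable_pi_apply p) measurableSet_Ioi)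
    have h1 : MeasurableSet {x : Fin (i + m + 1) → ℝ | StrictMono x} := by
      have e : {x : Fin (i + m + 1) → ℝ | StrictMono x}
          = ⋂ (p : Fin (i + m + 1)) (q : Fin (i + m + 1)),
              {x | p < q → x ∈ {x : Fin (i + m + 1) → ℝ | x p < x q}} := by
        ext x
        simp only [Set.mem_iInter, Set.mem_setOf_eq]
        exact ⟨fun h p q hpq => h hpq, fun h p q hpq => h p q hpq⟩
      rw [e]
      exact MeasurableSet.iInter fun p => MeasurableSet.iInter fun q =>
        aux_measurableSet_imp _ (measurableSet_lt (measurable_pi_apply p) (measurable_pi_apply q))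
    exact h1.inter (((measurable_pi_apply 0) measurableSet_Ioi).inter
      (h3.inter (h4.inter ((measurable_pi_apply (Fin.last (i + m))) measurableSet_Iic))))
  have hBC : B ⊆ coneX (i + m) := by
    rintro x ⟨hsm, h0, -, -, -⟩
    exact ⟨fun j' => lt_of_lt_of_le h0 (hsm.monotone (Fin.zero_le j')), hsm.monotone⟩
  unfold muN
  rw [withDensity_apply _ hBmeas, Measure.restrict_restrict hBmeas, Set.inter_eq_left.mpr hBC]
  have hg : Measurable (fun y : ℝ =>
      ENNReal.ofReal (θ * ((i + m).factorial : ℝ) / y ^ (i + m + 1))) :=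
    (measurable_const.div (measurable_id.pow_const _)).ennreal_ofReal
  refine Eq.trans (aux_peel_lint (i + m) B hBmeas
    (fun y => ENNReal.ofReal (θ * ((i + m).factorial : ℝ) / y ^ (i + m + 1))) hg) ?_
  have hAvol : volume {w : Fin i → ℝ | StrictMono w ∧ ∀ p, w p ∈ Set.Ioc 0 1}
      = ENNReal.ofReal (1 / (i.factorial : ℝ)) := by
    have h := aux_simplexIoc_volume i 0 1 zero_le_one
    rw [show ((1:ℝ) - 0) = 1 from by norm_num, one_pow] at h
    exact h
  have hvol : ∀ y : ℝ, volume {v : Fin (i + m) → ℝ | Fin.snoc v y ∈ B}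
      = Set.indicator (Set.Ioc 1 α)
          (fun y => ENNReal.ofReal (1 / (i.factorial : ℝ))
            * ENNReal.ofReal ((y - 1) ^ m / (m.factorial : ℝ))) y := by
    intro y
    rw [hBdef, aux_main_slice i m hi α y]
    by_cases hy : y ∈ Set.Ioc 1 α
    · rw [if_pos hy, Set.indicator_of_mem hy,
        auxBlock_volume m i {w : Fin i → ℝ | StrictMono w ∧ ∀ p, w p ∈ Set.Ioc 0 1}
          (aux_simplex_meas i _ measurableSet_Ioc) 1 y hy.1.le (fun v hv p => (hv.2 p).2),
        hAvol]
    · rw [if_neg hy, Set.indicator_of_notMem hy, measure_empty]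
  have hcomb : (fun y : ℝ => volume {v : Fin (i + m) → ℝ | Fin.snoc v y ∈ B}
        * ENNReal.ofReal (θ * ((i + m).factorial : ℝ) / y ^ (i + m + 1)))
      = fun y : ℝ => Set.indicator (Set.Ioc 1 α)
          (fun y => ENNReal.ofReal ((1 / (i.factorial : ℝ)) * ((y - 1) ^ m / (m.factorial : ℝ))
            * (θ * ((i + m).factorial : ℝ) / y ^ (i + m + 1)))) y := by
    funext y
    rw [hvol y]
    by_cases hy : y ∈ Set.Ioc 1 α
    · have hy1 : (0:ℝ) ≤ y - 1 := by linarith [hy.1]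
      rw [Set.indicator_of_mem hy, Set.indicator_of_mem hy,
        ← ENNReal.ofReal_mul (by positivity : (0:ℝ) ≤ 1 / (i.factorial : ℝ)),
        ← ENNReal.ofReal_mul (by positivity : (0:ℝ) ≤ 1 / (i.factorial : ℝ) * ((y - 1) ^ m / (m.factorial : ℝ)))]
    · rw [Set.indicator_of_notMem hy, Set.indicator_of_notMem hy, zero_mul]
  rw [hcomb, lintegral_indicator measurableSet_Ioc]
  have ha0 : ∀ y ∈ Set.Icc (1:ℝ) α, y ≠ 0 :=
    fun y hy => ne_of_gt (lt_of_lt_of_le zero_lt_one hy.1)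
  have hcont : ContinuousOn (fun y : ℝ =>
      (1 / (i.factorial : ℝ)) * ((y - 1) ^ m / (m.factorial : ℝ))
        * (θ * ((i + m).factorial : ℝ) / y ^ (i + m + 1))) (Set.Icc 1 α) := by
    apply ContinuousOn.mul
    · exact continuousOn_const.mul (((continuousOn_id.sub continuousOn_const).pow m).div_const _)
    · exact continuousOn_const.div (continuousOn_id.pow _)
        (fun y hy => pow_ne_zero _ (ha0 y hy))
  have hint : IntegrableOn (fun y : ℝ =>
      (1 / (i.factorial : ℝ)) * ((y - 1) ^ m / (m.factorial : ℝ))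
        * (θ * ((i + m).factorial : ℝ) / y ^ (i + m + 1))) (Set.Ioc 1 α) volume :=
    (hcont.integrableOn_Icc).mono_set Set.Ioc_subset_Icc_self
  have hnn : 0 ≤ᵐ[volume.restrict (Set.Ioc 1 α)] fun y : ℝ =>
      (1 / (i.factorial : ℝ)) * ((y - 1) ^ m / (m.factorial : ℝ))
        * (θ * ((i + m).factorial : ℝ) / y ^ (i + m + 1)) := by
    filter_upwards [ae_restrict_mem measurableSet_Ioc] with y hy
    have h1 : (0:ℝ) ≤ y - 1 := by linarith [hy.1]
    have h2 : (0:ℝ) < y := lt_trans zero_lt_one hy.1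
    positivity
  rw [← ofReal_integral_eq_lintegral_ofReal hint hnn]
  congr 1
  rw [← intervalIntegral.integral_of_le hα.le]
  rw [show (fun y : ℝ =>
        (1 / (i.factorial : ℝ)) * ((y - 1) ^ m / (m.factorial : ℝ))
          * (θ * ((i + m).factorial : ℝ) / y ^ (i + m + 1)))
      = fun y : ℝ => (θ * ((i + m).factorial : ℝ) / ((i.factorial : ℝ) * (m.factorial : ℝ)))
          * ((y - 1) ^ m / y ^ (i + m + 1)) from funext fun y => by ring]
  rw [intervalIntegral.integral_const_mul, aux_subst α hα m i hi]
  rw [regIncBeta]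
  simp only [Nat.add_sub_cancel]
  rw [aux_beta_nat (i - 1) m]
  rw [show m + (i - 1) + 1 = i + m from by omega]
  obtain ⟨j, rfl⟩ : ∃ j, i = j + 1 := ⟨i - 1, by omega⟩
  simp only [Nat.add_sub_cancel]
  have h1 : (((j + 1).factorial : ℕ) : ℝ) = ((j:ℝ) + 1) * (j.factorial : ℝ) := by
    rw [Nat.factorial_succ]; push_cast; ring
  have hjne : ((j:ℝ) + 1) ≠ 0 := by positivity
  have hfj : (j.factorial : ℝ) ≠ 0 := Nat.cast_ne_zero.mpr j.factorial_ne_zero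
  have hfm : (m.factorial : ℝ) ≠ 0 := Nat.cast_ne_zero.mpr m.factorial_ne_zero
  have hfjm : (((j + 1) + m).factorial : ℝ) ≠ 0 :=
    Nat.cast_ne_zero.mpr (Nat.factorial_ne_zero _)
  rw [h1]
  push_cast
  field_simp
end

section
/- For fixed i ≥ 1 and α > 1, the series ∑_{j=i}^∞ (θ/j)·C(j,i)·α^{-i}·(1-α^{-1})^{j-i} converges and equals θ/i. -/
open Finset

theorem lambda_row_sum (θ : ℝ) (hθ : 0 < θ) (α : ℝ) (hα : 1 < α) (i : ℕ) (hi : 1 ≤ i) :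
    HasSum
      (fun j : ℕ =>
        if i ≤ j then θ / j * (Nat.choose j i : ℝ) * α⁻¹ ^ i * (1 - α⁻¹) ^ (j - i) else 0)
      (θ / i) := by
  obtain ⟨m, rfl⟩ : ∃ m, i = m + 1 := ⟨i - 1, by omega⟩
  set p : ℝ := α⁻¹ with hp
  have hp0 : 0 < p := inv_pos.2 (lt_trans one_pos hα)
  have hp1 : p < 1 := inv_lt_one_of_one_lt₀ hα
  set q : ℝ := 1 - p with hq
  have hq0 : 0 ≤ q := by simp [hq]; linarith
  have hqn : ‖q‖ < 1 := by
    rw [Real.norm_eq_abs, abs_of_nonneg hq0]; linarith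
  have h1 := hasSum_choose_mul_geometric_of_norm_lt_one m hqn
  have h2 := h1.mul_left (θ / (m + 1) * p ^ (m + 1))
  have h1q : 1 - q = p := by ring
  have key : HasSum (fun n : ℕ =>
      (fun j : ℕ =>
        if m + 1 ≤ j then θ / j * (Nat.choose j (m + 1) : ℝ) * p ^ (m + 1) * q ^ (j - (m + 1))
        else 0) (n + (m + 1))) (θ / (m + 1)) := by
    have heq : ∀ n : ℕ,
        (if m + 1 ≤ n + (m + 1) then θ / (n + (m + 1) : ℕ) *
          (Nat.choose (n + (m + 1)) (m + 1) : ℝ) * p ^ (m + 1) * q ^ ((n + (m + 1)) - (m + 1))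
          else 0)
        = θ / (m + 1) * p ^ (m + 1) * ((Nat.choose (n + m) m : ℝ) * q ^ n) := by
      intro n
      rw [if_pos (by omega)]
      have hnat : ((n + m) + 1) * Nat.choose (n + m) m = Nat.choose ((n + m) + 1) (m + 1) * (m + 1) :=
        Nat.add_one_mul_choose_eq (n + m) m
      have hcast : ((n : ℝ) + (m + 1)) * (Nat.choose (n + m) m : ℝ) =
          (Nat.choose (n + m + 1) (m + 1) : ℝ) * (m + 1) := by
        have := congrArg (Nat.cast : ℕ → ℝ) hnat
        push_cast at this ⊢
        linarith [this]
      have hne : (n : ℝ) + (m + 1) ≠ 0 := by positivity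
      have hme : ((m : ℝ) + 1) ≠ 0 := by positivity
      have hse : (n + (m + 1)) - (m + 1) = n := by omega
      rw [hse]
      have heq2 : θ / ((n : ℝ) + ((m : ℝ) + 1)) * ((Nat.choose (n + m + 1) (m + 1) : ℕ) : ℝ)
          = θ / ((m : ℝ) + 1) * ((Nat.choose (n + m) m : ℕ) : ℝ) := by
        rw [div_mul_eq_mul_div, div_mul_eq_mul_div, div_eq_div_iff (by positivity) (by positivity)]
        linear_combination -θ * hcast
      push_cast [show n + (m + 1) = n + m + 1 by omega] at heq2 ⊢
      linear_combination (p ^ (m + 1) * q ^ n) * heq2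
    rw [funext heq]
    convert h2 using 1
    · rfl
    rw [h1q]
    field_simp
  have hz : ∀ x ∈ Finset.range (m + 1),
      (if m + 1 ≤ x then θ / x * (Nat.choose x (m + 1) : ℝ) * p ^ (m + 1) * q ^ (x - (m + 1))
        else 0) = 0 := by
    intro x hx
    rw [if_neg (by simp at hx; omega)]
  apply (hasSum_nat_add_iff' (m + 1)).mp
  rw [Finset.sum_congr rfl hz]
  simpa using key
end

section
/- Let 0 < t₁ < ... < t_r and 0 ≤ x₁ ≤ ... ≤ x_r with x_m < t_m for each m. Define U_m = (0, x_m] × (t_m, ∞). Then μ^(1)(⋃_{m=1}^r U_m) = θ ∑_{m=1}^r x_m (t_m^{-1} - t_{m+1}^{-1}), with the convention t_{r+1} = ∞ and ∞^{-1} = 0. -/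
open MeasureTheory Finset
open scoped ENNReal

lemma int_Ioc_aux (θ b c : ℝ) (hb : 0 < b) (hbc : b ≤ c) :
    ∫ y in Set.Ioc b c, θ / y ^ 2 = θ * (b⁻¹ - c⁻¹) := by
  rw [← intervalIntegral.integral_of_le hbc]
  have key : ∫ y in b..c, θ / y ^ 2 = (fun y : ℝ => -(θ * y⁻¹)) c - (fun y : ℝ => -(θ * y⁻¹)) b := by
    apply intervalIntegral.integral_eq_sub_of_hasDerivAt
    · intro y hy
      rw [Set.uIcc_of_le hbc] at hy
      have hy0 : y ≠ 0 := by nlinarith [hy.1]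
      have h1 : HasDerivAt (fun y : ℝ => y⁻¹) (-(y ^ 2)⁻¹) y := hasDerivAt_inv hy0
      have := ((h1.const_mul θ).neg)
      convert this using 1
      · funext z; rfl
      · ring
    · apply ContinuousOn.intervalIntegrable
      apply ContinuousOn.div continuousOn_const (by fun_prop)
      intro y hy
      rw [Set.uIcc_of_le hbc] at hy
      have : 0 < y := lt_of_lt_of_le hb hy.1
      positivity
  rw [key]; ring

lemma lint_Ioc_aux (θ b c : ℝ) (hθ : 0 ≤ θ) (hb : 0 < b) (hbc : b ≤ c) :
    ∫⁻ y in Set.Ioc b c, ENNReal.ofReal (θ / y ^ 2) = ENNReal.ofReal (θ * (b⁻¹ - c⁻¹)) := by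
  rw [← int_Ioc_aux θ b c hb hbc]
  rw [← MeasureTheory.ofReal_integral_eq_lintegral_ofReal]
  · apply IntegrableOn.mono_set ?_ Set.Ioc_subset_Icc_self
    apply ContinuousOn.integrableOn_compact isCompact_Icc
    apply ContinuousOn.div continuousOn_const (by fun_prop)
    intro y hy
    have : 0 < y := lt_of_lt_of_le hb hy.1
    positivity
  · filter_upwards [ae_restrict_mem measurableSet_Ioc] with y hy
    have : 0 < y := lt_of_lt_of_le hb hy.1.le
    positivity

lemma lint_Ioi_aux (θ b : ℝ) (hθ : 0 ≤ θ) (hb : 0 < b) :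
    ∫⁻ y in Set.Ioi b, ENNReal.ofReal (θ / y ^ 2) = ENNReal.ofReal (θ * b⁻¹) := by
  have hint : IntegrableOn (fun y : ℝ => y ^ (-2 : ℝ)) (Set.Ioi b) :=
    integrableOn_Ioi_rpow_of_lt (by norm_num) hb
  have hval : ∫ y in Set.Ioi b, y ^ (-2 : ℝ) = b⁻¹ := by
    rw [integral_Ioi_rpow_of_lt (by norm_num) hb]
    rw [show (-2 : ℝ) + 1 = -1 by norm_num, Real.rpow_neg_one]
    field_simp
  have hcong : ∀ y ∈ Set.Ioi b, θ / y ^ 2 = θ * y ^ (-2 : ℝ) := by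
    intro y hy
    have hy0 : 0 < y := lt_trans hb hy
    rw [Real.rpow_neg hy0.le, show (2:ℝ) = ((2:ℕ):ℝ) by norm_num, Real.rpow_natCast]
    field_simp
  rw [setLIntegral_congr_fun measurableSet_Ioi
    (fun y hy => by rw [hcong y hy])]
  rw [← MeasureTheory.ofReal_integral_eq_lintegral_ofReal (hint.const_mul θ)]
  · rw [integral_const_mul, hval]
  · filter_upwards [ae_restrict_mem measurableSet_Ioi] with y hy
    have : 0 < y := lt_trans hb hy
    positivity

lemma muN_rect (θ : ℝ) (a : ℝ) (B : Set ℝ) (hB : MeasurableSet B)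
    (hBa : ∀ y ∈ B, a ≤ y) (hB0 : ∀ y ∈ B, 0 < y) :
    muN θ 1 {p : Fin 2 → ℝ | (0 < p 0 ∧ p 0 ≤ a) ∧ p 1 ∈ B} =
      ENNReal.ofReal a * ∫⁻ y in B, ENNReal.ofReal (θ / y ^ 2) := by
  set S : Set (Fin 2 → ℝ) := {p : Fin 2 → ℝ | (0 < p 0 ∧ p 0 ≤ a) ∧ p 1 ∈ B} with hS
  have hSpre : S = (MeasurableEquiv.finTwoArrow (α := ℝ)) ⁻¹' (Set.Ioc 0 a ×ˢ B) := by
    ext p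
    simp [S, MeasurableEquiv.finTwoArrow, Set.mem_prod, and_assoc]
  have hSm : MeasurableSet S := by
    rw [hSpre]
    exact (MeasurableEquiv.finTwoArrow (α := ℝ)).measurable ((measurableSet_Ioc).prod hB)
  have hsub : S ⊆ coneX 1 := by
    rintro p ⟨⟨h0, h1⟩, h2⟩
    have hp1 : 0 < p 1 := hB0 _ h2
    have hle : p 0 ≤ p 1 := h1.trans (hBa _ h2)
    refine ⟨fun i => ?_, ?_⟩
    · fin_cases i <;> assumption
    · intro i j hij
      fin_cases i <;> fin_cases j <;> simp_all
  rw [muN, withDensity_apply _ hSm, Measure.restrict_restrict hSm, Set.inter_eq_left.mpr hsub]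
  have hlast : (Fin.last 1) = (1 : Fin 2) := rfl
  have : ∫⁻ p in S, ENNReal.ofReal (θ * (1:ℕ).factorial / (p (Fin.last 1)) ^ (1 + 1)) ∂volume
      = ∫⁻ q in Set.Ioc 0 a ×ˢ B, ENNReal.ofReal (θ / q.2 ^ 2) ∂(volume : Measure (ℝ × ℝ)) := by
    rw [hSpre]
    have := (volume_preserving_finTwoArrow ℝ).setLIntegral_comp_preimage_emb
      (MeasurableEquiv.finTwoArrow (α := ℝ)).measurableEmbedding
      (fun q : ℝ × ℝ => ENNReal.ofReal (θ / q.2 ^ 2)) (Set.Ioc 0 a ×ˢ B)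
    rw [← this]
    congr 1
    ext p
    simp [MeasurableEquiv.finTwoArrow, hlast, Nat.factorial]
  rw [this]
  have hvol : (volume : Measure (ℝ × ℝ)) = (volume : Measure ℝ).prod volume := rfl
  rw [hvol, ← Measure.prod_restrict]
  rw [MeasureTheory.lintegral_prod _ (by fun_prop)]
  simp only [lintegral_const]
  rw [Measure.restrict_apply_univ, Real.volume_Ioc, sub_zero, mul_comm]

theorem mu1_union_Um (θ : ℝ) (hθ : 0 < θ) (r : ℕ) (hr : 1 ≤ r)
    (t x : Fin r → ℝ) (ht : StrictMono t) (ht0 : ∀ m, 0 < t m)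
    (hx : Monotone x) (hx0 : ∀ m, 0 ≤ x m) (hxt : ∀ m, x m < t m) :
    muN θ 1
      (⋃ m : Fin r, {p : Fin 2 → ℝ | 0 < p 0 ∧ p 0 ≤ x m ∧ t m < p 1}) =
      ENNReal.ofReal (θ * ∑ m : Fin r,
        x m * ((t m)⁻¹ -
          (if h : (m : ℕ) + 1 < r then (t ⟨(m : ℕ) + 1, h⟩)⁻¹ else 0))) := by
  -- the "next" inverse and the staircase y-intervals
  set ninv : Fin r → ℝ :=
    fun m => if h : (m : ℕ) + 1 < r then (t ⟨(m : ℕ) + 1, h⟩)⁻¹ else 0 with hninv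
  set Bset : Fin r → Set ℝ :=
    fun m => if h : (m : ℕ) + 1 < r then Set.Ioc (t m) (t ⟨(m : ℕ) + 1, h⟩)
      else Set.Ioi (t m) with hBset
  set V : Fin r → Set (Fin 2 → ℝ) :=
    fun m => {p : Fin 2 → ℝ | (0 < p 0 ∧ p 0 ≤ x m) ∧ p 1 ∈ Bset m} with hV
  have hBsub : ∀ m, Bset m ⊆ Set.Ioi (t m) := by
    intro m y hy
    simp only [hBset] at hy
    split_ifs at hy with h
    · exact hy.1
    · exact hy
  have hBmeas : ∀ m, MeasurableSet (Bset m) := by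
    intro m
    simp only [hBset]
    split_ifs <;> measurability
  -- the unions coincide
  have hUV : (⋃ m : Fin r, {p : Fin 2 → ℝ | 0 < p 0 ∧ p 0 ≤ x m ∧ t m < p 1}) =
      ⋃ m : Fin r, V m := by
    ext p
    simp only [Set.mem_iUnion, Set.mem_setOf_eq]
    constructor
    · rintro ⟨m, hp0, hpx, hpt⟩
      set F : Finset (Fin r) := Finset.univ.filter (fun k => t k < p 1) with hF
      have hmF : m ∈ F := by simp [hF, hpt]
      have hFne : F.Nonempty := ⟨m, hmF⟩
      set k := F.max' hFne with hk
      have hkF : k ∈ F := F.max'_mem hFne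
      have hkt : t k < p 1 := by simpa [hF] using hkF
      have hmk : m ≤ k := F.le_max' m hmF
      refine ⟨k, ⟨hp0, hpx.trans (hx hmk)⟩, ?_⟩
      simp only [hBset]
      split_ifs with h
      · refine ⟨hkt, ?_⟩
        by_contra hc
        push_neg at hc
        have : (⟨(k : ℕ) + 1, h⟩ : Fin r) ∈ F := by simp [hF, hc]
        have := F.le_max' _ this
        rw [← hk] at this
        exact absurd this (by simp [Fin.le_def])
      · exact hkt
    · rintro ⟨m, ⟨hp0, hpx⟩, hpB⟩
      exact ⟨m, hp0, hpx, hBsub m hpB⟩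
  -- pieces are pairwise disjoint
  have hdisj : Pairwise (Function.onFun Disjoint V) := by
    intro m k hmk
    wlog hlt : m < k generalizing m k
    · exact (this hmk.symm (hmk.lt_or_gt.resolve_left hlt)).symm
    rw [Function.onFun, Set.disjoint_left]
    rintro p ⟨⟨-, -⟩, hpB⟩ ⟨⟨-, -⟩, hpB'⟩
    have h1 : (m : ℕ) + 1 < r := lt_of_le_of_lt (Nat.succ_le_of_lt hlt) k.isLt
    simp only [hBset, dif_pos h1] at hpB
    have h2 : t (⟨(m : ℕ) + 1, h1⟩ : Fin r) ≤ t k := ht.monotone (by simpa [Fin.le_def] using hlt)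
    have h3 : t k < p 1 := hBsub k hpB'
    linarith [hpB.2]
  have hVmeas : ∀ m, MeasurableSet (V m) := by
    intro m
    have : V m = (fun p : Fin 2 → ℝ => p 0) ⁻¹' (Set.Ioc 0 (x m)) ∩
        (fun p : Fin 2 → ℝ => p 1) ⁻¹' (Bset m) := by
      ext p; simp [hV, Set.mem_Ioc, and_assoc]
    rw [this]
    exact ((measurable_pi_apply 0) measurableSet_Ioc).inter
      ((measurable_pi_apply 1) (hBmeas m))
  -- measure of each piece
  have hpiece : ∀ m, muN θ 1 (V m) = ENNReal.ofReal (x m * (θ * ((t m)⁻¹ - ninv m))) := by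
    intro m
    rw [hV]
    rw [muN_rect θ (x m) (Bset m) (hBmeas m)
      (fun y hy => ((hxt m).trans (hBsub m hy)).le)
      (fun y hy => (ht0 m).trans (hBsub m hy))]
    have : ∫⁻ y in Bset m, ENNReal.ofReal (θ / y ^ 2)
        = ENNReal.ofReal (θ * ((t m)⁻¹ - ninv m)) := by
      simp only [hBset, hninv]
      split_ifs with h
      · exact lint_Ioc_aux θ _ _ hθ.le (ht0 m) (ht (by simp [Fin.lt_def])).le
      · rw [lint_Ioi_aux θ _ hθ.le (ht0 m), sub_zero]
    rw [this, ← ENNReal.ofReal_mul (hx0 m)]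
  rw [hUV, measure_iUnion hdisj hVmeas, tsum_fintype]
  simp_rw [hpiece]
  rw [← ENNReal.ofReal_sum_of_nonneg]
  · congr 1
    rw [Finset.mul_sum]
    exact Finset.sum_congr rfl fun m _ => by rw [hninv]; ring
  · intro m _
    have hd : 0 ≤ (t m)⁻¹ - ninv m := by
      simp only [hninv]
      split_ifs with h
      · have := ht (show m < ⟨(m : ℕ) + 1, h⟩ by simp [Fin.lt_def])
        have := inv_anti₀ (ht0 m) this.le
        linarith
      · simp [inv_nonneg, (ht0 m).le]
    have := hx0 m
    positivity
end

section
/- The function f(s,t) = (θ/(s+t)²)·(1 + t/δ)^{-θ} on the region {s ≥ δ, t ≥ 0} is a probability density: ∫_δ^∞ ∫_0^∞ f(s,t) dt ds = 1. -/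
open MeasureTheory
open MeasureTheory Set Filter Real Topology

lemma helperA (δ : ℝ) (hδ : 0 < δ) (t : ℝ) (ht : 0 ≤ t) :
    IntegrableOn (fun s : ℝ => ((s + t) ^ 2)⁻¹) (Ioi δ) ∧
      ∫ s in Ioi δ, ((s + t) ^ 2)⁻¹ = (δ + t)⁻¹ := by
  have hderiv : ∀ x ∈ Ici δ, HasDerivAt (fun s : ℝ => -(s + t)⁻¹) (((x + t) ^ 2)⁻¹) x := by
    intro x hx
    have hx0 : (0:ℝ) < x + t := by have := hx.out; linarith
    have h1 : HasDerivAt (fun s : ℝ => s + t) 1 x := (hasDerivAt_id x).add_const t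
    have h2 := (hasDerivAt_inv hx0.ne').comp x h1
    have h3 := h2.neg
    simpa [Pi.neg_def, Function.comp_def] using h3
  have hpos : ∀ x ∈ Ioi δ, 0 ≤ ((x + t) ^ 2)⁻¹ := fun x _ => by positivity
  have htend : Tendsto (fun s : ℝ => -(s + t)⁻¹) atTop (𝓝 0) := by
    have : Tendsto (fun s : ℝ => (s + t)⁻¹) atTop (𝓝 0) :=
      tendsto_inv_atTop_zero.comp (tendsto_atTop_add_const_right _ t tendsto_id)
    simpa using this.neg
  refine ⟨integrableOn_Ioi_deriv_of_nonneg' hderiv hpos htend, ?_⟩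
  rw [integral_Ioi_of_hasDerivAt_of_nonneg' hderiv hpos htend]
  simp

lemma helperB (θ δ : ℝ) (hθ : 0 < θ) (hδ : 0 < δ) :
    IntegrableOn (fun t : ℝ => (δ + t) ^ (-θ - 1)) (Ioi 0) ∧
      ∫ t in Ioi (0:ℝ), (δ + t) ^ (-θ - 1) = δ ^ (-θ) / θ := by
  have hderiv : ∀ x ∈ Ici (0:ℝ),
      HasDerivAt (fun t : ℝ => (δ + t) ^ (-θ) / (-θ)) ((δ + x) ^ (-θ - 1)) x := by
    intro x hx
    have hx0 : (0:ℝ) < δ + x := by have := hx.out; linarith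
    have h1 : HasDerivAt (fun t : ℝ => δ + t) 1 x := (hasDerivAt_id x).const_add δ
    have h2 := ((Real.hasDerivAt_rpow_const (p := -θ) (Or.inl hx0.ne')).comp x h1).div_const (-θ)
    have heq : -θ * (δ + x) ^ (-θ - 1) * 1 / (-θ) = (δ + x) ^ (-θ - 1) := by
      field_simp
    simpa only [Function.comp, heq] using h2
  have hpos : ∀ x ∈ Ioi (0:ℝ), 0 ≤ (δ + x) ^ (-θ - 1) := fun x hx =>
    Real.rpow_nonneg (by have := hx.out; linarith) _
  have htend : Tendsto (fun t : ℝ => (δ + t) ^ (-θ) / (-θ)) atTop (𝓝 0) := by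
    have h0 : Tendsto (fun t : ℝ => (δ + t)) atTop atTop :=
      tendsto_atTop_add_const_left _ δ tendsto_id
    have := (tendsto_rpow_neg_atTop hθ).comp h0
    simpa using this.div_const (-θ)
  refine ⟨integrableOn_Ioi_deriv_of_nonneg' hderiv hpos htend, ?_⟩
  rw [integral_Ioi_of_hasDerivAt_of_nonneg' hderiv hpos htend]
  rw [add_zero]
  field_simp
  ring

lemma algc (θ δ t : ℝ) (hθ : 0 < θ) (hδ : 0 < δ) (ht : 0 ≤ t) :
    θ * (1 + t / δ) ^ (-θ) * (δ + t)⁻¹ = θ * δ ^ θ * (δ + t) ^ (-θ - 1) := by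
  have hpos : (0:ℝ) < δ + t := by linarith
  have h1 : 1 + t / δ = (δ + t) / δ := by field_simp
  rw [h1, Real.div_rpow hpos.le hδ.le,
    show -θ - 1 = -θ + (-1) by ring, Real.rpow_add hpos, Real.rpow_neg_one,
    Real.rpow_neg hδ.le θ]
  have h2 : (0:ℝ) < δ ^ θ := Real.rpow_pos_of_pos hδ θ
  field_simp

theorem shortLived_density_integrates_to_one (θ δ : ℝ) (hθ : 0 < θ) (hδ : 0 < δ) :
    ∫ p in (Set.Ici δ ×ˢ Set.Ici (0 : ℝ)),
        θ / (p.1 + p.2) ^ 2 * (1 + p.2 / δ) ^ (-θ) ∂(volume : Measure (ℝ × ℝ)) = 1 := by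
  set μ : Measure ℝ := volume.restrict (Ici (0:ℝ)) with hμ
  set ν : Measure ℝ := volume.restrict (Ici δ) with hν
  set g : ℝ × ℝ → ℝ := fun q => θ / (q.2 + q.1) ^ 2 * (1 + q.1 / δ) ^ (-θ) with hg
  have hg_meas : AEStronglyMeasurable g (μ.prod ν) := by
    have : Measurable g := by fun_prop
    exact this.aestronglyMeasurable
  have key : ∀ t : ℝ, (fun s => g (t, s)) =
      fun s => (θ * (1 + t / δ) ^ (-θ)) * ((s + t) ^ 2)⁻¹ := by
    intro t; funext s; simp only [hg]; ring
  have hint1 : ∀ t : ℝ, 0 ≤ t → Integrable (fun s => g (t, s)) ν := by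
    intro t ht
    rw [hν, key t]
    exact (((integrableOn_Ici_iff_integrableOn_Ioi enorm_ne_top).2 (helperA δ hδ t ht).1).const_mul _)
  have hval : ∀ t : ℝ, 0 ≤ t → ∫ s, g (t, s) ∂ν = θ * δ ^ θ * (δ + t) ^ (-θ - 1) := by
    intro t ht
    rw [hν, key t]
    rw [integral_const_mul, integral_Ici_eq_integral_Ioi, (helperA δ hδ t ht).2]
    exact algc θ δ t hθ hδ ht
  have hnonneg : ∀ t : ℝ, 0 ≤ t → ∀ s ∈ Ici δ, 0 ≤ g (t, s) := by
    intro t ht s hs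
    have h1 : (0:ℝ) ≤ θ / (s + t) ^ 2 := by positivity
    have h2 : (0:ℝ) ≤ (1 + t / δ) ^ (-θ) :=
      Real.rpow_nonneg (by have : 0 ≤ t / δ := div_nonneg ht hδ.le; linarith) _
    exact mul_nonneg h1 h2
  have hOuter : Integrable (fun t => θ * δ ^ θ * (δ + t) ^ (-θ - 1)) μ := by
    rw [hμ]
    exact (((integrableOn_Ici_iff_integrableOn_Ioi enorm_ne_top).2 (helperB θ δ hθ hδ).1).const_mul _)
  have hg_int : Integrable g (μ.prod ν) := by
    rw [integrable_prod_iff hg_meas]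
    constructor
    · filter_upwards [ae_restrict_mem measurableSet_Ici] with t ht
      exact hint1 t ht
    · refine hOuter.congr ?_
      rw [hμ]
      filter_upwards [ae_restrict_mem measurableSet_Ici] with t ht
      have : ∫ s, ‖g (t, s)‖ ∂ν = ∫ s, g (t, s) ∂ν := by
        rw [hν]
        refine setIntegral_congr_fun measurableSet_Ici fun s hs => ?_
        exact Real.norm_of_nonneg (hnonneg t ht s hs)
      rw [this, hval t ht]
  have swap_eq : (fun p : ℝ × ℝ => θ / (p.1 + p.2) ^ 2 * (1 + p.2 / δ) ^ (-θ)) =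
      fun p : ℝ × ℝ => g p.swap := rfl
  calc ∫ p in (Set.Ici δ ×ˢ Set.Ici (0 : ℝ)),
        θ / (p.1 + p.2) ^ 2 * (1 + p.2 / δ) ^ (-θ) ∂(volume : Measure (ℝ × ℝ))
      = ∫ p, g p.swap ∂(ν.prod μ) := by
        rw [swap_eq, Measure.volume_eq_prod, ← Measure.prod_restrict]
    _ = ∫ q, g q ∂(μ.prod ν) := integral_prod_swap g
    _ = ∫ t, (∫ s, g (t, s) ∂ν) ∂μ := integral_prod g hg_int
    _ = ∫ t, θ * δ ^ θ * (δ + t) ^ (-θ - 1) ∂μ := by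
        rw [hμ]
        exact setIntegral_congr_fun measurableSet_Ici fun t ht => hval t ht
    _ = θ * δ ^ θ * (δ ^ (-θ) / θ) := by
        rw [hμ, integral_const_mul, integral_Ici_eq_integral_Ioi, (helperB θ δ hθ hδ).2]
    _ = 1 := by
        rw [Real.rpow_neg hδ.le]
        have h2 : (0:ℝ) < δ ^ θ := Real.rpow_pos_of_pos hδ θ
        field_simp
end

section
/- For 0 ≤ t₁ ≤ t₂ and δ > 0, the μ^(1)-measure of the strip {(x,y) : x ≥ δ, x + t₁ < y ≤ x + t₂} equals θ·log(1 + t₂/δ) − θ·log(1 + t₁/δ). -/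
open MeasureTheory Finset

open Set Filter in

lemma inner_int (θ a b : ℝ) (hθ : 0 < θ) (ha : 0 < a) (hab : a ≤ b) :
    ∫⁻ y in Set.Ioc a b, ENNReal.ofReal (θ * 1 / y ^ 2) =
      ENNReal.ofReal (θ * (a⁻¹ - b⁻¹)) := by
  have hb : 0 < b := lt_of_lt_of_le ha hab
  have hcont : ContinuousOn (fun y : ℝ => θ * 1 / y ^ 2) (Set.Icc a b) := by
    apply ContinuousOn.div continuousOn_const (by fun_prop)
    intro y hy
    have := lt_of_lt_of_le ha hy.1
    positivity
  have hint : IntegrableOn (fun y : ℝ => θ * 1 / y ^ 2) (Set.Ioc a b) :=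
    (hcont.integrableOn_Icc).mono_set Set.Ioc_subset_Icc_self
  rw [← ofReal_integral_eq_lintegral_ofReal hint]
  · congr 1
    rw [← intervalIntegral.integral_of_le hab]
    have : ∀ y ∈ Set.uIcc a b, θ * 1 / y ^ 2 = θ * y ^ (-2 : ℤ) := by
      intro y hy
      have hy0 : 0 < y := by
        rcases Set.mem_uIcc.1 hy with h | h
        · exact lt_of_lt_of_le ha h.1
        · exact lt_of_lt_of_le hb h.1
      rw [mul_one, div_eq_mul_inv, zpow_neg]
      norm_num
    rw [intervalIntegral.integral_congr this, intervalIntegral.integral_const_mul,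
      integral_zpow]
    · norm_num [zpow_neg]
      left
      ring
    · right
      constructor
      · norm_num
      · rw [Set.uIcc_of_le hab]
        rintro ⟨h0, -⟩
        exact absurd h0 (not_le.2 ha)
  · filter_upwards [ae_restrict_mem measurableSet_Ioc] with y hy
    have : 0 < y := lt_of_lt_of_le ha hy.1.le
    positivity

open Set Filter in

lemma outer_int (θ δ t1 t2 : ℝ) (hθ : 0 < θ) (hδ : 0 < δ)
    (ht1 : 0 ≤ t1) (ht12 : t1 ≤ t2) :
    ∫⁻ x in Set.Ici δ, ENNReal.ofReal (θ * ((x + t1)⁻¹ - (x + t2)⁻¹)) =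
      ENNReal.ofReal (θ * Real.log (1 + t2 / δ) - θ * Real.log (1 + t1 / δ)) := by
  have ht2 : 0 ≤ t2 := le_trans ht1 ht12
  set F : ℝ → ℝ := fun x => θ * (Real.log (x + t1) - Real.log (x + t2)) with hF
  set f : ℝ → ℝ := fun x => θ * ((x + t1)⁻¹ - (x + t2)⁻¹) with hf
  have hderiv : ∀ x ∈ Set.Ici δ, HasDerivAt F (f x) x := by
    intro x hx
    have hx1 : 0 < x + t1 := by have := hx.out; linarith
    have hx2 : 0 < x + t2 := by have := hx.out; linarith
    have h1 : HasDerivAt (fun x : ℝ => Real.log (x + t1)) ((x + t1)⁻¹) x := by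
      simpa [Function.comp_def] using (Real.hasDerivAt_log hx1.ne').comp x ((hasDerivAt_id x).add_const t1)
    have h2 : HasDerivAt (fun x : ℝ => Real.log (x + t2)) ((x + t2)⁻¹) x := by
      simpa [Function.comp_def] using (Real.hasDerivAt_log hx2.ne').comp x ((hasDerivAt_id x).add_const t2)
    exact ((h1.sub h2).const_mul θ)
  have hnonneg : ∀ x ∈ Set.Ioi δ, 0 ≤ f x := by
    intro x hx
    have hx1 : 0 < x + t1 := by have := hx.out; linarith
    have hx2 : 0 < x + t2 := by have := hx.out; linarith
    have : (x + t2)⁻¹ ≤ (x + t1)⁻¹ := by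
      apply inv_anti₀ hx1; linarith
    have : 0 ≤ (x + t1)⁻¹ - (x + t2)⁻¹ := by linarith
    positivity
  have hcont : ContinuousWithinAt F (Set.Ici δ) δ :=
    ((hderiv δ Set.self_mem_Ici).continuousAt).continuousWithinAt
  have htend : Tendsto F atTop (nhds 0) := by
    have hratio : Tendsto (fun x : ℝ => (x + t1) / (x + t2)) atTop (nhds 1) := by
      have h0 : Tendsto (fun x : ℝ => (t2 - t1) / (x + t2)) atTop (nhds 0) :=
        tendsto_const_nhds.div_atTop (tendsto_atTop_add_const_right _ t2 tendsto_id)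
      have heq : ∀ᶠ x : ℝ in atTop, 1 - (t2 - t1) / (x + t2) = (x + t1) / (x + t2) := by
        filter_upwards [eventually_gt_atTop 0] with x hx
        have hx2 : 0 < x + t2 := by linarith
        field_simp
        ring
      have h1 : Tendsto (fun x : ℝ => 1 - (t2 - t1) / (x + t2)) atTop (nhds (1 - 0)) :=
        (tendsto_const_nhds (x := (1:ℝ))).sub h0
      simp only [sub_zero] at h1
      exact Tendsto.congr' heq h1
    have hlog : Tendsto (fun x : ℝ => Real.log ((x + t1) / (x + t2))) atTop (nhds 0) := by
      have := (Real.continuousAt_log one_ne_zero).tendsto.comp hratio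
      simpa [Real.log_one, Function.comp_def] using this
    have heq : ∀ᶠ x : ℝ in atTop, θ * Real.log ((x + t1) / (x + t2)) = F x := by
      filter_upwards [eventually_gt_atTop 0] with x hx
      have hx1 : 0 < x + t1 := by linarith
      have hx2 : 0 < x + t2 := by linarith
      rw [hF]
      rw [Real.log_div hx1.ne' hx2.ne']
    have := hlog.const_mul θ
    simp only [mul_zero] at this
    exact Tendsto.congr' heq this
  have hint : IntegrableOn f (Set.Ioi δ) :=
    integrableOn_Ioi_deriv_of_nonneg hcont (fun x hx => hderiv x hx.out.le) hnonneg htend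
  have hval : ∫ x in Set.Ioi δ, f x = 0 - F δ :=
    integral_Ioi_of_hasDerivAt_of_nonneg hcont (fun x hx => hderiv x hx.out.le) hnonneg htend
  rw [← MeasureTheory.restrict_Ioi_eq_restrict_Ici]
  rw [← ofReal_integral_eq_lintegral_ofReal hint]
  · rw [hval]
    congr 1
    have e1 : 1 + t2 / δ = (δ + t2) / δ := by field_simp
    have e2 : 1 + t1 / δ = (δ + t1) / δ := by field_simp
    rw [e1, e2, Real.log_div (by positivity) hδ.ne', Real.log_div (by positivity) hδ.ne', hF]
    ring
  · filter_upwards [ae_restrict_mem measurableSet_Ioi] with x hx using hnonneg x hx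

theorem mu1_strip (θ : ℝ) (hθ : 0 < θ) (δ t1 t2 : ℝ) (hδ : 0 < δ)
    (ht1 : 0 ≤ t1) (ht12 : t1 ≤ t2) :
    muN θ 1 {p : Fin 2 → ℝ | δ ≤ p 0 ∧ p 0 + t1 < p 1 ∧ p 1 ≤ p 0 + t2} =
      ENNReal.ofReal (θ * Real.log (1 + t2 / δ) - θ * Real.log (1 + t1 / δ)) := by
  set S : Set (Fin 2 → ℝ) := {p | δ ≤ p 0 ∧ p 0 + t1 < p 1 ∧ p 1 ≤ p 0 + t2} with hS
  have hSm : MeasurableSet S := by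
    apply MeasurableSet.inter
    · exact measurableSet_le measurable_const
        (measurable_pi_apply (0 : Fin 2) : Measurable fun p : Fin 2 → ℝ => p 0)
    apply MeasurableSet.inter
    · exact measurableSet_lt
        ((measurable_pi_apply (0 : Fin 2) : Measurable fun p : Fin 2 → ℝ => p 0).add_const t1)
        (measurable_pi_apply (1 : Fin 2) : Measurable fun p : Fin 2 → ℝ => p 1)
    · exact measurableSet_le
        (measurable_pi_apply (1 : Fin 2) : Measurable fun p : Fin 2 → ℝ => p 1)
        ((measurable_pi_apply (0 : Fin 2) : Measurable fun p : Fin 2 → ℝ => p 0).add_const t2)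
  have hScone : S ⊆ coneX 1 := by
    rintro p ⟨h0, h1, h2⟩
    have hp0 : 0 < p 0 := lt_of_lt_of_le hδ h0
    have hp1 : p 0 ≤ p 1 := by linarith
    refine ⟨fun i => ?_, ?_⟩
    · fin_cases i
      · exact hp0
      · exact lt_of_lt_of_le hp0 hp1
    · intro i j hij
      fin_cases i <;> fin_cases j <;> simp_all
  have hmu : muN θ 1 S =
      ∫⁻ p in S, ENNReal.ofReal (θ * 1 / (p 1) ^ 2) ∂(volume : Measure (Fin 2 → ℝ)) := by
    rw [muN, withDensity_apply _ hSm, Measure.restrict_restrict hSm,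
      Set.inter_eq_left.2 hScone]
    norm_num [Nat.factorial]
    rfl
  rw [hmu]
  -- transfer to ℝ × ℝ
  set e := (MeasurableEquiv.finTwoArrow : (Fin 2 → ℝ) ≃ᵐ (ℝ × ℝ)) with he
  have hmp : MeasurePreserving e.symm (volume : Measure (ℝ × ℝ)) volume :=
    (volume_preserving_finTwoArrow ℝ).symm e
  set T : Set (ℝ × ℝ) := {q | δ ≤ q.1 ∧ q.1 + t1 < q.2 ∧ q.2 ≤ q.1 + t2} with hT
  have hpre : e.symm ⁻¹' S = T := by
    ext q
    simp [hS, hT, MeasurableEquiv.finTwoArrow, e]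
  have htrans : ∫⁻ p in S, ENNReal.ofReal (θ * 1 / (p 1) ^ 2)
        ∂(volume : Measure (Fin 2 → ℝ)) =
      ∫⁻ q in T, ENNReal.ofReal (θ * 1 / (q.2) ^ 2) ∂(volume : Measure (ℝ × ℝ)) := by
    rw [← hmp.setLIntegral_comp_preimage_emb e.symm.measurableEmbedding, hpre]
    apply lintegral_congr
    intro q
    congr 2
  rw [htrans]
  -- compute on ℝ × ℝ
  have hTm : MeasurableSet T := by
    apply MeasurableSet.inter
    · exact measurableSet_le measurable_const measurable_fst
    apply MeasurableSet.inter
    · exact measurableSet_lt (measurable_fst.add_const t1) measurable_snd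
    · exact measurableSet_le measurable_snd (measurable_fst.add_const t2)
  set g : ℝ × ℝ → ENNReal := fun q => ENNReal.ofReal (θ * 1 / (q.2) ^ 2) with hg
  have hgm : Measurable g := by
    apply ENNReal.measurable_ofReal.comp
    fun_prop
  rw [← lintegral_indicator hTm, Measure.volume_eq_prod,
    lintegral_prod _ ((hgm.indicator hTm).aemeasurable)]
  have hinner : ∀ x : ℝ, ∫⁻ y, T.indicator g (x, y) =
      (Set.Ici δ).indicator (fun x => ENNReal.ofReal (θ * ((x + t1)⁻¹ - (x + t2)⁻¹))) x := by
    intro x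
    by_cases hx : δ ≤ x
    · have hxy : ∀ y : ℝ, T.indicator g (x, y) =
          (Set.Ioc (x + t1) (x + t2)).indicator (fun y => ENNReal.ofReal (θ * 1 / y ^ 2)) y := by
        intro y
        by_cases hy : y ∈ Set.Ioc (x + t1) (x + t2)
        · rw [Set.indicator_of_mem hy, Set.indicator_of_mem (by exact ⟨hx, hy.1, hy.2⟩)]
        · rw [Set.indicator_of_notMem hy, Set.indicator_of_notMem
            (fun h => hy ⟨h.2.1, h.2.2⟩)]
      simp_rw [hxy]
      rw [lintegral_indicator measurableSet_Ioc,
        inner_int θ (x + t1) (x + t2) hθ (by linarith) (by linarith),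
        Set.indicator_of_mem (show x ∈ Set.Ici δ from hx)]
    · have hxy : ∀ y : ℝ, T.indicator g (x, y) = 0 := by
        intro y
        apply Set.indicator_of_notMem
        exact fun h => hx h.1
      simp_rw [hxy]
      rw [lintegral_zero, Set.indicator_of_notMem (show x ∉ Set.Ici δ from hx)]
  simp_rw [hinner]
  rw [lintegral_indicator measurableSet_Ici]
  exact outer_int θ δ t1 t2 hθ hδ ht1 ht12
end
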